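/- arXiv:2309.03375 — 12 statements merged into one kernel-verified Lean document; each statement's English description precedes it below -/
import Mathlib

section
/- Under the POD decomposition hypothesis, for every 1 ≤ r ≤ s the weighted data approximation error of the orthogonal POD projection satisfies the exact formula Σ_{j=1}^N γ_j ‖w^j − Π_r^X w^j‖_X² = Σ_{k=r+1}^s λ_k. -/
open Finset RealInnerProductSpace

/-- forward difference quotient -/
noncomputable def fdiff {Z : Type*} [AddCommGroup Z] [Module ℝ Z]
    (dt : ℝ) (z : ℕ → Z) (j : ℕ) : Z := dt⁻¹ • (z (j + 1) - z j)

/-- backward difference quotient -/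
noncomputable def bdiff {Z : Type*} [AddCommGroup Z] [Module ℝ Z]
    (dt : ℝ) (z : ℕ → Z) (j : ℕ) : Z := dt⁻¹ • (z j - z (j - 1))

/-- second difference quotient -/
noncomputable def ddq {Z : Type*} [AddCommGroup Z] [Module ℝ Z]
    (dt : ℝ) (z : ℕ → Z) (j : ℕ) : Z :=
  (dt ^ 2)⁻¹ • (z (j + 1) - (2 : ℝ) • z j + z (j - 1))

/-- backward average -/
noncomputable def bavg {Z : Type*} [AddCommGroup Z] [Module ℝ Z]
    (z : ℕ → Z) (j : ℕ) : Z := (2 : ℝ)⁻¹ • (z j + z (j - 1))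

/-- centered average -/
noncomputable def cavg {Z : Type*} [AddCommGroup Z] [Module ℝ Z]
    (z : ℕ → Z) (j : ℕ) : Z := (4 : ℝ)⁻¹ • (z (j + 1) + (2 : ℝ) • z j + z (j - 1))

/-- centered difference -/
noncomputable def cdiff {Z : Type*} [AddCommGroup Z] [Module ℝ Z]
    (dt : ℝ) (z : ℕ → Z) (j : ℕ) : Z := (2 * dt)⁻¹ • (z (j + 1) - z (j - 1))

theorem stmt_0
    {X : Type*} [NormedAddCommGroup X] [InnerProductSpace ℝ X] [CompleteSpace X]
    (N s : ℕ) (hN : 1 ≤ N)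
    (γ : ℕ → ℝ) (hγ : ∀ j ∈ Finset.Icc 1 N, 0 < γ j)
    (w : ℕ → X) (lam : ℕ → ℝ) (φ : ℕ → X) (f : ℕ → ℕ → ℝ)
    (hlam : ∀ k ∈ Finset.Icc 1 s, 0 < lam k)
    (hφ : ∀ k ∈ Finset.Icc 1 s, ∀ l ∈ Finset.Icc 1 s,
      ⟪φ k, φ l⟫ = if k = l then 1 else 0)
    (hf : ∀ k ∈ Finset.Icc 1 s, ∀ l ∈ Finset.Icc 1 s,
      (∑ j ∈ Finset.Icc 1 N, γ j * f k j * f l j) = if k = l then 1 else 0)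
    (hsvd : ∀ j ∈ Finset.Icc 1 N,
      w j = ∑ k ∈ Finset.Icc 1 s, (Real.sqrt (lam k) * f k j) • φ k)
    (r : ℕ) (hr1 : 1 ≤ r) (hrs : r ≤ s)
    (Pr : X → X)
    (hPrmem : ∀ x, Pr x ∈ Submodule.span ℝ (φ '' Set.Icc 1 r))
    (hProrth : ∀ x, ∀ v ∈ Submodule.span ℝ (φ '' Set.Icc 1 r),
      ⟪x - Pr x, v⟫ = 0) :
    ∑ j ∈ Finset.Icc 1 N, γ j * ‖w j - Pr (w j)‖ ^ 2
      = ∑ k ∈ Finset.Icc (r + 1) s, lam k := by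
  -- abbreviations
  set S := Submodule.span ℝ (φ '' Set.Icc 1 r) with hS
  have key : ∀ j ∈ Finset.Icc 1 N,
      w j - Pr (w j) = ∑ k ∈ Finset.Icc (r + 1) s, (Real.sqrt (lam k) * f k j) • φ k := by
    intro j hj
    set c : ℕ → ℝ := fun k => Real.sqrt (lam k) * f k j with hc
    set p : X := ∑ k ∈ Finset.Icc 1 r, c k • φ k with hp
    set q : X := ∑ k ∈ Finset.Icc (r + 1) s, c k • φ k with hq
    have hw : w j = p + q := by
      rw [hsvd j hj, hp, hq]
      have : Finset.Icc 1 s = Finset.Icc 1 r ∪ Finset.Icc (r + 1) s := by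
        ext x
        simp only [Finset.mem_Icc, Finset.mem_union]
        omega
      have hdisj : Disjoint (Finset.Icc 1 r) (Finset.Icc (r + 1) s) := by
        rw [Finset.disjoint_left]
        intro a ha hb
        simp only [Finset.mem_Icc] at ha hb
        omega
      rw [this, Finset.sum_union hdisj]
    -- q is orthogonal to every element of S
    have hqorth : ∀ v ∈ S, ⟪q, v⟫ = 0 := by
      intro v hv
      induction hv using Submodule.span_induction with
      | mem x hx =>
        obtain ⟨l, hl, rfl⟩ := hx
        rw [Set.mem_Icc] at hl
        rw [hq, sum_inner]
        apply Finset.sum_eq_zero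
        intro k hk
        simp only [Finset.mem_Icc] at hk
        rw [real_inner_smul_left, hφ k (by simp only [Finset.mem_Icc]; omega)
          l (by simp only [Finset.mem_Icc]; exact ⟨hl.1, le_trans hl.2 hrs⟩)]
        have : k ≠ l := by omega
        simp [this]
      | zero => simp
      | add x y hx hy ihx ihy => rw [inner_add_right, ihx, ihy]; ring
      | smul a x hx ihx => rw [real_inner_smul_right, ihx]; ring
    have hpmem : p ∈ S := by
      apply Submodule.sum_mem
      intro k hk
      apply Submodule.smul_mem
      apply Submodule.subset_span
      simp only [Finset.mem_Icc] at hk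
      exact ⟨k, ⟨hk.1, hk.2⟩, rfl⟩
    have hdmem : Pr (w j) - p ∈ S := Submodule.sub_mem _ (hPrmem _) hpmem
    have hd0 : Pr (w j) - p = 0 := by
      have h1 : ⟪Pr (w j) - p, Pr (w j) - p⟫ = 0 := by
        have heq : Pr (w j) - p = q - (w j - Pr (w j)) := by
          rw [hw]; abel
        rw [heq, inner_sub_left, ← heq, hqorth _ hdmem, hProrth (w j) _ hdmem, sub_zero]
      exact inner_self_eq_zero.mp h1
    have hPr : Pr (w j) = p := by
      have := sub_eq_zero.mp hd0; exact this
    rw [hPr, hw]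
    abel
  -- norm computation
  have hnorm : ∀ j ∈ Finset.Icc 1 N,
      ‖w j - Pr (w j)‖ ^ 2 = ∑ k ∈ Finset.Icc (r + 1) s, lam k * (f k j * f k j) := by
    intro j hj
    rw [key j hj, ← real_inner_self_eq_norm_sq, sum_inner]
    apply Finset.sum_congr rfl
    intro k hk
    simp only [Finset.mem_Icc] at hk
    have hks : k ∈ Finset.Icc 1 s := by simp only [Finset.mem_Icc]; omega
    rw [inner_sum, Finset.sum_eq_single k]
    · rw [real_inner_smul_left, real_inner_smul_right, hφ k hks k hks]
      rw [if_pos rfl, mul_one]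
      have h2 : Real.sqrt (lam k) * Real.sqrt (lam k) = lam k :=
        Real.mul_self_sqrt (hlam k hks).le
      calc Real.sqrt (lam k) * f k j * (Real.sqrt (lam k) * f k j)
          = (Real.sqrt (lam k) * Real.sqrt (lam k)) * (f k j * f k j) := by ring
        _ = lam k * (f k j * f k j) := by rw [h2]
    · intro l hl hlk
      simp only [Finset.mem_Icc] at hl
      rw [real_inner_smul_left, real_inner_smul_right,
        hφ k hks l (by simp only [Finset.mem_Icc]; omega)]
      rw [if_neg (Ne.symm hlk)]
      ring
    · intro h; exact absurd (Finset.mem_Icc.mpr hk) h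
  calc ∑ j ∈ Finset.Icc 1 N, γ j * ‖w j - Pr (w j)‖ ^ 2
      = ∑ j ∈ Finset.Icc 1 N, ∑ k ∈ Finset.Icc (r + 1) s,
          lam k * (γ j * f k j * f k j) := by
        apply Finset.sum_congr rfl
        intro j hj
        rw [hnorm j hj, Finset.mul_sum]
        apply Finset.sum_congr rfl
        intro k _
        ring
    _ = ∑ k ∈ Finset.Icc (r + 1) s, lam k *
          ∑ j ∈ Finset.Icc 1 N, γ j * f k j * f k j := by
        rw [Finset.sum_comm]
        apply Finset.sum_congr rfl
        intro k _
        rw [Finset.mul_sum]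
    _ = ∑ k ∈ Finset.Icc (r + 1) s, lam k := by
        apply Finset.sum_congr rfl
        intro k hk
        simp only [Finset.mem_Icc] at hk
        have hks : k ∈ Finset.Icc 1 s := by simp only [Finset.mem_Icc]; omega
        rw [hf k hks k hks, if_pos rfl, mul_one]
end

section
/- (Standard POD extended data error formula, Y-norm version.) Under the POD decomposition hypothesis, if (·,·)_Y is a second inner product on X with norm ‖·‖_Y, then for every 1 ≤ r ≤ s one has Σ_{j=1}^N γ_j ‖w^j − Π_r^X w^j‖_Y² = Σ_{k=r+1}^s λ_k ‖φ_k‖_Y². -/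
open Finset RealInnerProductSpace

theorem stmt_1
    {X : Type*} [NormedAddCommGroup X] [InnerProductSpace ℝ X] [CompleteSpace X]
    (N s : ℕ) (hN : 1 ≤ N)
    (γ : ℕ → ℝ) (hγ : ∀ j ∈ Finset.Icc 1 N, 0 < γ j)
    (w : ℕ → X) (lam : ℕ → ℝ) (φ : ℕ → X) (f : ℕ → ℕ → ℝ)
    (hlam : ∀ k ∈ Finset.Icc 1 s, 0 < lam k)
    (hφ : ∀ k ∈ Finset.Icc 1 s, ∀ l ∈ Finset.Icc 1 s,
      ⟪φ k, φ l⟫ = if k = l then 1 else 0)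
    (hf : ∀ k ∈ Finset.Icc 1 s, ∀ l ∈ Finset.Icc 1 s,
      (∑ j ∈ Finset.Icc 1 N, γ j * f k j * f l j) = if k = l then 1 else 0)
    (hsvd : ∀ j ∈ Finset.Icc 1 N,
      w j = ∑ k ∈ Finset.Icc 1 s, (Real.sqrt (lam k) * f k j) • φ k)
    (r : ℕ) (hr1 : 1 ≤ r) (hrs : r ≤ s)
    (Pr : X → X)
    (hPrmem : ∀ x, Pr x ∈ Submodule.span ℝ (φ '' Set.Icc 1 r))
    (hProrth : ∀ x, ∀ v ∈ Submodule.span ℝ (φ '' Set.Icc 1 r),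
      ⟪x - Pr x, v⟫ = 0)
    (ipY : X →ₗ[ℝ] X →ₗ[ℝ] ℝ)
    (hYsymm : ∀ x y, ipY x y = ipY y x)
    (hYpos : ∀ x : X, x ≠ 0 → 0 < ipY x x) :
    ∑ j ∈ Finset.Icc 1 N, γ j * ipY (w j - Pr (w j)) (w j - Pr (w j))
      = ∑ k ∈ Finset.Icc (r + 1) s, lam k * ipY (φ k) (φ k) := by
  have hIcc : ∀ k ∈ Finset.Icc (r+1) s, k ∈ Finset.Icc 1 s := by
    intro k hk; simp only [Finset.mem_Icc] at hk ⊢; omega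
  have hproj : ∀ j ∈ Finset.Icc 1 N,
      w j - Pr (w j) = ∑ k ∈ Finset.Icc (r+1) s, (Real.sqrt (lam k) * f k j) • φ k := by
    intro j hj
    set c : ℕ → ℝ := fun k => Real.sqrt (lam k) * f k j with hc
    set p := ∑ k ∈ Finset.Icc 1 r, c k • φ k with hp
    set q := ∑ k ∈ Finset.Icc (r+1) s, c k • φ k with hq
    have hsplit : w j = p + q := by
      rw [hsvd j hj, hp, hq]
      have h1 : Finset.Icc 1 s = Finset.Ioc 0 s := by rw [← Finset.Icc_add_one_left_eq_Ioc]; rfl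
      have h2 : Finset.Icc 1 r = Finset.Ioc 0 r := by rw [← Finset.Icc_add_one_left_eq_Ioc]; rfl
      have h3 : Finset.Icc (r+1) s = Finset.Ioc r s := by rw [← Finset.Icc_add_one_left_eq_Ioc]
      rw [h1, h2, h3, Finset.sum_Ioc_consecutive _ (Nat.zero_le r) hrs]
    have hqorth : ∀ v ∈ Submodule.span ℝ (φ '' Set.Icc 1 r), ⟪q, v⟫ = 0 := by
      intro v hv
      induction hv using Submodule.span_induction with
      | mem x hx =>
        obtain ⟨l, hl, rfl⟩ := hx
        rw [hq, sum_inner]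
        apply Finset.sum_eq_zero
        intro k hk
        have hls : l ∈ Finset.Icc 1 s := by
          simp only [Set.mem_Icc] at hl; simp only [Finset.mem_Icc]; omega
        have hne : k ≠ l := by
          simp only [Finset.mem_Icc] at hk; simp only [Set.mem_Icc] at hl; omega
        rw [real_inner_smul_left, hφ k (hIcc k hk) l hls]
        simp [hne]
      | zero => simp
      | add x y _ _ hx hy => rw [inner_add_right, hx, hy]; ring
      | smul a x _ hx => rw [real_inner_smul_right, hx]; ring
    have hpmem : p ∈ Submodule.span ℝ (φ '' Set.Icc 1 r) := by
      apply Submodule.sum_mem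
      intro k hk
      refine Submodule.smul_mem _ _ (Submodule.subset_span ⟨k, ?_, rfl⟩)
      simp only [Finset.mem_Icc] at hk; simp only [Set.mem_Icc]; omega
    have hvmem : Pr (w j) - p ∈ Submodule.span ℝ (φ '' Set.Icc 1 r) :=
      Submodule.sub_mem _ (hPrmem _) hpmem
    have hzero : ⟪Pr (w j) - p, Pr (w j) - p⟫ = (0:ℝ) := by
      have h1 : ⟪w j - p, Pr (w j) - p⟫ = (0:ℝ) := by
        have hq' : w j - p = q := by rw [hsplit]; abel
        rw [hq']; exact hqorth _ hvmem
      have h2 : ⟪w j - Pr (w j), Pr (w j) - p⟫ = (0:ℝ) := hProrth _ _ hvmem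
      have he : Pr (w j) - p = (w j - p) - (w j - Pr (w j)) := by abel
      rw [he, inner_sub_left, ← he, h1, h2]; ring
    have hPe : Pr (w j) = p := sub_eq_zero.mp (inner_self_eq_zero.mp hzero)
    rw [hPe, hsplit]; abel
  have step1 : ∑ j ∈ Finset.Icc 1 N, γ j * ipY (w j - Pr (w j)) (w j - Pr (w j))
      = ∑ j ∈ Finset.Icc 1 N, ∑ k ∈ Finset.Icc (r+1) s, ∑ l ∈ Finset.Icc (r+1) s,
        (Real.sqrt (lam k) * Real.sqrt (lam l) * ipY (φ k) (φ l)) * (γ j * f k j * f l j) := by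
    refine Finset.sum_congr rfl fun j hj => ?_
    rw [hproj j hj]
    simp only [map_sum, LinearMap.sum_apply, map_smul, LinearMap.smul_apply, smul_eq_mul,
      Finset.mul_sum]
    rw [Finset.sum_comm]
    exact Finset.sum_congr rfl fun k _ => Finset.sum_congr rfl fun l _ => by ring
  rw [step1, Finset.sum_comm]
  refine Finset.sum_congr rfl fun k hk => ?_
  rw [Finset.sum_comm]
  have hkey : ∀ l ∈ Finset.Icc (r+1) s,
      (∑ j ∈ Finset.Icc 1 N,
        (Real.sqrt (lam k) * Real.sqrt (lam l) * ipY (φ k) (φ l)) * (γ j * f k j * f l j))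
      = if k = l then lam k * ipY (φ k) (φ k) else 0 := by
    intro l hl
    rw [← Finset.mul_sum, hf k (hIcc k hk) l (hIcc l hl)]
    by_cases h : k = l
    · subst h
      simp [Real.mul_self_sqrt (hlam k (hIcc k hk)).le]
    · simp [h]
  rw [Finset.sum_congr rfl hkey, Finset.sum_ite_eq (Finset.Icc (r+1) s) k
    (fun l => lam k * ipY (φ k) (φ k))]
  simp [hk]
end

section
/- (Standard POD extended data error formula, general projection version.) Under the POD decomposition hypothesis, if (·,·)_Y is a second inner product on X with norm ‖·‖_Y and π_r : X → X is a linear map satisfying π_r ∘ π_r = π_r and range(π_r) = X_r (a projection onto X_r), then for every 1 ≤ r ≤ s one has Σ_{j=1}^N γ_j ‖w^j − π_r w^j‖_Y² = Σ_{k=r+1}^s λ_k ‖φ_k − π_r φ_k‖_Y². -/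
open Finset RealInnerProductSpace

theorem stmt_2
    {X : Type*} [NormedAddCommGroup X] [InnerProductSpace ℝ X] [CompleteSpace X]
    (N s : ℕ) (hN : 1 ≤ N)
    (γ : ℕ → ℝ) (hγ : ∀ j ∈ Finset.Icc 1 N, 0 < γ j)
    (w : ℕ → X) (lam : ℕ → ℝ) (φ : ℕ → X) (f : ℕ → ℕ → ℝ)
    (hlam : ∀ k ∈ Finset.Icc 1 s, 0 < lam k)
    (hφ : ∀ k ∈ Finset.Icc 1 s, ∀ l ∈ Finset.Icc 1 s,
      ⟪φ k, φ l⟫ = if k = l then 1 else 0)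
    (hf : ∀ k ∈ Finset.Icc 1 s, ∀ l ∈ Finset.Icc 1 s,
      (∑ j ∈ Finset.Icc 1 N, γ j * f k j * f l j) = if k = l then 1 else 0)
    (hsvd : ∀ j ∈ Finset.Icc 1 N,
      w j = ∑ k ∈ Finset.Icc 1 s, (Real.sqrt (lam k) * f k j) • φ k)
    (r : ℕ) (hr1 : 1 ≤ r) (hrs : r ≤ s)
    (ipY : X →ₗ[ℝ] X →ₗ[ℝ] ℝ)
    (hYsymm : ∀ x y, ipY x y = ipY y x)
    (hYpos : ∀ x : X, x ≠ 0 → 0 < ipY x x)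
    (π : X →ₗ[ℝ] X)
    (hππ : ∀ x, π (π x) = π x)
    (hπrange : LinearMap.range π = Submodule.span ℝ (φ '' Set.Icc 1 r)) :
    ∑ j ∈ Finset.Icc 1 N, γ j * ipY (w j - π (w j)) (w j - π (w j))
      = ∑ k ∈ Finset.Icc (r + 1) s, lam k * ipY (φ k - π (φ k)) (φ k - π (φ k)) := by

  have hfix : ∀ x ∈ LinearMap.range π, π x = x := by
    rintro x ⟨y, rfl⟩; exact hππ y
  have hφfix : ∀ k ∈ Finset.Icc 1 r, π (φ k) = φ k := by
    intro k hk
    apply hfix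
    rw [hπrange]
    exact Submodule.subset_span ⟨k, by simpa using hk, rfl⟩
  set e : ℕ → X := fun k => φ k - π (φ k) with he
  have hsub : ∀ k ∈ Finset.Icc (r+1) s, k ∈ Finset.Icc 1 s := by
    intro k hk; simp only [Finset.mem_Icc] at *; omega
  have hw : ∀ j ∈ Finset.Icc 1 N,
      w j - π (w j) = ∑ k ∈ Finset.Icc (r+1) s, (Real.sqrt (lam k) * f k j) • e k := by
    intro j hj
    have h1 : w j - π (w j) = ∑ k ∈ Finset.Icc 1 s, (Real.sqrt (lam k) * f k j) • e k := by
      rw [hsvd j hj, map_sum, ← Finset.sum_sub_distrib]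
      exact Finset.sum_congr rfl fun k _ => by rw [map_smul, ← smul_sub]
    rw [h1]
    have hIcc : Finset.Icc 1 s = Finset.Ioc 0 s := by rw [← Finset.Icc_add_one_left_eq_Ioc, zero_add]
    have hIcc2 : Finset.Icc (r+1) s = Finset.Ioc r s := by rw [← Finset.Icc_add_one_left_eq_Ioc]
    have hIcc3 : Finset.Icc 1 r = Finset.Ioc 0 r := by rw [← Finset.Icc_add_one_left_eq_Ioc, zero_add]
    rw [hIcc, hIcc2, ← Finset.sum_Ioc_consecutive _ (Nat.zero_le r) hrs]
    have hz : ∑ k ∈ Finset.Ioc 0 r, (Real.sqrt (lam k) * f k j) • e k = 0 := by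
      apply Finset.sum_eq_zero
      intro k hk
      have : e k = 0 := by
        simp only [he, sub_eq_zero]
        exact (hφfix k (by rwa [hIcc3])).symm
      rw [this, smul_zero]
    rw [hz, zero_add]
  have key : ∀ k ∈ Finset.Icc (r+1) s, ∀ l ∈ Finset.Icc (r+1) s,
      (∑ j ∈ Finset.Icc 1 N, γ j * ((Real.sqrt (lam k) * f k j) * (Real.sqrt (lam l) * f l j)))
        = if k = l then lam k else 0 := by
    intro k hk l hl
    have : ∀ j, γ j * ((Real.sqrt (lam k) * f k j) * (Real.sqrt (lam l) * f l j))
        = (Real.sqrt (lam k) * Real.sqrt (lam l)) * (γ j * f k j * f l j) := by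
      intro j; ring
    simp only [this, ← Finset.mul_sum, hf k (hsub k hk) l (hsub l hl)]
    by_cases h : k = l
    · subst h
      simp [Real.mul_self_sqrt (hlam k (hsub k hk)).le]
    · simp [h]
  calc ∑ j ∈ Finset.Icc 1 N, γ j * ipY (w j - π (w j)) (w j - π (w j))
      = ∑ j ∈ Finset.Icc 1 N, ∑ k ∈ Finset.Icc (r+1) s, ∑ l ∈ Finset.Icc (r+1) s,
          (γ j * ((Real.sqrt (lam k) * f k j) * (Real.sqrt (lam l) * f l j)))
            * ipY (e k) (e l) := by
        apply Finset.sum_congr rfl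
        intro j hj
        rw [hw j hj]
        simp only [map_sum, LinearMap.sum_apply, map_smul, LinearMap.smul_apply,
          smul_eq_mul, Finset.mul_sum]
        rw [Finset.sum_comm]
        apply Finset.sum_congr rfl
        intro k _
        apply Finset.sum_congr rfl
        intro l _
        ring
    _ = ∑ k ∈ Finset.Icc (r+1) s, ∑ l ∈ Finset.Icc (r+1) s,
          (∑ j ∈ Finset.Icc 1 N, γ j * ((Real.sqrt (lam k) * f k j) * (Real.sqrt (lam l) * f l j)))
            * ipY (e k) (e l) := by
        rw [Finset.sum_comm]
        apply Finset.sum_congr rfl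
        intro k _
        rw [Finset.sum_comm]
        apply Finset.sum_congr rfl
        intro l _
        rw [Finset.sum_mul]
    _ = ∑ k ∈ Finset.Icc (r+1) s, lam k * ipY (φ k - π (φ k)) (φ k - π (φ k)) := by
        apply Finset.sum_congr rfl
        intro k hk
        rw [Finset.sum_eq_single k]
        · rw [key k hk k hk]; simp [he]
        · intro l hl hne
          rw [key k hk l hl]
          simp [(Ne.symm hne)]
        · intro h; exact absurd hk h
end

section
/- (Pointwise data error bounds for the DQ POD operator K₁.) Let T > 0, N ≥ 2, Δt = T/(N−1), and u^1,…,u^N ∈ X. Suppose the POD decomposition hypothesis holds for the DQ data set w^1 = u^1 and w^{j+1} = ∂u^j (j = 1,…,N−1) with weights γ_1 = 1 and γ_j = Δt for j = 2,…,N, with POD eigenvalues λ_k^{DQ1}, modes φ_k, and rank s. Then with C = 2 max{T,1}: (i) max_{1≤j≤N} ‖u^j − Π_r^X u^j‖_X² ≤ C Σ_{k=r+1}^s λ_k^{DQ1}; (ii) if (·,·)_Y is a second inner product on X then max_{1≤j≤N} ‖u^j − Π_r^X u^j‖_Y² ≤ C Σ_{k=r+1}^s λ_k^{DQ1} ‖φ_k‖_Y²;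 (iii) if in addition π_r : X → X is a linear projection onto X_r (π_r∘π_r = π_r, range(π_r) = X_r), then max_{1≤j≤N} ‖u^j − π_r u^j‖_Y² ≤ C Σ_{k=r+1}^s λ_k^{DQ1} ‖φ_k − π_r φ_k‖_Y². -/
open Finset RealInnerProductSpace

set_option maxHeartbeats 1000000


section Aux
variable {X : Type*} [AddCommGroup X] [Module ℝ X]
variable (B : X →ₗ[ℝ] X →ₗ[ℝ] ℝ)

/-- Cauchy–Schwarz for a positive semidefinite symmetric bilinear form. -/
lemma bcs (hBsymm : ∀ x y, B x y = B y x) (hBpos : ∀ x, 0 ≤ B x x) (x y : X) :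
    B x y ≤ Real.sqrt (B x x) * Real.sqrt (B y y) := by
  have hquad : ∀ t : ℝ, 0 ≤ (B y y) * (t * t) + (2 * B x y) * t + B x x := by
    intro t
    have h := hBpos (t • y + x)
    simp only [map_add, map_smul, LinearMap.add_apply, LinearMap.smul_apply,
      smul_eq_mul] at h
    rw [hBsymm y x] at h
    nlinarith [h]
  have hd := discrim_le_zero hquad
  rw [discrim] at hd
  have hsq : (B x y) ^ 2 ≤ B x x * B y y := by nlinarith
  calc B x y ≤ |B x y| := le_abs_self _
    _ = Real.sqrt ((B x y) ^ 2) := (Real.sqrt_sq_eq_abs _).symm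
    _ ≤ Real.sqrt (B x x * B y y) := Real.sqrt_le_sqrt hsq
    _ = Real.sqrt (B x x) * Real.sqrt (B y y) := Real.sqrt_mul (hBpos x) _

lemma btriangle (hBsymm : ∀ x y, B x y = B y x) (hBpos : ∀ x, 0 ≤ B x x) (x y : X) :
    Real.sqrt (B (x + y) (x + y)) ≤ Real.sqrt (B x x) + Real.sqrt (B y y) := by
  have h1 : B (x + y) (x + y) = B x x + 2 * B x y + B y y := by
    simp only [map_add, LinearMap.add_apply]
    rw [hBsymm y x]; ring
  have h2 : B (x + y) (x + y) ≤ (Real.sqrt (B x x) + Real.sqrt (B y y)) ^ 2 := by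
    rw [h1]
    have := bcs B hBsymm hBpos x y
    have sx := Real.sq_sqrt (hBpos x)
    have sy := Real.sq_sqrt (hBpos y)
    nlinarith
  calc Real.sqrt (B (x + y) (x + y)) ≤ Real.sqrt ((Real.sqrt (B x x) + Real.sqrt (B y y)) ^ 2) :=
        Real.sqrt_le_sqrt h2
    _ = |Real.sqrt (B x x) + Real.sqrt (B y y)| := Real.sqrt_sq_eq_abs _
    _ = Real.sqrt (B x x) + Real.sqrt (B y y) := abs_of_nonneg (by positivity)

lemma bsum {ι : Type*} (hBsymm : ∀ x y, B x y = B y x) (hBpos : ∀ x, 0 ≤ B x x)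
    (S : Finset ι) (h : ι → X) :
    Real.sqrt (B (∑ i ∈ S, h i) (∑ i ∈ S, h i)) ≤ ∑ i ∈ S, Real.sqrt (B (h i) (h i)) := by
  classical
  induction S using Finset.cons_induction with
  | empty => simp
  | cons a S ha ih =>
    rw [Finset.sum_cons, Finset.sum_cons]
    exact le_trans (btriangle B hBsymm hBpos _ _) (by gcongr)

end Aux




lemma key_lemma {X : Type*} [NormedAddCommGroup X] [InnerProductSpace ℝ X]
    (T : ℝ) (hT : 0 < T) (N : ℕ) (hN : 2 ≤ N)
    (dt : ℝ) (hdt : dt = T / ((N : ℝ) - 1))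
    (u w : ℕ → X) (γ : ℕ → ℝ)
    (hw1 : w 1 = u 1)
    (hwj : ∀ j ∈ Finset.Icc 1 (N - 1), w (j + 1) = fdiff dt u j)
    (hγ1 : γ 1 = 1) (hγj : ∀ j ∈ Finset.Icc 2 N, γ j = dt)
    (s : ℕ) (lam : ℕ → ℝ) (φ : ℕ → X) (f : ℕ → ℕ → ℝ)
    (hlam : ∀ k ∈ Finset.Icc 1 s, 0 < lam k)
    (hf : ∀ k ∈ Finset.Icc 1 s, ∀ l ∈ Finset.Icc 1 s,
      (∑ j ∈ Finset.Icc 1 N, γ j * f k j * f l j) = if k = l then 1 else 0)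
    (hsvd : ∀ j ∈ Finset.Icc 1 N,
      w j = ∑ k ∈ Finset.Icc 1 s, (Real.sqrt (lam k) * f k j) • φ k)
    (r : ℕ) (hrs : r ≤ s)
    (B : X →ₗ[ℝ] X →ₗ[ℝ] ℝ) (hBsymm : ∀ x y, B x y = B y x) (hBpos : ∀ x, 0 ≤ B x x)
    (E : X →ₗ[ℝ] X) (hE : ∀ k ∈ Finset.Icc 1 r, E (φ k) = 0) :
    ∀ j ∈ Finset.Icc 1 N,
      B (E (u j)) (E (u j)) ≤
        2 * max T 1 * ∑ k ∈ Finset.Icc (r + 1) s, lam k * B (E (φ k)) (E (φ k)) := by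
  have hN1 : (1 : ℝ) ≤ (N : ℝ) - 1 := by
    have : (2 : ℝ) ≤ (N : ℝ) := by exact_mod_cast hN
    linarith
  have hdt0 : 0 < dt := by rw [hdt]; positivity
  set q : X → ℝ := fun x => Real.sqrt (B x x) with hq
  have hq0 : ∀ x, 0 ≤ q x := fun x => Real.sqrt_nonneg _
  have hqsq : ∀ x, q x ^ 2 = B x x := fun x => Real.sq_sqrt (hBpos x)
  -- telescoping
  have huw : ∀ j, 1 ≤ j → j ≤ N → u j = w 1 + ∑ i ∈ Finset.Icc 2 j, dt • w i := by
    intro j hj1 hjN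
    induction j, hj1 using Nat.le_induction with
    | base => simp [hw1]
    | succ j hj ih =>
      have hjN' : j ≤ N := by omega
      have hsum := Finset.sum_Icc_succ_top (by omega : 2 ≤ j + 1) (fun i => dt • w i)
      rw [hsum]
      have hwj' : w (j + 1) = fdiff dt u j := hwj j (by simp [Finset.mem_Icc]; omega)
      rw [hwj', fdiff, smul_smul, mul_inv_cancel₀ (ne_of_gt hdt0), one_smul,
        ← add_assoc, ← ih hjN']
      abel
  -- g
  set g : ℕ → X := fun i => E (w i) with hg
  have hgi : ∀ i ∈ Finset.Icc 1 N,
      g i = ∑ k ∈ Finset.Icc 1 s, (Real.sqrt (lam k) * f k i) • E (φ k) := by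
    intro i hi
    simp only [hg]
    rw [hsvd i hi, map_sum]
    simp [map_smul]
  -- diagonalization
  have hdiag : ∑ i ∈ Finset.Icc 1 N, γ i * B (g i) (g i)
      = ∑ k ∈ Finset.Icc 1 s, lam k * B (E (φ k)) (E (φ k)) := by
    have step1 : ∀ i ∈ Finset.Icc 1 N, γ i * B (g i) (g i)
        = ∑ k ∈ Finset.Icc 1 s, ∑ l ∈ Finset.Icc 1 s,
            (Real.sqrt (lam k) * Real.sqrt (lam l) * B (E (φ k)) (E (φ l)))
              * (γ i * f k i * f l i) := by
      intro i hi
      rw [hgi i hi]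
      simp only [map_sum, map_smul, LinearMap.sum_apply, LinearMap.smul_apply,
        smul_eq_mul, Finset.mul_sum]
      refine Finset.sum_congr rfl fun k _ => Finset.sum_congr rfl fun l _ => ?_
      rw [hBsymm (E (φ l)) (E (φ k))]
      ring
    rw [Finset.sum_congr rfl step1, Finset.sum_comm]
    refine Finset.sum_congr rfl fun k hk => ?_
    rw [Finset.sum_comm]
    have step2 : ∀ l ∈ Finset.Icc 1 s,
        ∑ i ∈ Finset.Icc 1 N,
          (Real.sqrt (lam k) * Real.sqrt (lam l) * B (E (φ k)) (E (φ l)))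
            * (γ i * f k i * f l i)
        = if k = l then Real.sqrt (lam k) * Real.sqrt (lam l) * B (E (φ k)) (E (φ l)) else 0 := by
      intro l hl
      rw [← Finset.mul_sum, hf k hk l hl]
      simp [mul_ite]
    rw [Finset.sum_congr rfl step2, Finset.sum_ite_eq, if_pos hk,
      Real.mul_self_sqrt (hlam k hk).le]
  -- split the sum
  have hsplit : ∑ k ∈ Finset.Icc 1 s, lam k * B (E (φ k)) (E (φ k))
      = ∑ k ∈ Finset.Icc (r + 1) s, lam k * B (E (φ k)) (E (φ k)) := by
    have hu : Finset.Icc 1 s = Finset.Icc 1 r ∪ Finset.Icc (r + 1) s := by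
      ext x; simp only [Finset.mem_Icc, Finset.mem_union]; omega
    have hd : Disjoint (Finset.Icc 1 r) (Finset.Icc (r + 1) s) := by
      simp only [Finset.disjoint_left, Finset.mem_Icc]; intro a h1 h2; omega
    rw [hu, Finset.sum_union hd, Finset.sum_eq_zero (fun k hk => by simp [hE k hk]), zero_add]
  -- main estimate
  intro j hj
  rw [Finset.mem_Icc] at hj
  obtain ⟨hj1, hjN⟩ := hj
  have hexpand : E (u j) = g 1 + ∑ i ∈ Finset.Icc 2 j, dt • g i := by
    rw [huw j hj1 hjN, map_add, map_sum]
    simp [hg, map_smul]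
  set A := q (g 1) with hA
  set S2 := ∑ i ∈ Finset.Icc 2 j, dt * q (g i) with hS2
  have htri : q (E (u j)) ≤ A + S2 := by
    rw [hexpand]
    refine le_trans (btriangle B hBsymm hBpos _ _) ?_
    have : Real.sqrt (B (∑ i ∈ Finset.Icc 2 j, dt • g i) (∑ i ∈ Finset.Icc 2 j, dt • g i))
        ≤ ∑ i ∈ Finset.Icc 2 j, q (dt • g i) := bsum B hBsymm hBpos _ _
    refine add_le_add le_rfl (le_trans this ?_)
    refine le_of_eq (Finset.sum_congr rfl fun i _ => ?_)
    simp only [hq, map_smul, LinearMap.smul_apply, smul_eq_mul]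
    rw [show dt * (dt * B (g i) (g i)) = dt ^ 2 * B (g i) (g i) by ring,
      Real.sqrt_mul (sq_nonneg dt), Real.sqrt_sq hdt0.le]
  have hS2sq : S2 ^ 2 ≤ T * ∑ i ∈ Finset.Icc 2 N, dt * q (g i) ^ 2 := by
    have hcs := Finset.sum_mul_sq_le_sq_mul_sq (Finset.Icc 2 j)
      (fun _ => Real.sqrt dt) (fun i => Real.sqrt dt * q (g i))
    have h1 : ∀ i : ℕ, Real.sqrt dt * (Real.sqrt dt * q (g i)) = dt * q (g i) := by
      intro i; rw [← mul_assoc, Real.mul_self_sqrt hdt0.le]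
    have h2 : ∀ i : ℕ, (Real.sqrt dt * q (g i)) ^ 2 = dt * q (g i) ^ 2 := by
      intro i; rw [mul_pow, Real.sq_sqrt hdt0.le]
    simp only [h1, h2, Real.sq_sqrt hdt0.le] at hcs
    have hcard : ∑ _i ∈ Finset.Icc 2 j, dt = ((j - 1 : ℕ) : ℝ) * dt := by
      rw [Finset.sum_const, Nat.card_Icc]
      simp [nsmul_eq_mul]
    have hTd : ((j - 1 : ℕ) : ℝ) * dt ≤ T := by
      have h3 : ((j - 1 : ℕ) : ℝ) ≤ (N : ℝ) - 1 := by
        have : ((j - 1 : ℕ) : ℝ) ≤ ((N - 1 : ℕ) : ℝ) := by exact_mod_cast (by omega : j - 1 ≤ N - 1)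
        rw [Nat.cast_sub (by omega : 1 ≤ N)] at this
        simpa using this
      calc ((j - 1 : ℕ) : ℝ) * dt ≤ ((N : ℝ) - 1) * dt := by
            exact mul_le_mul_of_nonneg_right h3 hdt0.le
        _ = T := by rw [hdt]; field_simp
    have hmono : ∑ i ∈ Finset.Icc 2 j, dt * q (g i) ^ 2 ≤ ∑ i ∈ Finset.Icc 2 N, dt * q (g i) ^ 2 := by
      refine Finset.sum_le_sum_of_subset_of_nonneg (Finset.Icc_subset_Icc le_rfl hjN) ?_
      intro i _ _; positivity
    calc S2 ^ 2 ≤ (∑ _i ∈ Finset.Icc 2 j, dt) * ∑ i ∈ Finset.Icc 2 j, dt * q (g i) ^ 2 := hcs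
      _ ≤ T * ∑ i ∈ Finset.Icc 2 N, dt * q (g i) ^ 2 := by
          rw [hcard]
          refine mul_le_mul hTd hmono (by positivity) hT.le
  set Q := ∑ i ∈ Finset.Icc 2 N, dt * q (g i) ^ 2 with hQ
  have hQ0 : 0 ≤ Q := Finset.sum_nonneg fun i _ => by positivity
  have hA0 : 0 ≤ A := hq0 _
  have hS20 : 0 ≤ S2 := Finset.sum_nonneg fun i _ => by positivity
  set M := max T 1 with hM
  have hM1 : 1 ≤ M := le_max_right _ _
  have hMT : T ≤ M := le_max_left _ _
  have htotal : A ^ 2 + Q = ∑ i ∈ Finset.Icc 1 N, γ i * B (g i) (g i) := by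
    have hins : Finset.Icc 1 N = insert 1 (Finset.Icc 2 N) := by
      ext x; simp only [Finset.mem_Icc, Finset.mem_insert]; omega
    rw [hins, Finset.sum_insert (by simp [Finset.mem_Icc])]
    rw [hγ1, one_mul, ← hqsq (g 1)]
    congr 1
    refine Finset.sum_congr rfl fun i hi => ?_
    rw [hγj i hi, hqsq]
  have hfinal : B (E (u j)) (E (u j)) ≤ 2 * M * (A ^ 2 + Q) := by
    have h4 : B (E (u j)) (E (u j)) = q (E (u j)) ^ 2 := (hqsq _).symm
    rw [h4]
    have h5 : q (E (u j)) ^ 2 ≤ (A + S2) ^ 2 := by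
      have := hq0 (E (u j)); nlinarith [htri]
    have h6 : (A + S2) ^ 2 ≤ 2 * A ^ 2 + 2 * S2 ^ 2 := by nlinarith [sq_nonneg (A - S2)]
    have h7 : 2 * S2 ^ 2 ≤ 2 * (T * Q) := by linarith [hS2sq]
    have h8 : T * Q ≤ M * Q := mul_le_mul_of_nonneg_right hMT hQ0
    have h9 : A ^ 2 ≤ M * A ^ 2 := le_mul_of_one_le_left (sq_nonneg _) hM1
    have h10 : 2 * M * (A ^ 2 + Q) = 2 * (M * A ^ 2) + 2 * (M * Q) := by ring
    rw [h10]
    linarith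
  calc B (E (u j)) (E (u j)) ≤ 2 * M * (A ^ 2 + Q) := hfinal
    _ = 2 * M * ∑ k ∈ Finset.Icc (r + 1) s, lam k * B (E (φ k)) (E (φ k)) := by
        rw [htotal, hdiag, hsplit]

theorem stmt_4
    {X : Type*} [NormedAddCommGroup X] [InnerProductSpace ℝ X] [CompleteSpace X]
    (T : ℝ) (hT : 0 < T) (N : ℕ) (hN : 2 ≤ N)
    (dt : ℝ) (hdt : dt = T / ((N : ℝ) - 1))
    (u w : ℕ → X) (γ : ℕ → ℝ)
    (hw1 : w 1 = u 1)
    (hwj : ∀ j ∈ Finset.Icc 1 (N - 1), w (j + 1) = fdiff dt u j)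
    (hγ1 : γ 1 = 1) (hγj : ∀ j ∈ Finset.Icc 2 N, γ j = dt)
    (s : ℕ) (lam : ℕ → ℝ) (φ : ℕ → X) (f : ℕ → ℕ → ℝ)
    (hlam : ∀ k ∈ Finset.Icc 1 s, 0 < lam k)
    (hφ : ∀ k ∈ Finset.Icc 1 s, ∀ l ∈ Finset.Icc 1 s,
      ⟪φ k, φ l⟫ = if k = l then 1 else 0)
    (hf : ∀ k ∈ Finset.Icc 1 s, ∀ l ∈ Finset.Icc 1 s,
      (∑ j ∈ Finset.Icc 1 N, γ j * f k j * f l j) = if k = l then 1 else 0)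
    (hsvd : ∀ j ∈ Finset.Icc 1 N,
      w j = ∑ k ∈ Finset.Icc 1 s, (Real.sqrt (lam k) * f k j) • φ k)
    (r : ℕ) (hr1 : 1 ≤ r) (hrs : r ≤ s)
    (Pr : X → X)
    (hPrmem : ∀ x, Pr x ∈ Submodule.span ℝ (φ '' Set.Icc 1 r))
    (hProrth : ∀ x, ∀ v ∈ Submodule.span ℝ (φ '' Set.Icc 1 r),
      ⟪x - Pr x, v⟫ = 0)
    (ipY : X →ₗ[ℝ] X →ₗ[ℝ] ℝ)
    (hYsymm : ∀ x y, ipY x y = ipY y x)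
    (hYpos : ∀ x : X, x ≠ 0 → 0 < ipY x x)
    (π : X →ₗ[ℝ] X)
    (hππ : ∀ x, π (π x) = π x)
    (hπrange : LinearMap.range π = Submodule.span ℝ (φ '' Set.Icc 1 r)) :
    (∀ j ∈ Finset.Icc 1 N,
      ‖u j - Pr (u j)‖ ^ 2 ≤ 2 * max T 1 * ∑ k ∈ Finset.Icc (r + 1) s, lam k)
    ∧ (∀ j ∈ Finset.Icc 1 N,
      ipY (u j - Pr (u j)) (u j - Pr (u j))
        ≤ 2 * max T 1 * ∑ k ∈ Finset.Icc (r + 1) s, lam k * ipY (φ k) (φ k))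
    ∧ (∀ j ∈ Finset.Icc 1 N,
      ipY (u j - π (u j)) (u j - π (u j))
        ≤ 2 * max T 1 *
          ∑ k ∈ Finset.Icc (r + 1) s, lam k * ipY (φ k - π (φ k)) (φ k - π (φ k))) := by
  classical
  set V : Submodule ℝ X := Submodule.span ℝ (φ '' Set.Icc 1 r) with hV
  haveI : FiniteDimensional ℝ V :=
    FiniteDimensional.span_of_finite ℝ ((Set.finite_Icc 1 r).image φ)
  -- the orthogonal projection
  have hPr : ∀ x : X, ((V.orthogonalProjectionOnto x : X)) = Pr x := fun x =>
    Submodule.eq_starProjection_of_mem_of_inner_eq_zero (hPrmem x) (hProrth x)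
  set E₁ : X →ₗ[ℝ] X :=
    LinearMap.id - V.subtype.comp (V.orthogonalProjectionOnto).toLinearMap with hE₁def
  have hE1x : ∀ x : X, E₁ x = x - Pr x := by
    intro x
    simp only [hE₁def, LinearMap.sub_apply, LinearMap.id_apply, LinearMap.comp_apply,
      Submodule.subtype_apply, ContinuousLinearMap.coe_coe]
    rw [hPr x]
  have hφmem : ∀ k ∈ Finset.Icc 1 r, φ k ∈ V := by
    intro k hk
    rw [Finset.mem_Icc] at hk
    exact Submodule.subset_span ⟨k, ⟨hk.1, hk.2⟩, rfl⟩
  have hE1zero : ∀ k ∈ Finset.Icc 1 r, E₁ (φ k) = 0 := by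
    intro k hk
    have : ((V.orthogonalProjectionOnto (φ k) : X)) = φ k :=
      Submodule.starProjection_eq_self_iff.mpr (hφmem k hk)
    simp only [hE₁def, LinearMap.sub_apply, LinearMap.id_apply, LinearMap.comp_apply,
      Submodule.subtype_apply, ContinuousLinearMap.coe_coe, this, sub_self]
  have hPzero : ∀ k ∈ Finset.Icc (r + 1) s, ((V.orthogonalProjectionOnto (φ k) : X)) = 0 := by
    intro k hk
    rw [Finset.mem_Icc] at hk
    refine Submodule.eq_starProjection_of_mem_of_inner_eq_zero (zero_mem V) ?_
    intro v hv
    rw [sub_zero]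
    induction hv using Submodule.span_induction with
    | mem x hx =>
      obtain ⟨l, hl, rfl⟩ := hx
      obtain ⟨hl1, hl2⟩ := hl
      have hkm : k ∈ Finset.Icc 1 s := by rw [Finset.mem_Icc]; omega
      have hlm : l ∈ Finset.Icc 1 s := by rw [Finset.mem_Icc]; omega
      rw [hφ k hkm l hlm, if_neg (by omega)]
    | zero => exact inner_zero_right _
    | add x y hx hy ihx ihy => rw [inner_add_right, ihx, ihy, add_zero]
    | smul a x hx ih => rw [real_inner_smul_right, ih, mul_zero]
  have hE1φ : ∀ k ∈ Finset.Icc (r + 1) s, E₁ (φ k) = φ k := by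
    intro k hk
    simp only [hE₁def, LinearMap.sub_apply, LinearMap.id_apply, LinearMap.comp_apply,
      Submodule.subtype_apply, ContinuousLinearMap.coe_coe, hPzero k hk, sub_zero]
  -- the real inner product as a bilinear map
  set B₁ : X →ₗ[ℝ] X →ₗ[ℝ] ℝ := LinearMap.mk₂ ℝ (fun x y => ⟪x, y⟫)
    (fun x y z => inner_add_left x y z)
    (fun c x y => real_inner_smul_left x y c)
    (fun x y z => inner_add_right x y z)
    (fun c x y => real_inner_smul_right x y c) with hB₁def
  have hB₁app : ∀ x y : X, B₁ x y = ⟪x, y⟫ := fun x y => rfl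
  have hB₁symm : ∀ x y : X, B₁ x y = B₁ y x := fun x y => real_inner_comm y x
  have hB₁pos : ∀ x : X, 0 ≤ B₁ x x := fun x => real_inner_self_nonneg
  have hYpos' : ∀ x : X, 0 ≤ ipY x x := by
    intro x
    by_cases hx : x = 0
    · simp [hx]
    · exact (hYpos x hx).le
  -- the algebraic projection complement
  set E₃ : X →ₗ[ℝ] X := LinearMap.id - π with hE₃def
  have hE3x : ∀ x : X, E₃ x = x - π x := fun x => rfl
  have hE3zero : ∀ k ∈ Finset.Icc 1 r, E₃ (φ k) = 0 := by
    intro k hk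
    have : φ k ∈ LinearMap.range π := by rw [hπrange]; exact hφmem k hk
    obtain ⟨y, hy⟩ := this
    have : π (φ k) = φ k := by rw [← hy, hππ]
    simp only [hE₃def, LinearMap.sub_apply, LinearMap.id_apply, this, sub_self]
  have K1 := key_lemma T hT N hN dt hdt u w γ hw1 hwj hγ1 hγj s lam φ f hlam hf hsvd
    r hrs B₁ hB₁symm hB₁pos E₁ hE1zero
  have K2 := key_lemma T hT N hN dt hdt u w γ hw1 hwj hγ1 hγj s lam φ f hlam hf hsvd
    r hrs ipY hYsymm hYpos' E₁ hE1zero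
  have K3 := key_lemma T hT N hN dt hdt u w γ hw1 hwj hγ1 hγj s lam φ f hlam hf hsvd
    r hrs ipY hYsymm hYpos' E₃ hE3zero
  refine ⟨?_, ?_, ?_⟩
  · intro j hj
    have h := K1 j hj
    rw [hE1x (u j), hB₁app] at h
    rw [real_inner_self_eq_norm_sq] at h
    refine le_trans h (le_of_eq ?_)
    congr 1
    refine Finset.sum_congr rfl fun k hk => ?_
    rw [hE1φ k hk, hB₁app]
    have hkm : k ∈ Finset.Icc 1 s := by
      rw [Finset.mem_Icc] at hk ⊢; omega
    rw [hφ k hkm k hkm, if_pos rfl, mul_one]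
  · intro j hj
    have h := K2 j hj
    rw [hE1x (u j)] at h
    refine le_trans h (le_of_eq ?_)
    congr 1
    refine Finset.sum_congr rfl fun k hk => ?_
    rw [hE1φ k hk]
  · intro j hj
    have h := K3 j hj
    simpa only [hE3x] using h
end

section
/- (Weighted sum data error bounds for the DQ POD operator K₁.) Let T > 0, N ≥ 2, Δt = T/(N−1), and u^1,…,u^N ∈ X. Suppose the POD decomposition hypothesis holds for the DQ data set w^1 = u^1 and w^{j+1} = ∂u^j (j = 1,…,N−1) with weights γ_1 = 1 and γ_j = Δt for j = 2,…,N, with POD eigenvalues λ_k^{DQ1}, modes φ_k, and rank s. Then with C = 4 max{T², T}: (i) Σ_{j=1}^N Δt ‖u^j − Π_r^X u^j‖_X² ≤ C Σ_{k=r+1}^s λ_k^{DQ1}; (ii) if (·,·)_Y is a second inner product on X then Σ_{j=1}^N Δt ‖u^j − Π_r^X u^j‖_Y² ≤ C Σ_{k=r+1}^s λ_k^{DQ1} ‖φ_k‖_Y²; (iii) if in addition π_r : X → X is a linear projection onto X_r (π_r∘π_r = π_r, range(π_r) = X_r), then Σ_{j=1}^N Δt ‖u^j − π_r u^j‖_Y²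 ≤ C Σ_{k=r+1}^s λ_k^{DQ1} ‖φ_k − π_r φ_k‖_Y². -/
open Finset RealInnerProductSpace

section Aux
section Aux
variable {X : Type*} [AddCommGroup X] [Module ℝ X]

lemma two_mul_Q_le (Q : X →ₗ[ℝ] X →ₗ[ℝ] ℝ)
    (hsymm : ∀ x y, Q x y = Q y x) (hpos : ∀ x, 0 ≤ Q x x) (x y : X) :
    2 * Q x y ≤ Q x x + Q y y := by
  have h := hpos (x - y)
  simp only [map_sub, LinearMap.sub_apply] at h
  nlinarith [hsymm x y]

lemma Qexpand (Q : X →ₗ[ℝ] X →ₗ[ℝ] ℝ) (t t' : Finset ℕ) (a b : ℕ → ℝ) (v w : ℕ → X) :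
    Q (∑ i ∈ t, a i • v i) (∑ i' ∈ t', b i' • w i')
      = ∑ i ∈ t, ∑ i' ∈ t', (a i * b i') * Q (v i) (w i') := by
  rw [map_sum]
  conv_rhs => rw [Finset.sum_comm]
  apply Finset.sum_congr rfl
  intro l _
  rw [map_smul, smul_eq_mul, map_sum, LinearMap.sum_apply, Finset.mul_sum]
  apply Finset.sum_congr rfl
  intro k _
  rw [map_smul, LinearMap.smul_apply, smul_eq_mul]
  ring

lemma core (Q : X →ₗ[ℝ] X →ₗ[ℝ] ℝ)
    (hsymm : ∀ x y, Q x y = Q y x) (hpos : ∀ x, 0 ≤ Q x x)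
    (T : ℝ) (hT : 0 < T) (N : ℕ) (hN : 2 ≤ N)
    (dt : ℝ) (hdt : dt = T / ((N : ℝ) - 1))
    (γ : ℕ → ℝ) (hγ1 : γ 1 = 1) (hγj : ∀ j ∈ Finset.Icc 2 N, γ j = dt)
    (s r : ℕ)
    (lam : ℕ → ℝ) (hlam : ∀ k ∈ Finset.Icc 1 s, 0 < lam k)
    (f : ℕ → ℕ → ℝ)
    (hf : ∀ k ∈ Finset.Icc 1 s, ∀ l ∈ Finset.Icc 1 s,
      (∑ j ∈ Finset.Icc 1 N, γ j * f k j * f l j) = if k = l then 1 else 0)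
    (ψ : ℕ → X) (e : ℕ → X)
    (he : ∀ j ∈ Finset.Icc 1 N, e j
      = ∑ k ∈ Finset.Icc (r+1) s,
          (Real.sqrt (lam k) * (f k 1 + dt * ∑ i ∈ Finset.Icc 2 j, f k i)) • ψ k) :
    ∑ j ∈ Finset.Icc 1 N, dt * Q (e j) (e j)
      ≤ 4 * max (T ^ 2) T * ∑ k ∈ Finset.Icc (r + 1) s, lam k * Q (ψ k) (ψ k) := by
  have hNr : (2:ℝ) ≤ (N:ℝ) := by exact_mod_cast hN
  have hN1 : (0:ℝ) < (N:ℝ) - 1 := by linarith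
  have hdtpos : 0 < dt := by rw [hdt]; exact div_pos hT hN1
  have hTdt : ((N:ℝ) - 1) * dt = T := by
    rw [hdt]; field_simp
  have hsub : Finset.Icc (r+1) s ⊆ Finset.Icc 1 s := by
    intro k hk
    simp only [Finset.mem_Icc] at hk ⊢
    omega
  set E : ℕ → X := fun i => ∑ k ∈ Finset.Icc (r+1) s, (Real.sqrt (lam k) * f k i) • ψ k with hE
  set S : ℝ := ∑ i ∈ Finset.Icc 1 N, γ i * Q (E i) (E i) with hSdef
  -- expansion of Q (E i) (E i)
  have hQE : ∀ i i' : ℕ, Q (E i) (E i')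
      = ∑ k ∈ Finset.Icc (r+1) s, ∑ l ∈ Finset.Icc (r+1) s,
          (Real.sqrt (lam k) * f k i) * (Real.sqrt (lam l) * f l i') * Q (ψ k) (ψ l) := by
    intro i i'
    rw [hE]
    simp only []
    rw [map_sum]
    conv_rhs => rw [Finset.sum_comm]
    apply Finset.sum_congr rfl
    intro l _
    rw [map_smul, smul_eq_mul, map_sum, LinearMap.sum_apply, Finset.mul_sum]
    apply Finset.sum_congr rfl
    intro k _
    rw [map_smul, LinearMap.smul_apply, smul_eq_mul]
    ring
  have hγnn : ∀ i ∈ Finset.Icc 1 N, 0 ≤ γ i := by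
    intro i hi
    simp only [Finset.mem_Icc] at hi
    rcases Nat.eq_or_lt_of_le hi.1 with h1 | h1
    · rw [← h1, hγ1]; norm_num
    · rw [hγj i (by simp [Finset.mem_Icc]; omega)]; exact hdtpos.le
  -- value of S
  have hS : S = ∑ k ∈ Finset.Icc (r + 1) s, lam k * Q (ψ k) (ψ k) := by
    rw [hSdef]
    have : ∀ i ∈ Finset.Icc 1 N, γ i * Q (E i) (E i)
        = ∑ k ∈ Finset.Icc (r+1) s, ∑ l ∈ Finset.Icc (r+1) s,
            (γ i * f k i * f l i) * (Real.sqrt (lam k) * Real.sqrt (lam l) * Q (ψ k) (ψ l)) := by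
      intro i _
      rw [hQE i i, Finset.mul_sum]
      apply Finset.sum_congr rfl
      intro k _
      rw [Finset.mul_sum]
      apply Finset.sum_congr rfl
      intro l _
      ring
    rw [Finset.sum_congr rfl this, Finset.sum_comm]
    have : ∀ k ∈ Finset.Icc (r+1) s,
        (∑ i ∈ Finset.Icc 1 N, ∑ l ∈ Finset.Icc (r+1) s,
          (γ i * f k i * f l i) * (Real.sqrt (lam k) * Real.sqrt (lam l) * Q (ψ k) (ψ l)))
        = lam k * Q (ψ k) (ψ k) := by
      intro k hk
      rw [Finset.sum_comm]
      have : ∀ l ∈ Finset.Icc (r+1) s,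
          (∑ i ∈ Finset.Icc 1 N,
            (γ i * f k i * f l i) * (Real.sqrt (lam k) * Real.sqrt (lam l) * Q (ψ k) (ψ l)))
          = (if k = l then 1 else 0) * (Real.sqrt (lam k) * Real.sqrt (lam l) * Q (ψ k) (ψ l)) := by
        intro l hl
        rw [← Finset.sum_mul, hf k (hsub hk) l (hsub hl)]
      rw [Finset.sum_congr rfl this]
      simp only [ite_mul, one_mul, zero_mul]
      rw [Finset.sum_ite_eq (Finset.Icc (r+1) s) k]
      simp only [hk, if_true]
      rw [Real.mul_self_sqrt (hlam k (hsub hk)).le]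
    rw [Finset.sum_congr rfl this]
  have hSnn : 0 ≤ S := by
    rw [hSdef]
    exact Finset.sum_nonneg fun i hi => mul_nonneg (hγnn i hi) (hpos _)
  -- per-j bound
  have hjbd : ∀ j ∈ Finset.Icc 1 N, Q (e j) (e j) ≤ (1 + T) * S := by
    intro j hjm
    rw [Finset.mem_Icc] at hjm
    set c : ℕ → ℝ := fun i => if i = 1 then 1 else if i ≤ j then dt else 0 with hc
    have hcnn : ∀ i, 0 ≤ c i := by
      intro i
      rw [hc]
      dsimp only
      split_ifs
      · norm_num
      · exact hdtpos.le
      · exact le_refl 0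
    have hsplit3 : ∀ (g : ℕ → ℝ), ∑ i ∈ Finset.Icc 1 N, g i
        = g 1 + (∑ i ∈ Finset.Icc 2 j, g i + ∑ i ∈ Finset.Icc (j+1) N, g i) := by
      intro g
      have h1 : (∑ i ∈ Finset.Ioc 1 j, g i) + ∑ i ∈ Finset.Ioc j N, g i
          = ∑ i ∈ Finset.Ioc 1 N, g i := Finset.sum_Ioc_consecutive g hjm.1 hjm.2
      have h2 : (∑ i ∈ Finset.Ioc 0 1, g i) + ∑ i ∈ Finset.Ioc 1 N, g i
          = ∑ i ∈ Finset.Ioc 0 N, g i := Finset.sum_Ioc_consecutive g (by omega) (by omega)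
      have e0 : Finset.Icc 1 N = Finset.Ioc 0 N := (Finset.Icc_add_one_left_eq_Ioc 0 N)
      have e1 : Finset.Icc 2 j = Finset.Ioc 1 j := (Finset.Icc_add_one_left_eq_Ioc 1 j)
      have e2 : Finset.Icc (j+1) N = Finset.Ioc j N := (Finset.Icc_add_one_left_eq_Ioc j N)
      have e3 : (∑ i ∈ Finset.Ioc 0 1, g i) = g 1 := by
        rw [← Finset.Icc_add_one_left_eq_Ioc 0 1, zero_add, Finset.Icc_self, Finset.sum_singleton]
      rw [e0, e1, e2, ← h2, e3]
      linarith
    have hcγ : ∀ i ∈ Finset.Icc 1 N, c i ≤ γ i := by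
      intro i hi
      rw [Finset.mem_Icc] at hi
      rw [hc]
      dsimp only
      by_cases h1 : i = 1
      · rw [if_pos h1, h1, hγ1]
      · rw [if_neg h1, hγj i (by rw [Finset.mem_Icc]; omega)]
        split_ifs
        · exact le_refl dt
        · exact hdtpos.le
    have hej : e j = ∑ i ∈ Finset.Icc 1 N, c i • E i := by
      rw [he j (by rw [Finset.mem_Icc]; omega)]
      have step : ∀ i ∈ Finset.Icc 1 N, c i • E i
          = ∑ k ∈ Finset.Icc (r+1) s, (c i * (Real.sqrt (lam k) * f k i)) • ψ k := by
        intro i _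
        rw [hE]
        simp only []
        rw [Finset.smul_sum]
        apply Finset.sum_congr rfl
        intro k _
        rw [smul_smul]
      rw [Finset.sum_congr rfl step, Finset.sum_comm]
      apply Finset.sum_congr rfl
      intro k _
      rw [← Finset.sum_smul]
      congr 1
      rw [hsplit3 (fun i => c i * (Real.sqrt (lam k) * f k i))]
      have m1 : (∑ i ∈ Finset.Icc 2 j, c i * (Real.sqrt (lam k) * f k i))
          = ∑ i ∈ Finset.Icc 2 j, dt * (Real.sqrt (lam k) * f k i) := by
        apply Finset.sum_congr rfl
        intro i hi
        rw [Finset.mem_Icc] at hi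
        rw [hc]
        dsimp only
        rw [if_neg (by omega), if_pos hi.2]
      have m2 : (∑ i ∈ Finset.Icc (j+1) N, c i * (Real.sqrt (lam k) * f k i)) = 0 := by
        apply Finset.sum_eq_zero
        intro i hi
        rw [Finset.mem_Icc] at hi
        rw [hc]
        dsimp only
        rw [if_neg (by omega), if_neg (by omega), zero_mul]
      rw [m1, m2, hc]
      dsimp only
      rw [if_pos rfl, one_mul, add_zero, mul_add, Finset.mul_sum, Finset.mul_sum]
      congr 1
      apply Finset.sum_congr rfl
      intro i _
      ring
    -- expansion and bound
    rw [hej, Qexpand]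
    have hstep : ∀ i ∈ Finset.Icc 1 N, ∀ i' ∈ Finset.Icc 1 N,
        (c i * c i') * Q (E i) (E i')
          ≤ (c i * c i') * ((Q (E i) (E i) + Q (E i') (E i')) / 2) := by
      intro i _ i' _
      apply mul_le_mul_of_nonneg_left _ (mul_nonneg (hcnn i) (hcnn i'))
      have := two_mul_Q_le Q hsymm hpos (E i) (E i')
      linarith
    have hAB : ∑ i ∈ Finset.Icc 1 N, ∑ i' ∈ Finset.Icc 1 N,
        (c i * c i') * ((Q (E i) (E i) + Q (E i') (E i')) / 2)
        = (∑ i ∈ Finset.Icc 1 N, c i) * (∑ i ∈ Finset.Icc 1 N, c i * Q (E i) (E i)) := by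
      calc ∑ i ∈ Finset.Icc 1 N, ∑ i' ∈ Finset.Icc 1 N,
            (c i * c i') * ((Q (E i) (E i) + Q (E i') (E i')) / 2)
          = ∑ i ∈ Finset.Icc 1 N, ∑ i' ∈ Finset.Icc 1 N,
            ((c i * Q (E i) (E i)) * c i' / 2 + c i * (c i' * Q (E i') (E i')) / 2) := by
            apply Finset.sum_congr rfl
            intro i _
            apply Finset.sum_congr rfl
            intro i' _
            ring
        _ = (∑ i ∈ Finset.Icc 1 N, ∑ i' ∈ Finset.Icc 1 N, (c i * Q (E i) (E i)) * c i') / 2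
            + (∑ i ∈ Finset.Icc 1 N, ∑ i' ∈ Finset.Icc 1 N, c i * (c i' * Q (E i') (E i'))) / 2 := by
            simp only [Finset.sum_add_distrib, Finset.sum_div]
        _ = ((∑ i ∈ Finset.Icc 1 N, c i * Q (E i) (E i)) * (∑ i ∈ Finset.Icc 1 N, c i)) / 2
            + ((∑ i ∈ Finset.Icc 1 N, c i) * (∑ i ∈ Finset.Icc 1 N, c i * Q (E i) (E i))) / 2 := by
            rw [← Finset.sum_mul_sum, ← Finset.sum_mul_sum]
        _ = (∑ i ∈ Finset.Icc 1 N, c i) * (∑ i ∈ Finset.Icc 1 N, c i * Q (E i) (E i)) := by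
            ring
    have hA : (∑ i ∈ Finset.Icc 1 N, c i) ≤ 1 + T := by
      rw [hsplit3 c]
      have z2 : (∑ i ∈ Finset.Icc (j+1) N, c i) = 0 := by
        apply Finset.sum_eq_zero
        intro i hi
        rw [Finset.mem_Icc] at hi
        rw [hc]
        dsimp only
        rw [if_neg (by omega), if_neg (by omega)]
      have z1 : (∑ i ∈ Finset.Icc 2 j, c i) ≤ T := by
        have step : ∀ i ∈ Finset.Icc 2 j, c i = dt := by
          intro i hi
          rw [Finset.mem_Icc] at hi
          rw [hc]
          dsimp only
          rw [if_neg (by omega), if_pos hi.2]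
        rw [Finset.sum_congr rfl step, Finset.sum_const, Nat.card_Icc, nsmul_eq_mul]
        have hle : ((j + 1 - 2 : ℕ) : ℝ) ≤ (N : ℝ) - 1 := by
          have : j + 1 - 2 ≤ N - 1 := by omega
          have h2 : ((N - 1 : ℕ) : ℝ) = (N : ℝ) - 1 := by
            have : (1:ℕ) ≤ N := by omega
            push_cast [this]
            ring
          calc ((j + 1 - 2 : ℕ) : ℝ) ≤ ((N - 1 : ℕ) : ℝ) := by exact_mod_cast this
            _ = (N : ℝ) - 1 := h2
        calc ((j + 1 - 2 : ℕ) : ℝ) * dt ≤ ((N : ℝ) - 1) * dt :=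
            mul_le_mul_of_nonneg_right hle hdtpos.le
          _ = T := hTdt
      have c1 : c 1 = 1 := by rw [hc]; norm_num
      linarith
    have hB : (∑ i ∈ Finset.Icc 1 N, c i * Q (E i) (E i)) ≤ S := by
      rw [hSdef]
      apply Finset.sum_le_sum
      intro i hi
      exact mul_le_mul_of_nonneg_right (hcγ i hi) (hpos _)
    have hBnn : 0 ≤ ∑ i ∈ Finset.Icc 1 N, c i * Q (E i) (E i) :=
      Finset.sum_nonneg fun i _ => mul_nonneg (hcnn i) (hpos _)
    calc ∑ i ∈ Finset.Icc 1 N, ∑ i' ∈ Finset.Icc 1 N, (c i * c i') * Q (E i) (E i')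
        ≤ ∑ i ∈ Finset.Icc 1 N, ∑ i' ∈ Finset.Icc 1 N,
            (c i * c i') * ((Q (E i) (E i) + Q (E i') (E i')) / 2) :=
          Finset.sum_le_sum fun i hi => Finset.sum_le_sum fun i' hi' => hstep i hi i' hi'
      _ = (∑ i ∈ Finset.Icc 1 N, c i) * (∑ i ∈ Finset.Icc 1 N, c i * Q (E i) (E i)) := hAB
      _ ≤ (1 + T) * S := by
          apply mul_le_mul hA hB hBnn
          linarith
  -- assemble
  have hfin : ∑ j ∈ Finset.Icc 1 N, dt * Q (e j) (e j) ≤ (N : ℝ) * (dt * ((1 + T) * S)) := by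
    calc ∑ j ∈ Finset.Icc 1 N, dt * Q (e j) (e j)
        ≤ ∑ j ∈ Finset.Icc 1 N, dt * ((1 + T) * S) :=
          Finset.sum_le_sum fun j hj => mul_le_mul_of_nonneg_left (hjbd j hj) hdtpos.le
      _ = (N : ℝ) * (dt * ((1 + T) * S)) := by
          rw [Finset.sum_const, Nat.card_Icc, nsmul_eq_mul]
          norm_num
  have hNdt : (N : ℝ) * dt ≤ 2 * T := by
    have h1 : (N : ℝ) ≤ 2 * ((N : ℝ) - 1) := by linarith
    calc (N : ℝ) * dt ≤ 2 * ((N : ℝ) - 1) * dt := mul_le_mul_of_nonneg_right h1 hdtpos.le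
      _ = 2 * T := by rw [mul_assoc, hTdt]
  have hm1 : T ≤ max (T ^ 2) T := le_max_right _ _
  have hm2 : T ^ 2 ≤ max (T ^ 2) T := le_max_left _ _
  rw [← hS]
  calc ∑ j ∈ Finset.Icc 1 N, dt * Q (e j) (e j)
      ≤ (N : ℝ) * (dt * ((1 + T) * S)) := hfin
    _ ≤ 2 * T * ((1 + T) * S) := by
        rw [← mul_assoc]
        apply mul_le_mul_of_nonneg_right hNdt
        have : (0:ℝ) ≤ 1 + T := by linarith
        exact mul_nonneg this hSnn
    _ ≤ 4 * max (T ^ 2) T * S := by nlinarith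

end Aux

theorem stmt_5
    {X : Type*} [NormedAddCommGroup X] [InnerProductSpace ℝ X] [CompleteSpace X]
    (T : ℝ) (hT : 0 < T) (N : ℕ) (hN : 2 ≤ N)
    (dt : ℝ) (hdt : dt = T / ((N : ℝ) - 1))
    (u w : ℕ → X) (γ : ℕ → ℝ)
    (hw1 : w 1 = u 1)
    (hwj : ∀ j ∈ Finset.Icc 1 (N - 1), w (j + 1) = fdiff dt u j)
    (hγ1 : γ 1 = 1) (hγj : ∀ j ∈ Finset.Icc 2 N, γ j = dt)
    (s : ℕ) (lam : ℕ → ℝ) (φ : ℕ → X) (f : ℕ → ℕ → ℝ)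
    (hlam : ∀ k ∈ Finset.Icc 1 s, 0 < lam k)
    (hφ : ∀ k ∈ Finset.Icc 1 s, ∀ l ∈ Finset.Icc 1 s,
      ⟪φ k, φ l⟫ = if k = l then 1 else 0)
    (hf : ∀ k ∈ Finset.Icc 1 s, ∀ l ∈ Finset.Icc 1 s,
      (∑ j ∈ Finset.Icc 1 N, γ j * f k j * f l j) = if k = l then 1 else 0)
    (hsvd : ∀ j ∈ Finset.Icc 1 N,
      w j = ∑ k ∈ Finset.Icc 1 s, (Real.sqrt (lam k) * f k j) • φ k)
    (r : ℕ) (hr1 : 1 ≤ r) (hrs : r ≤ s)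
    (Pr : X → X)
    (hPrmem : ∀ x, Pr x ∈ Submodule.span ℝ (φ '' Set.Icc 1 r))
    (hProrth : ∀ x, ∀ v ∈ Submodule.span ℝ (φ '' Set.Icc 1 r),
      ⟪x - Pr x, v⟫ = 0)
    (ipY : X →ₗ[ℝ] X →ₗ[ℝ] ℝ)
    (hYsymm : ∀ x y, ipY x y = ipY y x)
    (hYpos : ∀ x : X, x ≠ 0 → 0 < ipY x x)
    (π : X →ₗ[ℝ] X)
    (hππ : ∀ x, π (π x) = π x)
    (hπrange : LinearMap.range π = Submodule.span ℝ (φ '' Set.Icc 1 r)) :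
    (∑ j ∈ Finset.Icc 1 N, dt * ‖u j - Pr (u j)‖ ^ 2
      ≤ 4 * max (T ^ 2) T * ∑ k ∈ Finset.Icc (r + 1) s, lam k)
    ∧ (∑ j ∈ Finset.Icc 1 N, dt * ipY (u j - Pr (u j)) (u j - Pr (u j))
      ≤ 4 * max (T ^ 2) T * ∑ k ∈ Finset.Icc (r + 1) s, lam k * ipY (φ k) (φ k))
    ∧ (∑ j ∈ Finset.Icc 1 N, dt * ipY (u j - π (u j)) (u j - π (u j))
      ≤ 4 * max (T ^ 2) T *
        ∑ k ∈ Finset.Icc (r + 1) s, lam k * ipY (φ k - π (φ k)) (φ k - π (φ k))) := by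
  classical
  have hNr : (2 : ℝ) ≤ (N : ℝ) := by exact_mod_cast hN
  have hN1 : (0 : ℝ) < (N : ℝ) - 1 := by linarith
  have hdtpos : 0 < dt := by rw [hdt]; exact div_pos hT hN1
  set K : Submodule ℝ X := Submodule.span ℝ (φ '' Set.Icc 1 r) with hK
  -- expansion of u
  have hu : ∀ j ∈ Finset.Icc 1 N, u j = ∑ k ∈ Finset.Icc 1 s,
      (Real.sqrt (lam k) * (f k 1 + dt * ∑ i ∈ Finset.Icc 2 j, f k i)) • φ k := by
    have key : ∀ j, 1 ≤ j → j ≤ N → u j = ∑ k ∈ Finset.Icc 1 s,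
        (Real.sqrt (lam k) * (f k 1 + dt * ∑ i ∈ Finset.Icc 2 j, f k i)) • φ k := by
      intro j
      induction j with
      | zero => intro h; omega
      | succ n ih =>
        intro h1 h2
        rcases Nat.lt_or_ge n 1 with h | h
        · have hn : n = 0 := by omega
          subst hn
          rw [← hw1, hsvd 1 (by rw [Finset.mem_Icc]; omega)]
          apply Finset.sum_congr rfl
          intro k _
          congr 1
          rw [show Finset.Icc 2 1 = (∅ : Finset ℕ) by rfl, Finset.sum_empty, mul_zero, add_zero]
        · have h2n : n ≤ N := by omega
          have hwn := hwj n (by rw [Finset.mem_Icc]; omega)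
          rw [fdiff] at hwn
          have hstep : u (n + 1) = u n + dt • w (n + 1) := by
            rw [hwn, smul_smul, mul_inv_cancel₀ hdtpos.ne', one_smul]
            abel
          rw [hstep, ih h h2n, hsvd (n + 1) (by rw [Finset.mem_Icc]; omega),
            Finset.smul_sum, ← Finset.sum_add_distrib]
          apply Finset.sum_congr rfl
          intro k _
          rw [smul_smul, ← add_smul]
          congr 1
          rw [Finset.sum_Icc_succ_top (by omega : 2 ≤ n + 1)]
          ring
    intro j hj
    rw [Finset.mem_Icc] at hj
    exact key j hj.1 hj.2
  -- splitting sums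
  have hsplit : ∀ (F : ℕ → X), (∑ k ∈ Finset.Icc 1 s, F k)
      = (∑ k ∈ Finset.Icc 1 r, F k) + ∑ k ∈ Finset.Icc (r + 1) s, F k := by
    intro F
    have e0 : Finset.Icc 1 s = Finset.Ioc 0 s := by
      ext x; simp [Finset.mem_Icc, Finset.mem_Ioc]; omega
    have e1 : Finset.Icc 1 r = Finset.Ioc 0 r := by
      ext x; simp [Finset.mem_Icc, Finset.mem_Ioc]; omega
    have e2 : Finset.Icc (r + 1) s = Finset.Ioc r s := by
      ext x; simp [Finset.mem_Icc, Finset.mem_Ioc]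
    rw [e0, e1, e2, Finset.sum_Ioc_consecutive F (Nat.zero_le r) hrs]
  -- membership of partial sums in K
  have hmemK : ∀ (c : ℕ → ℝ), (∑ k ∈ Finset.Icc 1 r, c k • φ k) ∈ K := by
    intro c
    apply Submodule.sum_mem
    intro k hk
    apply Submodule.smul_mem
    apply Submodule.subset_span
    exact ⟨k, Set.mem_Icc.mpr (Finset.mem_Icc.mp hk), rfl⟩
  -- orthogonality of tail sums to K
  have horthK : ∀ (c : ℕ → ℝ), ∀ z ∈ K,
      ⟪∑ k ∈ Finset.Icc (r + 1) s, c k • φ k, z⟫ = 0 := by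
    intro c z hz
    induction hz using Submodule.span_induction with
    | mem x hx =>
      obtain ⟨i, hi, rfl⟩ := hx
      rw [Set.mem_Icc] at hi
      rw [sum_inner]
      apply Finset.sum_eq_zero
      intro k hk
      rw [Finset.mem_Icc] at hk
      rw [real_inner_smul_left,
        hφ k (by rw [Finset.mem_Icc]; omega) i (by rw [Finset.mem_Icc]; omega),
        if_neg (by omega), mul_zero]
    | zero => rw [inner_zero_right]
    | add x y hx hy ihx ihy => rw [inner_add_right, ihx, ihy, add_zero]
    | smul a x hx ihx => rw [real_inner_smul_right, ihx, mul_zero]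
  -- uniqueness characterization of Pr
  have huniq : ∀ x v, v ∈ K → (∀ z ∈ K, ⟪x - v, z⟫ = 0) → Pr x = v := by
    intro x v hv horth
    have hmem : Pr x - v ∈ K := Submodule.sub_mem _ (hPrmem x) hv
    have h0 : ⟪Pr x - v, Pr x - v⟫ = 0 := by
      have e1 : Pr x - v = (x - v) - (x - Pr x) := by abel
      nth_rewrite 1 [e1]
      rw [inner_sub_left, horth _ hmem, hProrth x _ hmem, sub_zero]
    have h1 : Pr x - v = 0 := inner_self_eq_zero.mp h0
    exact sub_eq_zero.mp h1
  -- error expansion for Pr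
  have hPru : ∀ j ∈ Finset.Icc 1 N, u j - Pr (u j) = ∑ k ∈ Finset.Icc (r + 1) s,
      (Real.sqrt (lam k) * (f k 1 + dt * ∑ i ∈ Finset.Icc 2 j, f k i)) • φ k := by
    intro j hj
    have hPrv : Pr (u j) = ∑ k ∈ Finset.Icc 1 r,
        (Real.sqrt (lam k) * (f k 1 + dt * ∑ i ∈ Finset.Icc 2 j, f k i)) • φ k := by
      apply huniq _ _ (hmemK _)
      intro z hz
      have : u j - (∑ k ∈ Finset.Icc 1 r,
          (Real.sqrt (lam k) * (f k 1 + dt * ∑ i ∈ Finset.Icc 2 j, f k i)) • φ k)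
          = ∑ k ∈ Finset.Icc (r + 1) s,
          (Real.sqrt (lam k) * (f k 1 + dt * ∑ i ∈ Finset.Icc 2 j, f k i)) • φ k := by
        rw [hu j hj, hsplit]
        abel
      rw [this]
      exact horthK _ z hz
    rw [hPrv, hu j hj, hsplit]
    abel
  -- error expansion for π
  have hπφ : ∀ k ∈ Finset.Icc 1 r, π (φ k) = φ k := by
    intro k hk
    have hmem : φ k ∈ LinearMap.range π := by
      rw [hπrange]
      exact Submodule.subset_span ⟨k, Set.mem_Icc.mpr (Finset.mem_Icc.mp hk), rfl⟩
    obtain ⟨y, hy⟩ := hmem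
    rw [← hy, hππ]
  have hπu : ∀ j ∈ Finset.Icc 1 N, u j - π (u j) = ∑ k ∈ Finset.Icc (r + 1) s,
      (Real.sqrt (lam k) * (f k 1 + dt * ∑ i ∈ Finset.Icc 2 j, f k i)) •
        (φ k - π (φ k)) := by
    intro j hj
    rw [hu j hj, map_sum, ← Finset.sum_sub_distrib]
    have step : ∀ k ∈ Finset.Icc 1 s,
        (Real.sqrt (lam k) * (f k 1 + dt * ∑ i ∈ Finset.Icc 2 j, f k i)) • φ k
          - π ((Real.sqrt (lam k) * (f k 1 + dt * ∑ i ∈ Finset.Icc 2 j, f k i)) • φ k)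
        = (Real.sqrt (lam k) * (f k 1 + dt * ∑ i ∈ Finset.Icc 2 j, f k i)) •
            (φ k - π (φ k)) := by
      intro k _
      rw [map_smul, smul_sub]
    rw [Finset.sum_congr rfl step, hsplit]
    have z1 : (∑ k ∈ Finset.Icc 1 r,
        (Real.sqrt (lam k) * (f k 1 + dt * ∑ i ∈ Finset.Icc 2 j, f k i)) •
          (φ k - π (φ k))) = 0 := by
      apply Finset.sum_eq_zero
      intro k hk
      rw [hπφ k hk, sub_self, smul_zero]
    rw [z1, zero_add]
  -- positivity of ipY
  have hYnn : ∀ x : X, 0 ≤ ipY x x := by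
    intro x
    by_cases hx : x = 0
    · subst hx; simp
    · exact (hYpos x hx).le
  refine ⟨?_, ?_, ?_⟩
  · have h := core (X := X) (innerₗ X)
      (fun x y => by
        rw [innerₗ_apply_apply, innerₗ_apply_apply]
        exact real_inner_comm y x)
      (fun x => by rw [innerₗ_apply_apply]; exact real_inner_self_nonneg)
      T hT N hN dt hdt γ hγ1 hγj s r lam hlam f hf φ
      (fun j => u j - Pr (u j)) hPru
    have l1 : ∀ j ∈ Finset.Icc 1 N, dt * ‖u j - Pr (u j)‖ ^ 2
        = dt * (innerₗ X) (u j - Pr (u j)) (u j - Pr (u j)) := by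
      intro j _
      rw [innerₗ_apply_apply, real_inner_self_eq_norm_sq]
    have l2 : ∀ k ∈ Finset.Icc (r + 1) s,
        lam k * (innerₗ X) (φ k) (φ k) = lam k := by
      intro k hk
      rw [Finset.mem_Icc] at hk
      rw [innerₗ_apply_apply,
        hφ k (by rw [Finset.mem_Icc]; omega) k (by rw [Finset.mem_Icc]; omega),
        if_pos rfl, mul_one]
    rw [Finset.sum_congr rfl l1, ← Finset.sum_congr rfl l2]
    exact h
  · exact core (X := X) ipY hYsymm hYnn
      T hT N hN dt hdt γ hγ1 hγj s r lam hlam f hf φ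
      (fun j => u j - Pr (u j)) hPru
  · exact core (X := X) ipY hYsymm hYnn
      T hT N hN dt hdt γ hγ1 hγj s r lam hlam f hf (fun k => φ k - π (φ k))
      (fun j => u j - π (u j)) hπu
end Aux
end

section
/- (DDQ POD extended data error formulas.) Let T > 0, N ≥ 3, Δt = T/(N−1), and u^1,…,u^N ∈ X. Suppose the POD decomposition hypothesis holds for the DDQ data set w^1 = u^1, w^2 = ∂u^1, and w^{j+1} = ∂∂u^j (j = 2,…,N−1) with weights γ_1 = γ_2 = 1 and γ_j = Δt for j = 3,…,N, with POD eigenvalues λ_k^{DDQ}, modes φ_k, and rank s. Then for 1 ≤ r ≤ s: (i) ‖u^1 − Π_r^X u^1‖_X² + ‖∂u^1 − Π_r^X ∂u^1‖_X² + Σ_{j=2}^{N−1} Δt ‖∂∂u^j − Π_r^X ∂∂u^j‖_X² = Σ_{k=r+1}^s λ_k^{DDQ}; (ii) if (·,·)_Y is a second inner product on X, the same left-hand side computed in the Y-norm equals Σ_{k=r+1}^s λ_k^{DDQ} ‖φ_k‖_Y²; (iii) if in addition π_r : X → X is a linear projection onto X_r (π_r∘π_r = π_r, range(π_r) = X_r),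 then ‖u^1 − π_r u^1‖_Y² + ‖∂u^1 − π_r ∂u^1‖_Y² + Σ_{j=2}^{N−1} Δt ‖∂∂u^j − π_r ∂∂u^j‖_Y² = Σ_{k=r+1}^s λ_k^{DDQ} ‖φ_k − π_r φ_k‖_Y². -/
open Finset RealInnerProductSpace

lemma key_sum {X : Type*} [AddCommGroup X] [Module ℝ X]
    (N s r : ℕ) (hrs : r ≤ s)
    (γ lamv : ℕ → ℝ) (f : ℕ → ℕ → ℝ) (ψ : ℕ → X) (v : ℕ → X)
    (hlam : ∀ k ∈ Finset.Icc 1 s, 0 ≤ lamv k)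
    (hf : ∀ k ∈ Finset.Icc 1 s, ∀ l ∈ Finset.Icc 1 s,
      (∑ j ∈ Finset.Icc 1 N, γ j * f k j * f l j) = if k = l then 1 else 0)
    (B : X →ₗ[ℝ] X →ₗ[ℝ] ℝ)
    (hv : ∀ j ∈ Finset.Icc 1 N, v j
      = ∑ k ∈ Finset.Icc 1 s, (Real.sqrt (lamv k) * f k j) • ψ k)
    (hψ0 : ∀ k ∈ Finset.Icc 1 r, ψ k = 0) :
    ∑ j ∈ Finset.Icc 1 N, γ j * B (v j) (v j)
      = ∑ k ∈ Finset.Icc (r+1) s, lamv k * B (ψ k) (ψ k) := by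
  have step1 : ∀ j ∈ Finset.Icc 1 N, γ j * B (v j) (v j)
      = ∑ k ∈ Finset.Icc 1 s, ∑ l ∈ Finset.Icc 1 s,
        (γ j * f k j * f l j) *
          (Real.sqrt (lamv k) * Real.sqrt (lamv l) * B (ψ k) (ψ l)) := by
    intro j hj
    rw [hv j hj, map_sum]
    simp only [LinearMap.map_smul, LinearMap.sum_apply, LinearMap.smul_apply,
      map_sum, map_smul, smul_eq_mul, Finset.mul_sum]
    rw [Finset.sum_comm]
    refine Finset.sum_congr rfl fun k _ => Finset.sum_congr rfl fun l _ => by ring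
  rw [Finset.sum_congr rfl step1, Finset.sum_comm]
  have step2 : ∀ k ∈ Finset.Icc 1 s,
      ∑ j ∈ Finset.Icc 1 N, ∑ l ∈ Finset.Icc 1 s,
        (γ j * f k j * f l j) *
          (Real.sqrt (lamv k) * Real.sqrt (lamv l) * B (ψ k) (ψ l))
      = lamv k * B (ψ k) (ψ k) := by
    intro k hk
    rw [Finset.sum_comm]
    have : ∀ l ∈ Finset.Icc 1 s,
        ∑ j ∈ Finset.Icc 1 N, (γ j * f k j * f l j) *
          (Real.sqrt (lamv k) * Real.sqrt (lamv l) * B (ψ k) (ψ l))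
        = (if k = l then 1 else 0) *
          (Real.sqrt (lamv k) * Real.sqrt (lamv l) * B (ψ k) (ψ l)) := by
      intro l hl
      rw [← Finset.sum_mul, hf k hk l hl]
    rw [Finset.sum_congr rfl this]
    have hmem := hk
    simp only [ite_mul, zero_mul, one_mul]
    rw [Finset.sum_ite_eq (Finset.Icc 1 s) k
      (fun l => Real.sqrt (lamv k) * Real.sqrt (lamv l) * B (ψ k) (ψ l))]
    rw [if_pos hk, Real.mul_self_sqrt (hlam k hk)]
  rw [Finset.sum_congr rfl step2]
  have hsplit : Finset.Icc 1 s = Finset.Icc 1 r ∪ Finset.Icc (r+1) s := by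
    ext x; simp [Finset.mem_Icc, Finset.mem_union]; omega
  rw [hsplit, Finset.sum_union (by
    simp only [Finset.disjoint_left, Finset.mem_Icc]; omega)]
  have : ∑ k ∈ Finset.Icc 1 r, lamv k * B (ψ k) (ψ k) = 0 := by
    refine Finset.sum_eq_zero fun k hk => ?_
    rw [hψ0 k hk]; simp
  rw [this, zero_add]

lemma lhs_split (N : ℕ) (hN : 3 ≤ N) (dt : ℝ) (γ : ℕ → ℝ)
    (hγ1 : γ 1 = 1) (hγ2 : γ 2 = 1)
    (hγj : ∀ j ∈ Finset.Icc 3 N, γ j = dt) (c : ℕ → ℝ) :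
    ∑ j ∈ Finset.Icc 1 N, γ j * c j
      = c 1 + c 2 + ∑ j ∈ Finset.Icc 2 (N - 1), dt * c (j + 1) := by
  rw [show Finset.Icc 1 N = Finset.Ioc 0 N from Finset.Icc_add_one_left_eq_Ioc 0 N]
  rw [← Finset.sum_Ioc_consecutive (fun j => γ j * c j)
    (show (0:ℕ) ≤ 2 by omega) (show 2 ≤ N by omega)]
  have hA : ∑ j ∈ Finset.Ioc 0 2, γ j * c j = c 1 + c 2 := by
    have h2 : Finset.Ioc 0 2 = {1, 2} := by decide
    rw [h2, Finset.sum_pair (by decide : (1:ℕ) ≠ 2), hγ1, hγ2]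
    ring
  have hB : ∑ j ∈ Finset.Ioc 2 N, γ j * c j
      = ∑ j ∈ Finset.Icc 2 (N - 1), dt * c (j + 1) := by
    rw [show Finset.Ioc 2 N = Finset.Icc 3 N from (Finset.Icc_add_one_left_eq_Ioc 2 N).symm]
    rw [Finset.sum_congr rfl (fun j hj => by rw [hγj j hj])]
    refine Finset.sum_nbij' (fun j => j - 1) (fun j => j + 1) ?_ ?_ ?_ ?_ ?_
    · intro a ha; simp only [Finset.mem_coe, Finset.mem_Icc] at *; omega
    · intro a ha; simp only [Finset.mem_coe, Finset.mem_Icc] at *; omega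
    · intro a ha; simp only [Finset.mem_Icc] at ha; show a - 1 + 1 = a; omega
    · intro a ha; simp only [Finset.mem_Icc] at ha; show a + 1 - 1 = a; omega
    · intro a ha; simp only [Finset.mem_Icc] at ha
      show dt * c a = dt * c (a - 1 + 1)
      congr 2; omega
  rw [hA, hB]

lemma proj_unique {X : Type*} [NormedAddCommGroup X] [InnerProductSpace ℝ X]
    (V : Submodule ℝ X) (x p q : X) (hp : p ∈ V) (hq : q ∈ V)
    (hp' : ∀ v ∈ V, ⟪x - p, v⟫ = 0) (hq' : ∀ v ∈ V, ⟪x - q, v⟫ = 0) : p = q := by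
  have hmem : q - p ∈ V := Submodule.sub_mem V hq hp
  have h1 := hp' (q - p) hmem
  have h2 := hq' (q - p) hmem
  have h : ⟪q - p, q - p⟫ = 0 := by
    have : ⟪(x - p) - (x - q), q - p⟫ = 0 := by
      rw [inner_sub_left, h1, h2]; ring
    simpa [show x - p - (x - q) = q - p by abel] using this
  have := inner_self_eq_zero.mp h
  have := sub_eq_zero.mp this
  exact this.symm

noncomputable def realInnerBilin (X : Type*) [NormedAddCommGroup X]
    [InnerProductSpace ℝ X] : X →ₗ[ℝ] X →ₗ[ℝ] ℝ :=
  LinearMap.mk₂ ℝ (fun x y => ⟪x, y⟫)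
    (fun x y z => inner_add_left x y z)
    (fun c x y => by rw [real_inner_smul_left, smul_eq_mul])
    (fun x y z => inner_add_right x y z)
    (fun c x y => by rw [real_inner_smul_right, smul_eq_mul])

lemma realInnerBilin_apply {X : Type*} [NormedAddCommGroup X]
    [InnerProductSpace ℝ X] (x y : X) : realInnerBilin X x y = ⟪x, y⟫ := rfl

theorem stmt_7
    {X : Type*} [NormedAddCommGroup X] [InnerProductSpace ℝ X] [CompleteSpace X]
    (T : ℝ) (hT : 0 < T) (N : ℕ) (hN : 3 ≤ N)
    (dt : ℝ) (hdt : dt = T / ((N : ℝ) - 1))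
    (u w : ℕ → X) (γ : ℕ → ℝ)
    (hw1 : w 1 = u 1) (hw2 : w 2 = fdiff dt u 1)
    (hwj : ∀ j ∈ Finset.Icc 2 (N - 1), w (j + 1) = ddq dt u j)
    (hγ1 : γ 1 = 1) (hγ2 : γ 2 = 1) (hγj : ∀ j ∈ Finset.Icc 3 N, γ j = dt)
    (s : ℕ) (lam : ℕ → ℝ) (φ : ℕ → X) (f : ℕ → ℕ → ℝ)
    (hlam : ∀ k ∈ Finset.Icc 1 s, 0 < lam k)
    (hφ : ∀ k ∈ Finset.Icc 1 s, ∀ l ∈ Finset.Icc 1 s,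
      ⟪φ k, φ l⟫ = if k = l then 1 else 0)
    (hf : ∀ k ∈ Finset.Icc 1 s, ∀ l ∈ Finset.Icc 1 s,
      (∑ j ∈ Finset.Icc 1 N, γ j * f k j * f l j) = if k = l then 1 else 0)
    (hsvd : ∀ j ∈ Finset.Icc 1 N,
      w j = ∑ k ∈ Finset.Icc 1 s, (Real.sqrt (lam k) * f k j) • φ k)
    (r : ℕ) (hr1 : 1 ≤ r) (hrs : r ≤ s)
    (Pr : X → X)
    (hPrmem : ∀ x, Pr x ∈ Submodule.span ℝ (φ '' Set.Icc 1 r))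
    (hProrth : ∀ x, ∀ v ∈ Submodule.span ℝ (φ '' Set.Icc 1 r),
      ⟪x - Pr x, v⟫ = 0)
    (ipY : X →ₗ[ℝ] X →ₗ[ℝ] ℝ)
    (hYsymm : ∀ x y, ipY x y = ipY y x)
    (hYpos : ∀ x : X, x ≠ 0 → 0 < ipY x x)
    (π : X →ₗ[ℝ] X)
    (hππ : ∀ x, π (π x) = π x)
    (hπrange : LinearMap.range π = Submodule.span ℝ (φ '' Set.Icc 1 r)) :
    (‖u 1 - Pr (u 1)‖ ^ 2 + ‖fdiff dt u 1 - Pr (fdiff dt u 1)‖ ^ 2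
        + ∑ j ∈ Finset.Icc 2 (N - 1), dt * ‖ddq dt u j - Pr (ddq dt u j)‖ ^ 2
      = ∑ k ∈ Finset.Icc (r + 1) s, lam k)
    ∧ (ipY (u 1 - Pr (u 1)) (u 1 - Pr (u 1))
        + ipY (fdiff dt u 1 - Pr (fdiff dt u 1)) (fdiff dt u 1 - Pr (fdiff dt u 1))
        + ∑ j ∈ Finset.Icc 2 (N - 1),
            dt * ipY (ddq dt u j - Pr (ddq dt u j)) (ddq dt u j - Pr (ddq dt u j))
      = ∑ k ∈ Finset.Icc (r + 1) s, lam k * ipY (φ k) (φ k))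
    ∧ (ipY (u 1 - π (u 1)) (u 1 - π (u 1))
        + ipY (fdiff dt u 1 - π (fdiff dt u 1)) (fdiff dt u 1 - π (fdiff dt u 1))
        + ∑ j ∈ Finset.Icc 2 (N - 1),
            dt * ipY (ddq dt u j - π (ddq dt u j)) (ddq dt u j - π (ddq dt u j))
      = ∑ k ∈ Finset.Icc (r + 1) s, lam k * ipY (φ k - π (φ k)) (φ k - π (φ k))) := by
  have hPradd : ∀ x y, Pr (x + y) = Pr x + Pr y := by
    intro x y
    refine proj_unique (Submodule.span ℝ (φ '' Set.Icc 1 r)) (x + y) _ _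
      (hPrmem _) (Submodule.add_mem _ (hPrmem x) (hPrmem y)) (hProrth _) ?_
    intro v hv
    rw [show x + y - (Pr x + Pr y) = (x - Pr x) + (y - Pr y) by abel,
      inner_add_left, hProrth x v hv, hProrth y v hv]
    ring
  have hPrsmul : ∀ (a : ℝ) (x : X), Pr (a • x) = a • Pr x := by
    intro a x
    refine proj_unique (Submodule.span ℝ (φ '' Set.Icc 1 r)) (a • x) _ _
      (hPrmem _) (Submodule.smul_mem _ a (hPrmem x)) (hProrth _) ?_
    intro v hv
    rw [show a • x - a • Pr x = a • (x - Pr x) from (smul_sub a x (Pr x)).symm,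
      real_inner_smul_left, hProrth x v hv, mul_zero]
  set Epr : X →ₗ[ℝ] X :=
    { toFun := fun x => x - Pr x
      map_add' := fun x y => by rw [hPradd]; abel
      map_smul' := fun a x => by dsimp only [RingHom.id_apply]; rw [hPrsmul]; simp [smul_sub] } with hEprdef
  have hφV : ∀ k, 1 ≤ k → k ≤ r → φ k ∈ Submodule.span ℝ (φ '' Set.Icc 1 r) :=
    fun k h1 h2 => Submodule.subset_span ⟨k, ⟨h1, h2⟩, rfl⟩
  have hElo : ∀ k ∈ Finset.Icc 1 r, Epr (φ k) = 0 := by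
    intro k hk
    simp only [Finset.mem_Icc] at hk
    have h : Pr (φ k) = φ k :=
      proj_unique (Submodule.span ℝ (φ '' Set.Icc 1 r)) (φ k) _ _
        (hPrmem _) (hφV k hk.1 hk.2) (hProrth _) (fun v hv => by simp)
    show φ k - Pr (φ k) = 0
    rw [h, sub_self]
  have hperp : ∀ k ∈ Finset.Icc (r+1) s,
      ∀ v ∈ Submodule.span ℝ (φ '' Set.Icc 1 r), ⟪φ k, v⟫ = 0 := by
    intro k hk v hv
    simp only [Finset.mem_Icc] at hk
    induction hv using Submodule.span_induction with
    | mem y hy =>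
      obtain ⟨l, hl, rfl⟩ := hy
      simp only [Set.mem_Icc] at hl
      rw [hφ k (by simp only [Finset.mem_Icc]; omega) l
        (by simp only [Finset.mem_Icc]; omega), if_neg (by omega)]
    | zero => simp
    | add x y hx hy ihx ihy => rw [inner_add_right, ihx, ihy]; ring
    | smul a x hx ihx => rw [real_inner_smul_right, ihx]; ring
  have hEhi : ∀ k ∈ Finset.Icc (r+1) s, Epr (φ k) = φ k := by
    intro k hk
    have h0 : Pr (φ k) = 0 :=
      proj_unique (Submodule.span ℝ (φ '' Set.Icc 1 r)) (φ k) _ _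
        (hPrmem _) (Submodule.zero_mem _) (hProrth _)
        (fun v hv => by rw [sub_zero]; exact hperp k hk v hv)
    show φ k - Pr (φ k) = φ k
    rw [h0, sub_zero]
  set Eπ : X →ₗ[ℝ] X := LinearMap.id - π with hEπdef
  have hπlo : ∀ k ∈ Finset.Icc 1 r, Eπ (φ k) = 0 := by
    intro k hk
    simp only [Finset.mem_Icc] at hk
    have hmem : φ k ∈ LinearMap.range π := by
      rw [hπrange]; exact hφV k hk.1 hk.2
    obtain ⟨y, hy⟩ := hmem
    show φ k - π (φ k) = 0
    rw [← hy, hππ, sub_self]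
  have main : ∀ (B : X →ₗ[ℝ] X →ₗ[ℝ] ℝ) (E : X →ₗ[ℝ] X),
      (∀ k ∈ Finset.Icc 1 r, E (φ k) = 0) →
      B (E (u 1)) (E (u 1)) + B (E (fdiff dt u 1)) (E (fdiff dt u 1))
        + ∑ j ∈ Finset.Icc 2 (N - 1), dt * B (E (ddq dt u j)) (E (ddq dt u j))
      = ∑ k ∈ Finset.Icc (r+1) s, lam k * B (E (φ k)) (E (φ k)) := by
    intro B E hE0
    have hEw : ∀ j ∈ Finset.Icc 1 N,
        E (w j) = ∑ k ∈ Finset.Icc 1 s, (Real.sqrt (lam k) * f k j) • E (φ k) := by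
      intro j hj
      rw [hsvd j hj, map_sum]
      exact Finset.sum_congr rfl fun k _ => map_smul E _ _
    have hkey := key_sum N s r hrs γ lam f (fun k => E (φ k)) (fun j => E (w j))
      (fun k hk => (hlam k hk).le) hf B hEw hE0
    have hls := lhs_split N hN dt γ hγ1 hγ2 hγj (fun j => B (E (w j)) (E (w j)))
    rw [← hkey, hls]
    rw [hw1, hw2]
    congr 1
    exact Finset.sum_congr rfl fun j hj => by rw [hwj j hj]
  have hEpr_apply : ∀ x, Epr x = x - Pr x := fun x => by rw [hEprdef]; rfl
  have hEπ_apply : ∀ x, Eπ x = x - π x := fun x => by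
    rw [hEπdef]; simp [LinearMap.sub_apply]
  refine ⟨?_, ?_, ?_⟩
  · have h1 := main (realInnerBilin X) Epr hElo
    simp only [realInnerBilin_apply, hEpr_apply] at h1
    simp only [← real_inner_self_eq_norm_sq]
    rw [h1]
    refine Finset.sum_congr rfl fun k hk => ?_
    have he := hEhi k hk
    rw [hEpr_apply] at he
    rw [he]
    have hk' : k ∈ Finset.Icc 1 s := by
      simp only [Finset.mem_Icc] at *; omega
    rw [hφ k hk' k hk', if_pos rfl, mul_one]
  · have h2 := main ipY Epr hElo
    simp only [hEpr_apply] at h2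
    rw [h2]
    refine Finset.sum_congr rfl fun k hk => ?_
    have he := hEhi k hk
    rw [hEpr_apply] at he
    rw [he]
  · have h3 := main ipY Eπ hπlo
    simp only [hEπ_apply] at h3
    exact h3
end

section
/- (Pointwise bound for a general sequence via second difference quotients.) Let T > 0, N ≥ 3 an integer, Z a normed space, z^1,…,z^N ∈ Z, and Δt = T/(N−1). Then max_{1≤j≤N} ‖z^j‖_Z² ≤ C₂ ( ‖z^1‖_Z² + ‖∂z^1‖_Z² + Σ_{i=2}^{N−1} Δt ‖∂∂z^i‖_Z² ), where C₂ = 3 max{T³, 1}. -/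
open Finset RealInnerProductSpace

theorem stmt_10
    {Z : Type*} [NormedAddCommGroup Z] [NormedSpace ℝ Z]
    (T : ℝ) (hT : 0 < T) (N : ℕ) (hN : 3 ≤ N)
    (z : ℕ → Z) (dt : ℝ) (hdt : dt = T / ((N : ℝ) - 1)) :
    ∀ j ∈ Finset.Icc 1 N,
      ‖z j‖ ^ 2 ≤ 3 * max (T ^ 3) 1 *
        (‖z 1‖ ^ 2 + ‖fdiff dt z 1‖ ^ 2
          + ∑ i ∈ Finset.Icc 2 (N - 1), dt * ‖ddq dt z i‖ ^ 2) := by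
  have hN1 : (0:ℝ) < (N:ℝ) - 1 := by
    have : (3:ℝ) ≤ (N:ℝ) := by exact_mod_cast hN
    linarith
  have hdtpos : 0 < dt := by rw [hdt]; positivity
  have hdtne : dt ≠ 0 := ne_of_gt hdtpos
  have hdtT : dt * ((N:ℝ) - 1) = T := by
    rw [hdt]; field_simp
  set b := ‖fdiff dt z 1‖ with hb
  set S := ∑ i ∈ Finset.Icc 2 (N-1), dt * ‖ddq dt z i‖ ^ 2 with hSdef
  have hSnn : 0 ≤ S := Finset.sum_nonneg fun i _ => by positivity
  set M := ∑ i ∈ Finset.Icc 2 (N-1), dt * ‖ddq dt z i‖ with hMdef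
  have hMnn : 0 ≤ M := Finset.sum_nonneg fun i _ => by positivity
  have hnormsmul : ∀ v : Z, ‖dt • v‖ = dt * ‖v‖ := fun v => by
    rw [norm_smul, Real.norm_eq_abs, abs_of_pos hdtpos]
  -- telescoping for fdiff
  have hstep : ∀ k : ℕ, fdiff dt z (k+2) = fdiff dt z (k+1) + dt • ddq dt z (k+2) := by
    intro k
    simp only [fdiff, ddq]
    have h1 : (k+2) - 1 = k+1 := rfl
    rw [h1, smul_smul]
    have h2 : dt * (dt^2)⁻¹ = dt⁻¹ := by field_simp
    rw [h2]
    module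
  have hfd : ∀ k : ℕ, fdiff dt z (k+1) = fdiff dt z 1 + ∑ i ∈ Finset.Icc 2 (k+1), dt • ddq dt z i := by
    intro k
    induction k with
    | zero => simp
    | succ n ih =>
      rw [show n+1+1 = n+2 from rfl, hstep n, ih,
        Finset.sum_Icc_succ_top (by omega : 2 ≤ n+1+1)]
      abel
  have hfdbd : ∀ k : ℕ, 1 ≤ k → k ≤ N - 1 → ‖fdiff dt z k‖ ≤ b + M := by
    intro k hk1 hk2
    obtain ⟨m, rfl⟩ : ∃ m, k = m + 1 := ⟨k - 1, by omega⟩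
    rw [hfd m]
    calc ‖fdiff dt z 1 + ∑ i ∈ Finset.Icc 2 (m+1), dt • ddq dt z i‖
        ≤ b + ‖∑ i ∈ Finset.Icc 2 (m+1), dt • ddq dt z i‖ := norm_add_le _ _
      _ ≤ b + ∑ i ∈ Finset.Icc 2 (m+1), ‖dt • ddq dt z i‖ := by
          gcongr; exact norm_sum_le _ _
      _ = b + ∑ i ∈ Finset.Icc 2 (m+1), dt * ‖ddq dt z i‖ := by
          simp only [hnormsmul]
      _ ≤ b + M := by
          gcongr
          exact Finset.sum_le_sum_of_subset_of_nonneg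
            (Finset.Icc_subset_Icc_right (by omega)) (fun i _ _ => by positivity)
  -- telescoping for z
  have hzstep : ∀ k : ℕ, z (k+1) = z k + dt • fdiff dt z k := by
    intro k
    simp only [fdiff, smul_smul, mul_inv_cancel₀ hdtne, one_smul]
    abel
  have hzsum : ∀ m : ℕ, z (m+1) = z 1 + ∑ i ∈ Finset.Icc 1 m, dt • fdiff dt z i := by
    intro m
    induction m with
    | zero => simp
    | succ n ih =>
      rw [hzstep (n+1), ih, Finset.sum_Icc_succ_top (by omega : 1 ≤ n+1)]
      abel
  -- Cauchy-Schwarz : M^2 ≤ T * S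
  have hcard : ((Finset.Icc 2 (N-1)).card : ℝ) * dt ≤ T := by
    rw [Nat.card_Icc]
    have h1 : ((N - 1 + 1 - 2 : ℕ) : ℝ) ≤ (N:ℝ) - 1 := by
      have : (N - 1 + 1 - 2 : ℕ) = N - 2 := by omega
      rw [this]
      have h2 : ((N - 2 : ℕ) : ℝ) = (N:ℝ) - 2 := by
        have : (2:ℕ) ≤ N := by omega
        push_cast [this]; ring
      rw [h2]; linarith
    calc ((N - 1 + 1 - 2 : ℕ) : ℝ) * dt ≤ ((N:ℝ) - 1) * dt := by
          gcongr
      _ = T := by rw [mul_comm]; exact hdtT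
  have hCS : M ^ 2 ≤ T * S := by
    have h1 : M = ∑ i ∈ Finset.Icc 2 (N-1), Real.sqrt dt * (Real.sqrt dt * ‖ddq dt z i‖) := by
      refine Finset.sum_congr rfl fun i _ => ?_
      rw [← mul_assoc, Real.mul_self_sqrt hdtpos.le]
    have h2 := Finset.sum_mul_sq_le_sq_mul_sq (Finset.Icc 2 (N-1))
      (fun _ => Real.sqrt dt) (fun i => Real.sqrt dt * ‖ddq dt z i‖)
    have h3 : ∑ _i ∈ Finset.Icc 2 (N-1), Real.sqrt dt ^ 2 = ((Finset.Icc 2 (N-1)).card : ℝ) * dt := by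
      rw [Finset.sum_const, Real.sq_sqrt hdtpos.le, nsmul_eq_mul]
    have h4 : ∑ i ∈ Finset.Icc 2 (N-1), (Real.sqrt dt * ‖ddq dt z i‖) ^ 2 = S := by
      refine Finset.sum_congr rfl fun i _ => ?_
      rw [mul_pow, Real.sq_sqrt hdtpos.le]
    rw [h1]
    calc (∑ i ∈ Finset.Icc 2 (N-1), Real.sqrt dt * (Real.sqrt dt * ‖ddq dt z i‖)) ^ 2
        ≤ (∑ _i ∈ Finset.Icc 2 (N-1), Real.sqrt dt ^ 2) *
          ∑ i ∈ Finset.Icc 2 (N-1), (Real.sqrt dt * ‖ddq dt z i‖) ^ 2 := h2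
      _ = ((Finset.Icc 2 (N-1)).card : ℝ) * dt * S := by rw [h3, h4]
      _ ≤ T * S := by gcongr
  -- main bound
  intro j hj
  rw [Finset.mem_Icc] at hj
  obtain ⟨m, rfl⟩ : ∃ m, j = m + 1 := ⟨j - 1, by omega⟩
  have hmN : (m:ℝ) ≤ (N:ℝ) - 1 := by
    have : m ≤ N - 1 := by omega
    have h2 : ((N - 1 : ℕ):ℝ) = (N:ℝ) - 1 := by
      have : (1:ℕ) ≤ N := by omega
      push_cast [this]; ring
    calc (m:ℝ) ≤ ((N-1:ℕ):ℝ) := by exact_mod_cast this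
      _ = (N:ℝ) - 1 := h2
  have hzbd : ‖z (m+1)‖ ≤ ‖z 1‖ + T * (b + M) := by
    rw [hzsum m]
    calc ‖z 1 + ∑ i ∈ Finset.Icc 1 m, dt • fdiff dt z i‖
        ≤ ‖z 1‖ + ‖∑ i ∈ Finset.Icc 1 m, dt • fdiff dt z i‖ := norm_add_le _ _
      _ ≤ ‖z 1‖ + ∑ i ∈ Finset.Icc 1 m, ‖dt • fdiff dt z i‖ := by
          gcongr; exact norm_sum_le _ _
      _ ≤ ‖z 1‖ + ∑ i ∈ Finset.Icc 1 m, dt * (b + M) := by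
          gcongr with i hi
          rw [hnormsmul]
          rw [Finset.mem_Icc] at hi
          have := hfdbd i hi.1 (by omega)
          exact mul_le_mul_of_nonneg_left this hdtpos.le
      _ = ‖z 1‖ + (m:ℝ) * (dt * (b + M)) := by
          rw [Finset.sum_const, Nat.card_Icc, nsmul_eq_mul]
          norm_num
      _ ≤ ‖z 1‖ + T * (b + M) := by
          have : (m:ℝ) * (dt * (b + M)) ≤ ((N:ℝ)-1) * (dt * (b + M)) := by
            apply mul_le_mul_of_nonneg_right hmN
            positivity
          calc (‖z 1‖ : ℝ) + (m:ℝ) * (dt * (b + M)) ≤ ‖z 1‖ + ((N:ℝ)-1) * (dt * (b + M)) := by linarith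
            _ = ‖z 1‖ + T * (b + M) := by rw [← hdtT]; ring
  set a := ‖z 1‖ with ha
  have hann : 0 ≤ a := norm_nonneg _
  have hbnn : 0 ≤ b := norm_nonneg _
  set C := max (T^3) 1 with hC
  have hC1 : (1:ℝ) ≤ C := le_max_right _ _
  have hC3 : T^3 ≤ C := le_max_left _ _
  have hC2 : T^2 ≤ C := by
    rcases le_total T 1 with h | h
    · nlinarith
    · nlinarith
  have hzn : 0 ≤ ‖z (m+1)‖ := norm_nonneg _
  have h1 : (a + T*(b+M))^2 ≤ 3*(a^2 + T^2*b^2 + T^2*M^2) := by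
    nlinarith [sq_nonneg (a - T*b), sq_nonneg (a - T*M), sq_nonneg (T*b - T*M)]
  have h2 : T^2*M^2 ≤ C*S := by
    calc T^2*M^2 ≤ T^2*(T*S) := mul_le_mul_of_nonneg_left hCS (sq_nonneg T)
      _ = T^3*S := by ring
      _ ≤ C*S := mul_le_mul_of_nonneg_right hC3 hSnn
  have ha2 : a^2 ≤ C*a^2 := le_mul_of_one_le_left (sq_nonneg a) hC1
  have hb2 : T^2*b^2 ≤ C*b^2 := mul_le_mul_of_nonneg_right hC2 (sq_nonneg b)
  calc ‖z (m+1)‖^2 ≤ (a + T*(b+M))^2 := by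
        apply pow_le_pow_left₀ hzn hzbd
    _ ≤ 3*(a^2 + T^2*b^2 + T^2*M^2) := h1
    _ ≤ 3*(C*a^2 + C*b^2 + C*S) := by linarith
    _ = 3*C*(a^2 + b^2 + S) := by ring
end

section
/- (Pointwise bound for backward averages via second difference quotients.) Let T > 0, N ≥ 3 an integer, Z a normed space, z^1,…,z^N ∈ Z, and Δt = T/(N−1). Then max_{2≤j≤N} ‖z̄^j‖_Z² ≤ C₂ ( ‖z^1‖_Z² + ‖∂z^1‖_Z² + Σ_{i=2}^{N−1} Δt ‖∂∂z^i‖_Z² ), where z̄^j = (z^j + z^{j−1})/2 and C₂ = 3 max{T³, 1}. -/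
open Finset RealInnerProductSpace

lemma sq3aux (a b c : ℝ) : (a + b + c) ^ 2 ≤ 3 * (a^2 + b^2 + c^2) := by
  nlinarith [sq_nonneg (a - b), sq_nonneg (a - c), sq_nonneg (b - c)]

set_option maxHeartbeats 1000000 in
theorem stmt_11
    {Z : Type*} [NormedAddCommGroup Z] [NormedSpace ℝ Z]
    (T : ℝ) (hT : 0 < T) (N : ℕ) (hN : 3 ≤ N)
    (z : ℕ → Z) (dt : ℝ) (hdt : dt = T / ((N : ℝ) - 1)) :
    ∀ j ∈ Finset.Icc 2 N,
      ‖bavg z j‖ ^ 2 ≤ 3 * max (T ^ 3) 1 *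
        (‖z 1‖ ^ 2 + ‖fdiff dt z 1‖ ^ 2
          + ∑ i ∈ Finset.Icc 2 (N - 1), dt * ‖ddq dt z i‖ ^ 2) := by
  intro j hj
  rw [Finset.mem_Icc] at hj
  have hN3 : (3:ℝ) ≤ (N:ℝ) := by exact_mod_cast hN
  have hNpos : (0:ℝ) < (N:ℝ) - 1 := by linarith
  have hdt0 : 0 < dt := by rw [hdt]; exact div_pos hT hNpos
  have hdtT : dt * ((N:ℝ) - 1) = T := by
    rw [hdt]; field_simp
  set D := ‖z 1‖ with hD
  set E := ‖fdiff dt z 1‖ with hE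
  set A := ∑ i ∈ Finset.Icc 2 (N-1), dt * ‖ddq dt z i‖ with hA
  set S := ∑ i ∈ Finset.Icc 2 (N-1), dt * ‖ddq dt z i‖ ^ 2 with hS
  have hDnn : 0 ≤ D := norm_nonneg _
  have hEnn : 0 ≤ E := norm_nonneg _
  have hAnn : 0 ≤ A := Finset.sum_nonneg fun i _ => by positivity
  have hSnn : 0 ≤ S := Finset.sum_nonneg fun i _ => by positivity
  have hstep : ∀ k : ℕ, 1 ≤ k → fdiff dt z (k+1) = fdiff dt z k + dt • ddq dt z (k+1) := by
    intro k hk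
    have h1 : k + 1 - 1 = k := rfl
    simp only [fdiff, ddq, h1]
    match_scalars <;> (field_simp; try ring)
  have key : ∀ k : ℕ, 1 ≤ k → ‖fdiff dt z k‖ ≤ E + ∑ i ∈ Finset.Icc 2 k, dt * ‖ddq dt z i‖ := by
    intro k hk
    induction k with
    | zero => omega
    | succ n ih =>
      rcases Nat.lt_or_ge 1 (n+1) with h | h
      · have hn : 1 ≤ n := by omega
        have hih := ih hn
        rw [hstep n hn]
        calc ‖fdiff dt z n + dt • ddq dt z (n+1)‖
            ≤ ‖fdiff dt z n‖ + ‖dt • ddq dt z (n+1)‖ := norm_add_le _ _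
          _ ≤ (E + ∑ i ∈ Finset.Icc 2 n, dt * ‖ddq dt z i‖) + dt * ‖ddq dt z (n+1)‖ := by
              rw [norm_smul, Real.norm_eq_abs, abs_of_pos hdt0]
              exact add_le_add_left hih _
          _ = E + ∑ i ∈ Finset.Icc 2 (n+1), dt * ‖ddq dt z i‖ := by
              rw [Finset.sum_Icc_succ_top (by omega : 2 ≤ n + 1)]
              ring
      · have hn0 : n = 0 := by omega
        subst hn0
        simp [hE]
  have hfd : ∀ k : ℕ, 1 ≤ k → k ≤ N - 1 → ‖fdiff dt z k‖ ≤ E + A := by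
    intro k hk hkN
    refine (key k hk).trans (add_le_add_right ?_ E)
    rw [hA]
    apply Finset.sum_le_sum_of_subset_of_nonneg (Finset.Icc_subset_Icc_right hkN)
    intro i _ _
    positivity
  have hzstep : ∀ m : ℕ, z (m+2) = z (m+1) + dt • fdiff dt z (m+1) := by
    intro m
    simp only [fdiff]
    rw [smul_smul, mul_inv_cancel₀ hdt0.ne', one_smul]
    abel
  have hz : ∀ m : ℕ, ‖z (m+1)‖ ≤ D + ∑ k ∈ Finset.Icc 1 m, dt * ‖fdiff dt z k‖ := by
    intro m
    induction m with
    | zero => simp [hD]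
    | succ n ih =>
      rw [hzstep n]
      have hns : ‖dt • fdiff dt z (n+1)‖ = dt * ‖fdiff dt z (n+1)‖ := by
        rw [norm_smul, Real.norm_eq_abs, abs_of_pos hdt0]
      calc ‖z (n+1) + dt • fdiff dt z (n+1)‖
          ≤ ‖z (n+1)‖ + dt * ‖fdiff dt z (n+1)‖ := by
            rw [← hns]; exact norm_add_le _ _
        _ ≤ (D + ∑ k ∈ Finset.Icc 1 n, dt * ‖fdiff dt z k‖) + dt * ‖fdiff dt z (n+1)‖ :=
            add_le_add_left ih _
        _ = D + ∑ k ∈ Finset.Icc 1 (n+1), dt * ‖fdiff dt z k‖ := by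
            rw [Finset.sum_Icc_succ_top (by omega : 1 ≤ n + 1)]
            ring
  have hEA : 0 ≤ E + A := by linarith
  have hzb : ∀ i : ℕ, 1 ≤ i → i ≤ N → ‖z i‖ ≤ D + T * (E + A) := by
    intro i hi hiN
    obtain ⟨m, rfl⟩ : ∃ m, i = m + 1 := ⟨i - 1, by omega⟩
    refine (hz m).trans ?_
    have hsum : ∑ k ∈ Finset.Icc 1 m, dt * ‖fdiff dt z k‖
        ≤ ∑ k ∈ Finset.Icc 1 m, dt * (E + A) := by
      apply Finset.sum_le_sum
      intro k hk
      rw [Finset.mem_Icc] at hk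
      exact mul_le_mul_of_nonneg_left (hfd k hk.1 (by omega)) hdt0.le
    have hcard : ∑ k ∈ Finset.Icc 1 m, dt * (E + A) = (m:ℝ) * (dt * (E + A)) := by
      rw [Finset.sum_const, Nat.card_Icc, nsmul_eq_mul]
      norm_num
    have hm : (m:ℝ) ≤ (N:ℝ) - 1 := by
      have : ((m:ℝ) + 1) ≤ (N:ℝ) := by exact_mod_cast hiN
      linarith
    have h2 : (m:ℝ) * (dt * (E + A)) ≤ ((N:ℝ) - 1) * (dt * (E + A)) :=
      mul_le_mul_of_nonneg_right hm (by positivity)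
    have h3 : ((N:ℝ) - 1) * (dt * (E + A)) = T * (E + A) := by
      rw [← hdtT]; ring
    linarith
  have hbavg : ‖bavg z j‖ ≤ D + T * (E + A) := by
    have h1 := hzb j (by omega) hj.2
    have h2 := hzb (j-1) (by omega) (by omega)
    calc ‖bavg z j‖ = 2⁻¹ * ‖z j + z (j-1)‖ := by
          rw [bavg, norm_smul, Real.norm_eq_abs]
          norm_num
      _ ≤ 2⁻¹ * (‖z j‖ + ‖z (j-1)‖) :=
          mul_le_mul_of_nonneg_left (norm_add_le _ _) (by norm_num)
      _ ≤ D + T * (E + A) := by linarith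
  have hAS : A ^ 2 ≤ T * S := by
    have hcs := sq_sum_le_card_mul_sum_sq (s := Finset.Icc 2 (N-1))
      (f := fun i => dt * ‖ddq dt z i‖)
    have hcard : ((Finset.Icc 2 (N-1)).card : ℝ) ≤ (N:ℝ) - 2 := by
      rw [Nat.card_Icc]
      have h1 : N - 1 + 1 - 2 = N - 2 := by omega
      rw [h1]
      have h2 : ((N - 2 : ℕ) : ℝ) = (N:ℝ) - 2 := by
        push_cast [Nat.cast_sub (by omega : 2 ≤ N)]
        ring
      exact le_of_eq h2
    have hsq : ∑ i ∈ Finset.Icc 2 (N-1), (dt * ‖ddq dt z i‖) ^ 2 = dt * S := by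
      rw [hS, Finset.mul_sum]
      apply Finset.sum_congr rfl
      intro i _
      ring
    rw [hsq] at hcs
    have hsqnn : 0 ≤ dt * S := mul_nonneg hdt0.le hSnn
    have hcs2 : A ^ 2 ≤ ((N:ℝ) - 2) * (dt * S) := by
      refine hcs.trans ?_
      exact mul_le_mul_of_nonneg_right hcard hsqnn
    refine hcs2.trans ?_
    nlinarith [mul_nonneg hdt0.le hSnn]
  set M := max (T^3) 1 with hM
  have hM1 : (1:ℝ) ≤ M := le_max_right _ _
  have hM3 : T^3 ≤ M := le_max_left _ _
  have hM2 : T^2 ≤ M := by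
    rcases le_total T 1 with h | h
    · exact le_trans (by nlinarith) hM1
    · exact le_trans (by nlinarith) hM3
  have hb2 : ‖bavg z j‖ ^ 2 ≤ (D + T * (E + A)) ^ 2 :=
    pow_le_pow_left₀ (norm_nonneg _) hbavg 2
  refine hb2.trans ?_
  have s1 : (D + T * (E + A)) ^ 2 ≤ 3 * (D^2 + (T*E)^2 + (T*A)^2) := by
    have h := sq3aux D (T*E) (T*A)
    calc (D + T * (E + A)) ^ 2 = (D + T*E + T*A) ^ 2 := by ring
      _ ≤ _ := h
  have s2 : (T*A)^2 ≤ M * S := by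
    have h1 : (T*A)^2 = T^2 * A^2 := by ring
    have h2 : T^2 * A^2 ≤ T^2 * (T * S) :=
      mul_le_mul_of_nonneg_left hAS (by positivity)
    have h3 : T^2 * (T*S) = T^3 * S := by ring
    have h4 : T^3 * S ≤ M * S := mul_le_mul_of_nonneg_right hM3 hSnn
    linarith [h1 ▸ h2, h3 ▸ h4]
  have s3 : (T*E)^2 ≤ M * E^2 := by
    have : (T*E)^2 = T^2 * E^2 := by ring
    rw [this]
    exact mul_le_mul_of_nonneg_right hM2 (sq_nonneg E)
  have s4 : D^2 ≤ M * D^2 := le_mul_of_one_le_left (sq_nonneg D) hM1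
  linarith
end

section
/- (Pointwise bound for forward differences via second difference quotients.) Let T > 0, N ≥ 3 an integer, Z a normed space, z^1,…,z^N ∈ Z, and Δt = T/(N−1). Then max_{1≤j≤N−1} ‖∂z^j‖_Z² ≤ C₃ ( ‖∂z^1‖_Z² + Σ_{i=2}^{N−1} Δt ‖∂∂z^i‖_Z² ), where C₃ = 2 max{T, 1}. -/
open Finset RealInnerProductSpace

lemma tele_aux {Z : Type*} [NormedAddCommGroup Z] [NormedSpace ℝ Z]
    (dt : ℝ) (hdt : dt ≠ 0) (z : ℕ → Z) :
    ∀ j, 1 ≤ j → fdiff dt z j = fdiff dt z 1 + ∑ i ∈ Finset.Icc 2 j, dt • ddq dt z i := by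
  intro j hj
  induction j, hj using Nat.le_induction with
  | base => simp
  | succ n hn ih =>
    rw [Finset.sum_Icc_succ_top (by omega), ← add_assoc, ← ih]
    simp only [fdiff, ddq]
    have h1 : n + 1 - 1 = n := rfl
    rw [h1, smul_smul]
    have h2 : dt * (dt ^ 2)⁻¹ = dt⁻¹ := by field_simp [sq]
    rw [h2, ← smul_add]
    module

theorem stmt_12
    {Z : Type*} [NormedAddCommGroup Z] [NormedSpace ℝ Z]
    (T : ℝ) (hT : 0 < T) (N : ℕ) (hN : 3 ≤ N)
    (z : ℕ → Z) (dt : ℝ) (hdt : dt = T / ((N : ℝ) - 1)) :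
    ∀ j ∈ Finset.Icc 1 (N - 1),
      ‖fdiff dt z j‖ ^ 2 ≤ 2 * max T 1 *
        (‖fdiff dt z 1‖ ^ 2 + ∑ i ∈ Finset.Icc 2 (N - 1), dt * ‖ddq dt z i‖ ^ 2) := by
  intro j hj
  simp only [Finset.mem_Icc] at hj
  have hN3 : (3 : ℝ) ≤ (N : ℝ) := by exact_mod_cast hN
  have hdtpos : 0 < dt := by rw [hdt]; exact div_pos hT (by linarith)
  set a := ‖fdiff dt z 1‖ with ha
  set S := ∑ i ∈ Finset.Icc 2 (N - 1), dt * ‖ddq dt z i‖ ^ 2 with hS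
  have hSnn : 0 ≤ S := Finset.sum_nonneg fun i _ => by positivity
  have htel := tele_aux dt (ne_of_gt hdtpos) z j hj.1
  set B := ∑ i ∈ Finset.Icc 2 j, dt * ‖ddq dt z i‖ with hB
  have hBnn : 0 ≤ B := Finset.sum_nonneg fun i _ => by positivity
  have hnorm : ‖fdiff dt z j‖ ≤ a + B := by
    rw [htel]
    refine (norm_add_le _ _).trans ?_
    gcongr
    refine (norm_sum_le _ _).trans ?_
    apply le_of_eq
    apply Finset.sum_congr rfl
    intro i _
    rw [norm_smul, Real.norm_eq_abs, abs_of_pos hdtpos]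
  -- Cauchy-Schwarz
  have hcard : ((Finset.Icc 2 j).card : ℝ) * dt ≤ T := by
    rw [Nat.card_Icc]
    have hjle : (j : ℝ) ≤ (N : ℝ) - 1 := by
      have := hj.2
      have : (j : ℝ) ≤ ((N - 1 : ℕ) : ℝ) := by exact_mod_cast this
      have hc : ((N - 1 : ℕ) : ℝ) = (N : ℝ) - 1 := by
        have : 1 ≤ N := by omega
        push_cast [this]; ring
      linarith [hc ▸ this]
    have hc2 : ((j + 1 - 2 : ℕ) : ℝ) ≤ (j : ℝ) - 1 ∨ j = 1 := by
      rcases Nat.lt_or_ge j 2 with h | h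
      · right; omega
      · left
        have e : ((j + 1 - 2 : ℕ) : ℝ) = (j : ℝ) - 1 := by
          rw [show j + 1 - 2 = j - 1 from by omega, Nat.cast_sub hj.1]
          norm_num
        linarith [e.le]
    rcases hc2 with h | h
    · calc ((j + 1 - 2 : ℕ) : ℝ) * dt ≤ ((j : ℝ) - 1) * dt := by
            exact mul_le_mul_of_nonneg_right h hdtpos.le
        _ ≤ ((N : ℝ) - 2) * dt := by
            apply mul_le_mul_of_nonneg_right _ hdtpos.le; linarith
        _ = ((N : ℝ) - 2) * (T / ((N : ℝ) - 1)) := by rw [hdt]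
        _ ≤ T := by
            have hpos : (0:ℝ) < (N:ℝ) - 1 := by linarith
            rw [mul_comm, div_mul_eq_mul_div, div_le_iff₀ hpos]
            nlinarith
    · subst h; simp; positivity
  have hB2 : B ^ 2 ≤ T * S := by
    have h1 : B ^ 2 ≤ ((Finset.Icc 2 j).card : ℝ) *
        ∑ i ∈ Finset.Icc 2 j, (dt * ‖ddq dt z i‖) ^ 2 := sq_sum_le_card_mul_sum_sq
    have h2 : ∑ i ∈ Finset.Icc 2 j, (dt * ‖ddq dt z i‖) ^ 2
        = dt * ∑ i ∈ Finset.Icc 2 j, dt * ‖ddq dt z i‖ ^ 2 := by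
      rw [Finset.mul_sum]; exact Finset.sum_congr rfl fun i _ => by ring
    have h3 : ∑ i ∈ Finset.Icc 2 j, dt * ‖ddq dt z i‖ ^ 2 ≤ S := by
      apply Finset.sum_le_sum_of_subset_of_nonneg
      · exact Finset.Icc_subset_Icc_right hj.2
      · intro i _ _; positivity
    have h4 : 0 ≤ ∑ i ∈ Finset.Icc 2 j, dt * ‖ddq dt z i‖ ^ 2 :=
      Finset.sum_nonneg fun i _ => by positivity
    calc B ^ 2 ≤ ((Finset.Icc 2 j).card : ℝ) *
          (dt * ∑ i ∈ Finset.Icc 2 j, dt * ‖ddq dt z i‖ ^ 2) := h2 ▸ h1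
      _ = ((Finset.Icc 2 j).card : ℝ) * dt *
          ∑ i ∈ Finset.Icc 2 j, dt * ‖ddq dt z i‖ ^ 2 := by ring
      _ ≤ T * S := mul_le_mul hcard h3 h4 hT.le
  have hmax1 : (1 : ℝ) ≤ max T 1 := le_max_right T 1
  have hmaxT : T ≤ max T 1 := le_max_left T 1
  have key : ‖fdiff dt z j‖ ^ 2 ≤ 2 * a ^ 2 + 2 * (T * S) := by
    have h1 : ‖fdiff dt z j‖ ^ 2 ≤ (a + B) ^ 2 := by
      have := norm_nonneg (fdiff dt z j)
      nlinarith
    nlinarith [sq_nonneg (a - B), hB2, h1]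
  nlinarith
end

section
/- (Pointwise data error bounds for the DDQ POD operator K₂.) Let T > 0, N ≥ 3, Δt = T/(N−1), and u^1,…,u^N ∈ X. Suppose the POD decomposition hypothesis holds for the DDQ data set w^1 = u^1, w^2 = ∂u^1, w^{j+1} = ∂∂u^j (j = 2,…,N−1) with weights γ_1 = γ_2 = 1 and γ_j = Δt for j = 3,…,N, with POD eigenvalues λ_k^{DDQ}, modes φ_k, and rank s. Then with C = 3 max{T³, 1}: (i) max_{1≤j≤N} ‖u^j − Π_r^X u^j‖_X² ≤ C Σ_{k=r+1}^s λ_k^{DDQ}; (ii) if (·,·)_Y is a second inner product on X then max_{1≤j≤N} ‖u^j − Π_r^X u^j‖_Y² ≤ C Σ_{k=r+1}^s λ_k^{DDQ} ‖φ_k‖_Y²; (iii) if in addition π_r : X → X is a linear projection onto X_r (π_r∘π_r = π_r, range(π_r) = X_r), then max_{1≤j≤N} ‖u^j − π_r u^j‖_Y² ≤ C Σ_{k=r+1}^s λ_k^{DDQ} ‖φ_k − π_r φ_k‖_Y². -/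
open Finset RealInnerProductSpace

lemma bilin_cs {X : Type*} [AddCommGroup X] [Module ℝ X]
    (ipY : X →ₗ[ℝ] X →ₗ[ℝ] ℝ) (hs : ∀ x y, ipY x y = ipY y x)
    (hpos : ∀ x, 0 ≤ ipY x x) (x y : X) :
    ipY x y ≤ Real.sqrt (ipY x x) * Real.sqrt (ipY y y) := by
  have h : ∀ t : ℝ, 0 ≤ (ipY y y) * (t * t) + (2 * ipY x y) * t + ipY x x := by
    intro t
    have h0 := hpos (x + t • y)
    simp only [map_add, map_smul, LinearMap.add_apply, LinearMap.smul_apply, smul_eq_mul] at h0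
    rw [← hs x y] at h0
    ring_nf at h0 ⊢
    linarith
  have hd := discrim_le_zero h
  rw [discrim] at hd
  have hsq : (ipY x y) ^ 2 ≤ ipY x x * ipY y y := by nlinarith
  calc ipY x y ≤ |ipY x y| := le_abs_self _
    _ = Real.sqrt ((ipY x y) ^ 2) := (Real.sqrt_sq_eq_abs _).symm
    _ ≤ Real.sqrt (ipY x x * ipY y y) := Real.sqrt_le_sqrt hsq
    _ = Real.sqrt (ipY x x) * Real.sqrt (ipY y y) := Real.sqrt_mul (hpos x) _

lemma bessel_finset (M A : Finset ℕ) (γ β : ℕ → ℝ) (f : ℕ → ℕ → ℝ)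
    (hγ : ∀ m ∈ M, 0 ≤ γ m)
    (hf : ∀ k ∈ A, ∀ l ∈ A, (∑ m ∈ M, γ m * f k m * f l m) = if k = l then 1 else 0) :
    ∑ k ∈ A, (∑ m ∈ M, γ m * β m * f k m) ^ 2 ≤ ∑ m ∈ M, γ m * (β m) ^ 2 := by
  set g : ℕ → ℝ := fun k => ∑ m ∈ M, γ m * β m * f k m with hg
  set S : ℕ → ℝ := fun m => ∑ k ∈ A, g k * f k m with hS
  have key : 0 ≤ ∑ m ∈ M, γ m * (β m - S m) ^ 2 :=
    Finset.sum_nonneg fun m hm => mul_nonneg (hγ m hm) (sq_nonneg _)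
  have expand : ∑ m ∈ M, γ m * (β m - S m) ^ 2
      = (∑ m ∈ M, γ m * (β m) ^ 2) - 2 * (∑ m ∈ M, γ m * β m * S m)
        + ∑ m ∈ M, γ m * (S m) ^ 2 := by
    rw [Finset.mul_sum, ← Finset.sum_sub_distrib, ← Finset.sum_add_distrib]
    exact Finset.sum_congr rfl fun m _ => by ring
  have hA : ∑ m ∈ M, γ m * β m * S m = ∑ k ∈ A, (g k) ^ 2 := by
    calc ∑ m ∈ M, γ m * β m * S m = ∑ m ∈ M, ∑ k ∈ A, g k * (γ m * β m * f k m) := by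
          refine Finset.sum_congr rfl fun m _ => ?_
          rw [hS, Finset.mul_sum]
          exact Finset.sum_congr rfl fun k _ => by ring
      _ = ∑ k ∈ A, ∑ m ∈ M, g k * (γ m * β m * f k m) := Finset.sum_comm
      _ = ∑ k ∈ A, (g k) ^ 2 := by
          refine Finset.sum_congr rfl fun k _ => ?_
          rw [← Finset.mul_sum, sq]
  have hB : ∑ m ∈ M, γ m * (S m) ^ 2 = ∑ k ∈ A, (g k) ^ 2 := by
    calc ∑ m ∈ M, γ m * (S m) ^ 2
        = ∑ m ∈ M, ∑ k ∈ A, ∑ l ∈ A, (g k * g l) * (γ m * f k m * f l m) := by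
          refine Finset.sum_congr rfl fun m _ => ?_
          rw [hS, sq, Finset.sum_mul_sum, Finset.mul_sum]
          refine Finset.sum_congr rfl fun k _ => ?_
          rw [Finset.mul_sum]
          exact Finset.sum_congr rfl fun l _ => by ring
      _ = ∑ k ∈ A, ∑ l ∈ A, ∑ m ∈ M, (g k * g l) * (γ m * f k m * f l m) := by
          rw [Finset.sum_comm]
          exact Finset.sum_congr rfl fun k _ => Finset.sum_comm
      _ = ∑ k ∈ A, ∑ l ∈ A, (g k * g l) * (if k = l then 1 else 0) := by
          refine Finset.sum_congr rfl fun k hk => Finset.sum_congr rfl fun l hl => ?_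
          rw [← Finset.mul_sum, hf k hk l hl]
      _ = ∑ k ∈ A, (g k) ^ 2 := by
          refine Finset.sum_congr rfl fun k hk => ?_
          rw [Finset.sum_eq_single k (fun l _ hlk => by simp [Ne.symm hlk]) (fun h => absurd hk h)]
          simp [sq]
  rw [expand, hA, hB] at key
  linarith

lemma quad_bound {X : Type*} [AddCommGroup X] [Module ℝ X]
    (ipY : X →ₗ[ℝ] X →ₗ[ℝ] ℝ) (hs : ∀ x y, ipY x y = ipY y x)
    (hpos : ∀ x, 0 ≤ ipY x x)
    (A : Finset ℕ) (c a b : ℕ → ℝ) (v : ℕ → X)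
    (hc : ∀ k ∈ A, c k = b k * a k) (hb : ∀ k ∈ A, 0 ≤ b k) :
    ipY (∑ k ∈ A, c k • v k) (∑ k ∈ A, c k • v k)
      ≤ (∑ k ∈ A, (a k) ^ 2) * (∑ k ∈ A, (b k) ^ 2 * ipY (v k) (v k)) := by
  set n : ℕ → ℝ := fun k => Real.sqrt (ipY (v k) (v k)) with hn
  have hsq : ∀ i ∈ A, Real.sqrt (ipY (c i • v i) (c i • v i)) = |a i| * (b i * n i) := by
    intro i hi
    have h1 : ipY (c i • v i) (c i • v i) = (c i) ^ 2 * ipY (v i) (v i) := by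
      simp only [map_smul, LinearMap.smul_apply, smul_eq_mul]; ring
    rw [h1, Real.sqrt_mul (sq_nonneg _), Real.sqrt_sq_eq_abs, hc i hi, abs_mul,
      abs_of_nonneg (hb i hi), hn]
    ring
  have h1 : ipY (∑ k ∈ A, c k • v k) (∑ k ∈ A, c k • v k)
      = ∑ k ∈ A, ∑ l ∈ A, ipY (c k • v k) (c l • v l) := by
    simp only [map_sum, LinearMap.sum_apply]
    exact Finset.sum_comm
  have h2 : ipY (∑ k ∈ A, c k • v k) (∑ k ∈ A, c k • v k)
      ≤ (∑ k ∈ A, |a k| * (b k * n k)) ^ 2 := by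
    rw [h1, sq, Finset.sum_mul_sum]
    refine Finset.sum_le_sum fun k hk => Finset.sum_le_sum fun l hl => ?_
    have := bilin_cs ipY hs hpos (c k • v k) (c l • v l)
    rwa [hsq k hk, hsq l hl] at this
  have h3 : (∑ k ∈ A, |a k| * (b k * n k)) ^ 2
      ≤ (∑ k ∈ A, |a k| ^ 2) * (∑ k ∈ A, (b k * n k) ^ 2) :=
    Finset.sum_mul_sq_le_sq_mul_sq A _ _
  have h4 : (∑ k ∈ A, |a k| ^ 2) = ∑ k ∈ A, (a k) ^ 2 := by
    exact Finset.sum_congr rfl fun k _ => sq_abs _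
  have h5 : (∑ k ∈ A, (b k * n k) ^ 2) = ∑ k ∈ A, (b k) ^ 2 * ipY (v k) (v k) := by
    refine Finset.sum_congr rfl fun k _ => ?_
    rw [mul_pow, hn, Real.sq_sqrt (hpos _)]
  calc ipY (∑ k ∈ A, c k • v k) (∑ k ∈ A, c k • v k)
      ≤ (∑ k ∈ A, |a k| * (b k * n k)) ^ 2 := h2
    _ ≤ (∑ k ∈ A, |a k| ^ 2) * (∑ k ∈ A, (b k * n k) ^ 2) := h3
    _ = (∑ k ∈ A, (a k) ^ 2) * (∑ k ∈ A, (b k) ^ 2 * ipY (v k) (v k)) := by rw [h4, h5]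

/-- the coefficient of `w m` (divided by the weight `γ m`) in the expansion of `u j` -/
noncomputable def bcoef (dt : ℝ) (j m : ℕ) : ℝ :=
  if m = 1 then 1 else if m ≤ j then dt * ((j : ℝ) + 1 - (m : ℝ)) else 0

lemma bcoef_step (dt : ℝ) (t m : ℕ) :
    bcoef dt (t + 3) m
      = 2 * bcoef dt (t + 2) m - bcoef dt (t + 1) m + (if m = t + 3 then dt else 0) := by
  rcases (by omega : m = 1 ∨ (m ≠ 1 ∧ m ≤ t + 1) ∨ m = t + 2 ∨ m = t + 3 ∨ t + 4 ≤ m) with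
    h | ⟨h1, h2⟩ | h | h | h
  · subst h
    have hne : (1 : ℕ) ≠ t + 3 := by omega
    simp only [bcoef, if_pos rfl, if_neg hne]
    norm_num
  · have hm1 : m ≠ 1 := by omega
    simp only [bcoef, if_neg hm1, if_pos (show m ≤ t + 3 by omega),
      if_pos (show m ≤ t + 2 by omega), if_pos (show m ≤ t + 1 by omega),
      if_neg (show m ≠ t + 3 by omega)]
    push_cast
    ring
  · subst h
    simp only [bcoef, if_neg (show t + 2 ≠ 1 by omega), if_pos (show t + 2 ≤ t + 3 by omega),
      if_pos (show t + 2 ≤ t + 2 by omega), if_neg (show ¬ t + 2 ≤ t + 1 by omega),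
      if_neg (show t + 2 ≠ t + 3 by omega)]
    push_cast
    ring
  · subst h
    simp only [bcoef, if_neg (show t + 3 ≠ 1 by omega), if_pos (show t + 3 ≤ t + 3 by omega),
      if_neg (show ¬ t + 3 ≤ t + 2 by omega), if_neg (show ¬ t + 3 ≤ t + 1 by omega),
      if_pos rfl]
    push_cast
    ring
  · simp only [bcoef, if_neg (show m ≠ 1 by omega), if_neg (show ¬ m ≤ t + 3 by omega),
      if_neg (show ¬ m ≤ t + 2 by omega), if_neg (show ¬ m ≤ t + 1 by omega),
      if_neg (show m ≠ t + 3 by omega)]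
    ring

lemma repr_lemma {X : Type*} [AddCommGroup X] [Module ℝ X]
    (N : ℕ) (hN : 3 ≤ N) (dt : ℝ) (hdtpos : 0 < dt)
    (u w : ℕ → X) (γ : ℕ → ℝ)
    (hw1 : w 1 = u 1) (hw2 : w 2 = fdiff dt u 1)
    (hwj : ∀ j ∈ Finset.Icc 2 (N - 1), w (j + 1) = ddq dt u j)
    (hγ1 : γ 1 = 1) (hγ2 : γ 2 = 1) (hγj : ∀ j ∈ Finset.Icc 3 N, γ j = dt) :
    ∀ j ∈ Finset.Icc 1 N, u j = ∑ m ∈ Finset.Icc 1 N, (γ m * bcoef dt j m) • w m := by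
  have hdt0 : dt ≠ 0 := ne_of_gt hdtpos
  -- step for u
  have hustep : ∀ t, t + 3 ≤ N →
      u (t + 3) = (2 : ℝ) • u (t + 2) - u (t + 1) + (dt ^ 2) • w (t + 3) := by
    intro t ht
    have h2 : w (t + 3) = ddq dt u (t + 2) := hwj (t + 2) (by rw [Finset.mem_Icc]; omega)
    rw [ddq, show t + 2 + 1 = t + 3 from rfl, show t + 2 - 1 = t + 1 from rfl] at h2
    rw [h2, smul_inv_smul₀ (pow_ne_zero 2 hdt0)]
    module
  -- step for the expansion
  have hEstep : ∀ t, t + 3 ≤ N →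
      (∑ m ∈ Finset.Icc 1 N, (γ m * bcoef dt (t + 3) m) • w m)
        = (2 : ℝ) • (∑ m ∈ Finset.Icc 1 N, (γ m * bcoef dt (t + 2) m) • w m)
          - (∑ m ∈ Finset.Icc 1 N, (γ m * bcoef dt (t + 1) m) • w m)
          + (dt ^ 2) • w (t + 3) := by
    intro t ht
    have hmem : t + 3 ∈ Finset.Icc 1 N := by rw [Finset.mem_Icc]; omega
    have hγt : γ (t + 3) = dt := hγj _ (by rw [Finset.mem_Icc]; omega)
    have hif : (dt ^ 2) • w (t + 3)
        = ∑ m ∈ Finset.Icc 1 N, (if m = t + 3 then dt ^ 2 else 0) • w m := by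
      rw [Finset.sum_eq_single_of_mem (t + 3) hmem (fun b _ hb => by rw [if_neg hb, zero_smul])]
      rw [if_pos rfl]
    rw [Finset.smul_sum, ← Finset.sum_sub_distrib, hif, ← Finset.sum_add_distrib]
    refine Finset.sum_congr rfl fun m hm => ?_
    rw [bcoef_step dt t m]
    by_cases h : m = t + 3
    · subst h
      rw [if_pos rfl, if_pos rfl, hγt]
      match_scalars
      ring
    · rw [if_neg h, if_neg h]
      match_scalars
      ring
  -- base cases
  have hsplit : Finset.Icc 1 N = insert 1 (insert 2 (Finset.Icc 3 N)) := by
    ext m; simp [Finset.mem_Icc]; omega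
  have h1mem : (1 : ℕ) ∉ insert 2 (Finset.Icc 3 N) := by simp
  have h2mem : (2 : ℕ) ∉ Finset.Icc 3 N := by simp
  have base1 : u 1 = ∑ m ∈ Finset.Icc 1 N, (γ m * bcoef dt 1 m) • w m := by
    rw [hsplit, Finset.sum_insert h1mem, Finset.sum_insert h2mem]
    have hz : ∑ m ∈ Finset.Icc 3 N, (γ m * bcoef dt 1 m) • w m = 0 := by
      refine Finset.sum_eq_zero fun m hm => ?_
      rw [Finset.mem_Icc] at hm
      rw [bcoef, if_neg (show m ≠ 1 by omega), if_neg (show ¬ m ≤ 1 by omega)]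
      simp
    rw [hz, hw1]
    rw [bcoef, if_pos rfl, bcoef, if_neg (by omega), if_neg (by omega)]
    simp [hγ1]
  have base2 : u 2 = ∑ m ∈ Finset.Icc 1 N, (γ m * bcoef dt 2 m) • w m := by
    rw [hsplit, Finset.sum_insert h1mem, Finset.sum_insert h2mem]
    have hz : ∑ m ∈ Finset.Icc 3 N, (γ m * bcoef dt 2 m) • w m = 0 := by
      refine Finset.sum_eq_zero fun m hm => ?_
      rw [Finset.mem_Icc] at hm
      rw [bcoef, if_neg (show m ≠ 1 by omega), if_neg (show ¬ m ≤ 2 by omega)]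
      simp
    rw [hz, hw1]
    rw [bcoef, if_pos rfl, bcoef, if_neg (by omega), if_pos (by omega)]
    have hu2 : dt • w 2 = u 2 - u 1 := by
      rw [hw2, fdiff, smul_inv_smul₀ hdt0]
    have hcoef : γ 2 * (dt * (((2 : ℕ) : ℝ) + 1 - ((2 : ℕ) : ℝ))) = dt := by
      rw [hγ2]; push_cast; ring
    rw [hcoef, hu2, hγ1]
    module
  -- induction
  have key : ∀ t, (t + 1 ≤ N → u (t + 1) = ∑ m ∈ Finset.Icc 1 N, (γ m * bcoef dt (t + 1) m) • w m)
      ∧ (t + 2 ≤ N → u (t + 2) = ∑ m ∈ Finset.Icc 1 N, (γ m * bcoef dt (t + 2) m) • w m) := by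
    intro t
    induction t with
    | zero => exact ⟨fun _ => base1, fun _ => base2⟩
    | succ t ih =>
      refine ⟨fun h => ih.2 (by omega), fun h => ?_⟩
      have h3 : t + 3 ≤ N := by omega
      rw [show t + 1 + 2 = t + 3 from rfl]
      rw [hustep t h3, ih.1 (by omega), ih.2 (by omega), hEstep t h3]
  intro j hj
  rw [Finset.mem_Icc] at hj
  obtain ⟨h1, h2⟩ := hj
  have hj1 : j - 1 + 1 = j := by omega
  have := (key (j - 1)).1 (by omega)
  rwa [hj1] at this

set_option maxHeartbeats 1000000 in
theorem stmt_14
    {X : Type*} [NormedAddCommGroup X] [InnerProductSpace ℝ X] [CompleteSpace X]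
    (T : ℝ) (hT : 0 < T) (N : ℕ) (hN : 3 ≤ N)
    (dt : ℝ) (hdt : dt = T / ((N : ℝ) - 1))
    (u w : ℕ → X) (γ : ℕ → ℝ)
    (hw1 : w 1 = u 1) (hw2 : w 2 = fdiff dt u 1)
    (hwj : ∀ j ∈ Finset.Icc 2 (N - 1), w (j + 1) = ddq dt u j)
    (hγ1 : γ 1 = 1) (hγ2 : γ 2 = 1) (hγj : ∀ j ∈ Finset.Icc 3 N, γ j = dt)
    (s : ℕ) (lam : ℕ → ℝ) (φ : ℕ → X) (f : ℕ → ℕ → ℝ)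
    (hlam : ∀ k ∈ Finset.Icc 1 s, 0 < lam k)
    (hφ : ∀ k ∈ Finset.Icc 1 s, ∀ l ∈ Finset.Icc 1 s,
      ⟪φ k, φ l⟫ = if k = l then 1 else 0)
    (hf : ∀ k ∈ Finset.Icc 1 s, ∀ l ∈ Finset.Icc 1 s,
      (∑ j ∈ Finset.Icc 1 N, γ j * f k j * f l j) = if k = l then 1 else 0)
    (hsvd : ∀ j ∈ Finset.Icc 1 N,
      w j = ∑ k ∈ Finset.Icc 1 s, (Real.sqrt (lam k) * f k j) • φ k)
    (r : ℕ) (hr1 : 1 ≤ r) (hrs : r ≤ s)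
    (Pr : X → X)
    (hPrmem : ∀ x, Pr x ∈ Submodule.span ℝ (φ '' Set.Icc 1 r))
    (hProrth : ∀ x, ∀ v ∈ Submodule.span ℝ (φ '' Set.Icc 1 r),
      ⟪x - Pr x, v⟫ = 0)
    (ipY : X →ₗ[ℝ] X →ₗ[ℝ] ℝ)
    (hYsymm : ∀ x y, ipY x y = ipY y x)
    (hYpos : ∀ x : X, x ≠ 0 → 0 < ipY x x)
    (π : X →ₗ[ℝ] X)
    (hππ : ∀ x, π (π x) = π x)
    (hπrange : LinearMap.range π = Submodule.span ℝ (φ '' Set.Icc 1 r)) :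
    (∀ j ∈ Finset.Icc 1 N,
      ‖u j - Pr (u j)‖ ^ 2 ≤ 3 * max (T ^ 3) 1 * ∑ k ∈ Finset.Icc (r + 1) s, lam k)
    ∧ (∀ j ∈ Finset.Icc 1 N,
      ipY (u j - Pr (u j)) (u j - Pr (u j))
        ≤ 3 * max (T ^ 3) 1 * ∑ k ∈ Finset.Icc (r + 1) s, lam k * ipY (φ k) (φ k))
    ∧ (∀ j ∈ Finset.Icc 1 N,
      ipY (u j - π (u j)) (u j - π (u j))
        ≤ 3 * max (T ^ 3) 1 *
          ∑ k ∈ Finset.Icc (r + 1) s, lam k * ipY (φ k - π (φ k)) (φ k - π (φ k))) := by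
  classical
  have hN3 : (3 : ℝ) ≤ (N : ℝ) := by exact_mod_cast hN
  have hN1 : (0 : ℝ) < (N : ℝ) - 1 := by linarith
  have hdtpos : 0 < dt := by rw [hdt]; exact div_pos hT hN1
  have hdtT : ((N : ℝ) - 1) * dt = T := by rw [hdt]; field_simp
  -- nonnegative weights
  have hγnn : ∀ m ∈ Finset.Icc 1 N, 0 ≤ γ m := by
    intro m hm
    rw [Finset.mem_Icc] at hm
    rcases (by omega : m = 1 ∨ m = 2 ∨ 3 ≤ m) with h | h | h
    · subst h; rw [hγ1]; norm_num
    · subst h; rw [hγ2]; norm_num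
    · rw [hγj m (by rw [Finset.mem_Icc]; omega)]; exact hdtpos.le
  -- the coefficients of `u j` in the POD basis
  set g : ℕ → ℕ → ℝ := fun k j => ∑ m ∈ Finset.Icc 1 N, γ m * bcoef dt j m * f k m with hgdef
  have hrep := repr_lemma N hN dt hdtpos u w γ hw1 hw2 hwj hγ1 hγ2 hγj
  have hrep2 : ∀ j ∈ Finset.Icc 1 N,
      u j = ∑ k ∈ Finset.Icc 1 s, (Real.sqrt (lam k) * g k j) • φ k := by
    intro j hj
    rw [hrep j hj]
    calc ∑ m ∈ Finset.Icc 1 N, (γ m * bcoef dt j m) • w m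
        = ∑ m ∈ Finset.Icc 1 N, ∑ k ∈ Finset.Icc 1 s,
            (γ m * bcoef dt j m) • ((Real.sqrt (lam k) * f k m) • φ k) := by
          refine Finset.sum_congr rfl fun m hm => ?_
          rw [hsvd m hm, Finset.smul_sum]
      _ = ∑ k ∈ Finset.Icc 1 s, ∑ m ∈ Finset.Icc 1 N,
            (γ m * bcoef dt j m) • ((Real.sqrt (lam k) * f k m) • φ k) := Finset.sum_comm
      _ = ∑ k ∈ Finset.Icc 1 s, (Real.sqrt (lam k) * g k j) • φ k := by
          refine Finset.sum_congr rfl fun k hk => ?_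
          have he : ∀ m ∈ Finset.Icc 1 N,
              (γ m * bcoef dt j m) • ((Real.sqrt (lam k) * f k m) • φ k)
                = ((γ m * bcoef dt j m) * (Real.sqrt (lam k) * f k m)) • φ k :=
            fun m _ => smul_smul _ _ _
          rw [Finset.sum_congr rfl he, ← Finset.sum_smul]
          congr 1
          simp only [hgdef]
          rw [Finset.mul_sum]
          exact Finset.sum_congr rfl fun m _ => by ring
  -- bound on the weighted norm of the coefficient vector
  have hB : ∀ j ∈ Finset.Icc 1 N,
      (∑ m ∈ Finset.Icc 1 N, γ m * (bcoef dt j m) ^ 2) ≤ 3 * max (T ^ 3) 1 := by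
    intro j hj
    rw [Finset.mem_Icc] at hj
    have hsplit : Finset.Icc 1 N = insert 1 (insert 2 (Finset.Icc 3 N)) := by
      ext m; simp [Finset.mem_Icc]; omega
    rw [hsplit, Finset.sum_insert (by simp), Finset.sum_insert (by simp)]
    have h1 : γ 1 * (bcoef dt j 1) ^ 2 = 1 := by
      rw [hγ1, bcoef, if_pos rfl]; norm_num
    have h2 : γ 2 * (bcoef dt j 2) ^ 2 ≤ T ^ 2 := by
      rw [hγ2, one_mul, bcoef, if_neg (by omega)]
      by_cases h : 2 ≤ j
      · rw [if_pos h]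
        have h2j : (2 : ℝ) ≤ (j : ℝ) := by exact_mod_cast h
        have hjN : (j : ℝ) ≤ (N : ℝ) := by exact_mod_cast hj.2
        have hb0 : 0 ≤ dt * ((j : ℝ) + 1 - 2) := mul_nonneg hdtpos.le (by linarith)
        have hbT : dt * ((j : ℝ) + 1 - 2) ≤ T := by nlinarith
        exact pow_le_pow_left₀ hb0 hbT 2
      · rw [if_neg h]
        nlinarith [sq_nonneg T]
    have h3 : ∑ m ∈ Finset.Icc 3 N, γ m * (bcoef dt j m) ^ 2 ≤ T ^ 3 := by
      have hbound : ∀ m ∈ Finset.Icc 3 N,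
          γ m * (bcoef dt j m) ^ 2 ≤ dt * (dt * ((N : ℝ) - 2)) ^ 2 := by
        intro m hm
        rw [Finset.mem_Icc] at hm
        rw [hγj m (by rw [Finset.mem_Icc]; omega), bcoef, if_neg (by omega)]
        refine mul_le_mul_of_nonneg_left ?_ hdtpos.le
        by_cases h : m ≤ j
        · rw [if_pos h]
          have hm3 : (3 : ℝ) ≤ (m : ℝ) := by exact_mod_cast hm.1
          have hjN : (j : ℝ) ≤ (N : ℝ) := by exact_mod_cast hj.2
          have hmj : (m : ℝ) ≤ (j : ℝ) := by exact_mod_cast h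
          have h0 : 0 ≤ dt * ((j : ℝ) + 1 - m) := mul_nonneg hdtpos.le (by linarith)
          have hle : dt * ((j : ℝ) + 1 - m) ≤ dt * ((N : ℝ) - 2) :=
            mul_le_mul_of_nonneg_left (by linarith) hdtpos.le
          exact pow_le_pow_left₀ h0 hle 2
        · rw [if_neg h]
          nlinarith [sq_nonneg (dt * ((N : ℝ) - 2))]
      have h2N : (0 : ℝ) ≤ (N : ℝ) - 2 := by linarith
      calc ∑ m ∈ Finset.Icc 3 N, γ m * (bcoef dt j m) ^ 2
          ≤ (Finset.Icc 3 N).card • (dt * (dt * ((N : ℝ) - 2)) ^ 2) :=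
            Finset.sum_le_card_nsmul _ _ _ hbound
        _ = ((N - 2 : ℕ) : ℝ) * (dt * (dt * ((N : ℝ) - 2)) ^ 2) := by
            rw [Nat.card_Icc, nsmul_eq_mul, show N + 1 - 3 = N - 2 by omega]
        _ ≤ T ^ 3 := by
            have hc : ((N - 2 : ℕ) : ℝ) = (N : ℝ) - 2 := by
              rw [Nat.cast_sub (by omega)]; norm_num
            rw [hc, ← hdtT,
              show ((N : ℝ) - 2) * (dt * (dt * ((N : ℝ) - 2)) ^ 2) = (((N : ℝ) - 2) * dt) ^ 3 by
                ring]
            exact pow_le_pow_left₀ (mul_nonneg h2N hdtpos.le) (by nlinarith) 3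
    have hmax : (1 : ℝ) + T ^ 2 + T ^ 3 ≤ 3 * max (T ^ 3) 1 := by
      rcases le_total T 1 with h | h
      · have hm := le_max_right (T ^ 3) 1
        have hT2 : T ^ 2 ≤ 1 := pow_le_one₀ hT.le h
        have hT3 : T ^ 3 ≤ 1 := pow_le_one₀ hT.le h
        linarith
      · have hm := le_max_left (T ^ 3) 1
        have hT3 : 1 ≤ T ^ 3 := one_le_pow₀ h
        have hT23 : T ^ 2 ≤ T ^ 3 := pow_le_pow_right₀ h (by norm_num)
        linarith
    linarith [h1, h2, h3, hmax]
  -- Bessel inequality for the coefficients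
  have hbes : ∀ j ∈ Finset.Icc 1 N,
      ∑ k ∈ Finset.Icc 1 s, (g k j) ^ 2 ≤ 3 * max (T ^ 3) 1 := by
    intro j hj
    refine le_trans ?_ (hB j hj)
    simpa only [hgdef] using
      bessel_finset (Finset.Icc 1 N) (Finset.Icc 1 s) γ (fun m => bcoef dt j m) f hγnn hf
  have hgk : ∀ j ∈ Finset.Icc 1 N, ∀ k ∈ Finset.Icc 1 s,
      (g k j) ^ 2 ≤ 3 * max (T ^ 3) 1 := by
    intro j hj k hk
    exact le_trans
      (Finset.single_le_sum (f := fun k => (g k j) ^ 2) (fun i _ => sq_nonneg _) hk) (hbes j hj)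
  have htailsub : Finset.Icc (r + 1) s ⊆ Finset.Icc 1 s := by
    intro x hx; rw [Finset.mem_Icc] at *; omega
  have hgtail : ∀ j ∈ Finset.Icc 1 N,
      ∑ k ∈ Finset.Icc (r + 1) s, (g k j) ^ 2 ≤ 3 * max (T ^ 3) 1 := by
    intro j hj
    exact le_trans
      (Finset.sum_le_sum_of_subset_of_nonneg htailsub (fun i _ _ => sq_nonneg _)) (hbes j hj)
  -- sum splitting
  have e1 : Finset.Icc 1 s = Finset.Ioc 0 s := by ext x; simp [Finset.mem_Icc]; omega
  have e2 : Finset.Icc 1 r = Finset.Ioc 0 r := by ext x; simp [Finset.mem_Icc]; omega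
  have e3 : Finset.Icc (r + 1) s = Finset.Ioc r s := by
    ext x; simp [Finset.mem_Icc, Finset.mem_Ioc]
  have hsum_split : ∀ F : ℕ → X,
      ∑ k ∈ Finset.Icc 1 s, F k
        = ∑ k ∈ Finset.Icc 1 r, F k + ∑ k ∈ Finset.Icc (r + 1) s, F k := by
    intro F
    rw [e1, e2, e3]
    exact (Finset.sum_Ioc_consecutive F (Nat.zero_le r) hrs).symm
  -- the error term
  have hud : ∀ j ∈ Finset.Icc 1 N,
      u j - (∑ k ∈ Finset.Icc 1 r, (Real.sqrt (lam k) * g k j) • φ k)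
        = ∑ k ∈ Finset.Icc (r + 1) s, (Real.sqrt (lam k) * g k j) • φ k := by
    intro j hj
    rw [hrep2 j hj, hsum_split]
    abel
  have horthφ : ∀ j ∈ Finset.Icc 1 N, ∀ l ∈ Finset.Icc 1 r,
      ⟪u j - (∑ k ∈ Finset.Icc 1 r, (Real.sqrt (lam k) * g k j) • φ k), φ l⟫ = 0 := by
    intro j hj l hl
    rw [Finset.mem_Icc] at hl
    rw [hud j hj, sum_inner]
    refine Finset.sum_eq_zero fun k hk => ?_
    rw [Finset.mem_Icc] at hk
    rw [real_inner_smul_left,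
      hφ k (by rw [Finset.mem_Icc]; omega) l (by rw [Finset.mem_Icc]; omega),
      if_neg (by omega)]
    ring
  -- membership in the span
  have hφS : ∀ k, 1 ≤ k → k ≤ r → φ k ∈ Submodule.span ℝ (φ '' Set.Icc 1 r) :=
    fun k h1 h2 => Submodule.subset_span ⟨k, ⟨h1, h2⟩, rfl⟩
  have hvS : ∀ j, (∑ k ∈ Finset.Icc 1 r, (Real.sqrt (lam k) * g k j) • φ k)
      ∈ Submodule.span ℝ (φ '' Set.Icc 1 r) := by
    intro j
    refine Submodule.sum_mem _ fun k hk => Submodule.smul_mem _ _ ?_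
    rw [Finset.mem_Icc] at hk
    exact hφS k hk.1 hk.2
  have horthS : ∀ j ∈ Finset.Icc 1 N, ∀ z ∈ Submodule.span ℝ (φ '' Set.Icc 1 r),
      ⟪u j - (∑ k ∈ Finset.Icc 1 r, (Real.sqrt (lam k) * g k j) • φ k), z⟫ = 0 := by
    intro j hj z hz
    induction hz using Submodule.span_induction with
    | mem x hx =>
      obtain ⟨k, hk, rfl⟩ := hx
      exact horthφ j hj k (by rw [Finset.mem_Icc]; exact ⟨hk.1, hk.2⟩)
    | zero => exact inner_zero_right _
    | add x y hx hy ihx ihy => rw [inner_add_right, ihx, ihy]; norm_num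
    | smul t x hx ih => rw [real_inner_smul_right, ih]; ring
  -- identification of Pr (u j)
  have hPru : ∀ j ∈ Finset.Icc 1 N,
      Pr (u j) = ∑ k ∈ Finset.Icc 1 r, (Real.sqrt (lam k) * g k j) • φ k := by
    intro j hj
    set v := ∑ k ∈ Finset.Icc 1 r, (Real.sqrt (lam k) * g k j) • φ k with hv
    have hdm : Pr (u j) - v ∈ Submodule.span ℝ (φ '' Set.Icc 1 r) :=
      Submodule.sub_mem _ (hPrmem _) (hvS j)
    have h1 : ⟪u j - Pr (u j), Pr (u j) - v⟫ = 0 := hProrth _ _ hdm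
    have h2 : ⟪u j - v, Pr (u j) - v⟫ = 0 := horthS j hj _ hdm
    have h3 : ⟪Pr (u j) - v, Pr (u j) - v⟫ = (0 : ℝ) := by
      calc ⟪Pr (u j) - v, Pr (u j) - v⟫
          = ⟪(u j - v) - (u j - Pr (u j)), Pr (u j) - v⟫ := by
            rw [show (u j - v) - (u j - Pr (u j)) = Pr (u j) - v by abel]
        _ = ⟪u j - v, Pr (u j) - v⟫ - ⟪u j - Pr (u j), Pr (u j) - v⟫ := inner_sub_left _ _ _
        _ = 0 := by rw [h1, h2]; ring
    have h4 := inner_self_eq_zero.mp h3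
    exact sub_eq_zero.mp h4
  have herr : ∀ j ∈ Finset.Icc 1 N,
      u j - Pr (u j) = ∑ k ∈ Finset.Icc (r + 1) s, (Real.sqrt (lam k) * g k j) • φ k := by
    intro j hj
    rw [hPru j hj]
    exact hud j hj
  have hYnn : ∀ x : X, 0 ≤ ipY x x := by
    intro x
    rcases eq_or_ne x 0 with h | h
    · subst h; simp
    · exact (hYpos x h).le
  have hlamnn : ∀ k ∈ Finset.Icc (r + 1) s, 0 ≤ lam k := by
    intro k hk
    rw [Finset.mem_Icc] at hk
    exact (hlam k (by rw [Finset.mem_Icc]; omega)).le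
  refine ⟨?_, ?_, ?_⟩
  · -- part (i)
    intro j hj
    rw [herr j hj]
    have hnorm : ‖∑ k ∈ Finset.Icc (r + 1) s, (Real.sqrt (lam k) * g k j) • φ k‖ ^ 2
        = ∑ k ∈ Finset.Icc (r + 1) s, (Real.sqrt (lam k) * g k j) ^ 2 := by
      rw [← real_inner_self_eq_norm_sq, sum_inner]
      refine Finset.sum_congr rfl fun k hk => ?_
      rw [real_inner_smul_left, inner_sum]
      have hdiag : ∑ l ∈ Finset.Icc (r + 1) s, ⟪φ k, (Real.sqrt (lam l) * g l j) • φ l⟫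
          = Real.sqrt (lam k) * g k j := by
        rw [Finset.sum_eq_single_of_mem k hk (fun l hl hlk => ?_)]
        · rw [Finset.mem_Icc] at hk
          rw [real_inner_smul_right,
            hφ k (by rw [Finset.mem_Icc]; omega) k (by rw [Finset.mem_Icc]; omega), if_pos rfl]
          ring
        · rw [Finset.mem_Icc] at hk hl
          rw [real_inner_smul_right,
            hφ k (by rw [Finset.mem_Icc]; omega) l (by rw [Finset.mem_Icc]; omega),
            if_neg (Ne.symm hlk)]
          ring
      rw [hdiag]
      ring
    rw [hnorm]
    calc ∑ k ∈ Finset.Icc (r + 1) s, (Real.sqrt (lam k) * g k j) ^ 2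
        = ∑ k ∈ Finset.Icc (r + 1) s, lam k * (g k j) ^ 2 := by
          refine Finset.sum_congr rfl fun k hk => ?_
          rw [mul_pow, Real.sq_sqrt (hlamnn k hk)]
      _ ≤ ∑ k ∈ Finset.Icc (r + 1) s, 3 * max (T ^ 3) 1 * lam k := by
          refine Finset.sum_le_sum fun k hk => ?_
          have := hgk j hj k (htailsub hk)
          have hln := hlamnn k hk
          nlinarith
      _ = 3 * max (T ^ 3) 1 * ∑ k ∈ Finset.Icc (r + 1) s, lam k := by
          rw [Finset.mul_sum]
  · -- part (ii)
    intro j hj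
    rw [herr j hj]
    have hq := quad_bound ipY hYsymm hYnn (Finset.Icc (r + 1) s)
      (fun k => Real.sqrt (lam k) * g k j) (fun k => g k j) (fun k => Real.sqrt (lam k)) φ
      (fun k _ => rfl) (fun k _ => Real.sqrt_nonneg _)
    refine le_trans hq ?_
    have he : ∑ k ∈ Finset.Icc (r + 1) s, (Real.sqrt (lam k)) ^ 2 * ipY (φ k) (φ k)
        = ∑ k ∈ Finset.Icc (r + 1) s, lam k * ipY (φ k) (φ k) := by
      refine Finset.sum_congr rfl fun k hk => ?_
      rw [Real.sq_sqrt (hlamnn k hk)]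
    rw [he]
    refine mul_le_mul_of_nonneg_right (hgtail j hj) ?_
    exact Finset.sum_nonneg fun k hk => mul_nonneg (hlamnn k hk) (hYnn _)
  · -- part (iii)
    intro j hj
    have hπφ : ∀ k, 1 ≤ k → k ≤ r → π (φ k) = φ k := by
      intro k h1 h2
      have hmem : φ k ∈ LinearMap.range π := by rw [hπrange]; exact hφS k h1 h2
      obtain ⟨y, hy⟩ := hmem
      rw [← hy, hππ]
    have herr3 : u j - π (u j)
        = ∑ k ∈ Finset.Icc (r + 1) s, (Real.sqrt (lam k) * g k j) • (φ k - π (φ k)) := by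
      rw [hrep2 j hj,
        map_sum π (fun k => (Real.sqrt (lam k) * g k j) • φ k) (Finset.Icc 1 s),
        ← Finset.sum_sub_distrib]
      have he : ∀ k ∈ Finset.Icc 1 s,
          (Real.sqrt (lam k) * g k j) • φ k - π ((Real.sqrt (lam k) * g k j) • φ k)
            = (Real.sqrt (lam k) * g k j) • (φ k - π (φ k)) := by
        intro k _
        rw [map_smul, ← smul_sub]
      rw [Finset.sum_congr rfl he, hsum_split]
      have hz : ∑ k ∈ Finset.Icc 1 r, (Real.sqrt (lam k) * g k j) • (φ k - π (φ k)) = 0 := by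
        refine Finset.sum_eq_zero fun k hk => ?_
        rw [Finset.mem_Icc] at hk
        rw [hπφ k hk.1 hk.2]
        simp
      rw [hz, zero_add]
    rw [herr3]
    have hq := quad_bound ipY hYsymm hYnn (Finset.Icc (r + 1) s)
      (fun k => Real.sqrt (lam k) * g k j) (fun k => g k j) (fun k => Real.sqrt (lam k))
      (fun k => φ k - π (φ k)) (fun k _ => rfl) (fun k _ => Real.sqrt_nonneg _)
    refine le_trans hq ?_
    have he : ∑ k ∈ Finset.Icc (r + 1) s, (Real.sqrt (lam k)) ^ 2 * ipY (φ k - π (φ k)) (φ k - π (φ k))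
        = ∑ k ∈ Finset.Icc (r + 1) s, lam k * ipY (φ k - π (φ k)) (φ k - π (φ k)) := by
      refine Finset.sum_congr rfl fun k hk => ?_
      rw [Real.sq_sqrt (hlamnn k hk)]
    rw [he]
    refine mul_le_mul_of_nonneg_right (hgtail j hj) ?_
    exact Finset.sum_nonneg fun k hk => mul_nonneg (hlamnn k hk) (hYnn _)
end

section
/- (Weighted sum data error bounds for the DDQ POD operator K₂.) Let T > 0, N ≥ 3, Δt = T/(N−1), and u^1,…,u^N ∈ X. Suppose the POD decomposition hypothesis holds for the DDQ data set w^1 = u^1, w^2 = ∂u^1, w^{j+1} = ∂∂u^j (j = 2,…,N−1) with weights γ_1 = γ_2 = 1 and γ_j = Δt for j = 3,…,N, with POD eigenvalues λ_k^{DDQ}, modes φ_k, and rank s. Then with C = 6 max{T⁴, T}: (i) Σ_{j=1}^N Δt ‖u^j − Π_r^X u^j‖_X² ≤ C Σ_{k=r+1}^s λ_k^{DDQ}; (ii) if (·,·)_Y is a second inner product on X then Σ_{j=1}^N Δt ‖u^j − Π_r^X u^j‖_Y² ≤ C Σ_{k=r+1}^s λ_k^{DDQ} ‖φ_k‖_Y²;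 (iii) if in addition π_r : X → X is a linear projection onto X_r (π_r∘π_r = π_r, range(π_r) = X_r), then Σ_{j=1}^N Δt ‖u^j − π_r u^j‖_Y² ≤ C Σ_{k=r+1}^s λ_k^{DDQ} ‖φ_k − π_r φ_k‖_Y². -/
open Finset

lemma aux_cs {X : Type*} [AddCommGroup X] [Module ℝ X] (Q : X →ₗ[ℝ] X →ₗ[ℝ] ℝ)
    (hsymm : ∀ x y, Q x y = Q y x) (hpos : ∀ x, 0 ≤ Q x x) (x y : X) :
    Q x y ^ 2 ≤ Q x x * Q y y := by
  have h : ∀ t : ℝ, 0 ≤ Q x x * (t * t) + (2 * Q x y) * t + Q y y := by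
    intro t
    have h0 := hpos (t • x + y)
    simp only [map_add, map_smul, LinearMap.add_apply, LinearMap.smul_apply,
      smul_eq_mul] at h0
    rw [hsymm y x] at h0
    nlinarith [h0]
  have hd := discrim_le_zero h
  unfold discrim at hd
  nlinarith [hd]

lemma aux_comb {X : Type*} [AddCommGroup X] [Module ℝ X] (Q : X →ₗ[ℝ] X →ₗ[ℝ] ℝ)
    (hsymm : ∀ x y, Q x y = Q y x) (hpos : ∀ x, 0 ≤ Q x x)
    {ι : Type*} (S : Finset ι) (a γ : ι → ℝ) (hγ : ∀ i ∈ S, 0 < γ i) (x : ι → X) :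
    Q (∑ i ∈ S, a i • x i) (∑ i ∈ S, a i • x i)
      ≤ (∑ i ∈ S, (γ i)⁻¹ * a i ^ 2) * (∑ i ∈ S, γ i * Q (x i) (x i)) := by
  have step1 : Q (∑ i ∈ S, a i • x i) (∑ i ∈ S, a i • x i)
      = ∑ i ∈ S, ∑ j ∈ S, a i * a j * Q (x i) (x j) := by
    simp only [map_sum, LinearMap.sum_apply, map_smul, LinearMap.smul_apply, smul_eq_mul,
      Finset.mul_sum]
    refine Finset.sum_congr rfl fun i _ => Finset.sum_congr rfl fun j _ => by rw [hsymm (x j) (x i)]; ring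
  have step2 : ∀ i ∈ S, ∀ j ∈ S, a i * a j * Q (x i) (x j)
      ≤ (|a i| * Real.sqrt (Q (x i) (x i))) * (|a j| * Real.sqrt (Q (x j) (x j))) := by
    intro i _ j _
    have hcs := aux_cs Q hsymm hpos (x i) (x j)
    have habs : |Q (x i) (x j)| ≤ Real.sqrt (Q (x i) (x i)) * Real.sqrt (Q (x j) (x j)) := by
      rw [← Real.sqrt_mul (hpos (x i))]
      rw [← Real.sqrt_sq_eq_abs (Q (x i) (x j))]
      exact Real.sqrt_le_sqrt (by nlinarith [hcs])
    calc a i * a j * Q (x i) (x j) ≤ |a i * a j * Q (x i) (x j)| := le_abs_self _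
      _ = |a i| * |a j| * |Q (x i) (x j)| := by rw [abs_mul, abs_mul]
      _ ≤ |a i| * |a j| * (Real.sqrt (Q (x i) (x i)) * Real.sqrt (Q (x j) (x j))) := by
          apply mul_le_mul_of_nonneg_left habs (by positivity)
      _ = (|a i| * Real.sqrt (Q (x i) (x i))) * (|a j| * Real.sqrt (Q (x j) (x j))) := by ring
  have step3 : Q (∑ i ∈ S, a i • x i) (∑ i ∈ S, a i • x i)
      ≤ (∑ i ∈ S, |a i| * Real.sqrt (Q (x i) (x i))) ^ 2 := by
    rw [step1, sq, Finset.sum_mul_sum]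
    exact Finset.sum_le_sum fun i hi => Finset.sum_le_sum fun j hj => step2 i hi j hj
  refine step3.trans ?_
  have step4 : (∑ i ∈ S, |a i| * Real.sqrt (Q (x i) (x i)))
      = ∑ i ∈ S, (|a i| / Real.sqrt (γ i)) * (Real.sqrt (γ i) * Real.sqrt (Q (x i) (x i))) := by
    refine Finset.sum_congr rfl fun i hi => ?_
    have : Real.sqrt (γ i) ≠ 0 := by
      exact ne_of_gt (Real.sqrt_pos.mpr (hγ i hi))
    field_simp
  rw [step4]
  refine (Finset.sum_mul_sq_le_sq_mul_sq S _ _).trans ?_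
  apply le_of_eq
  congr 1
  · refine Finset.sum_congr rfl fun i hi => ?_
    rw [div_pow, sq_abs, Real.sq_sqrt (hγ i hi).le]
    rw [div_eq_inv_mul]
  · refine Finset.sum_congr rfl fun i hi => ?_
    rw [mul_pow, Real.sq_sqrt (hγ i hi).le, Real.sq_sqrt (hpos (x i))]

open Finset RealInnerProductSpace

set_option maxHeartbeats 1000000 in
theorem stmt_15
    {X : Type*} [NormedAddCommGroup X] [InnerProductSpace ℝ X] [CompleteSpace X]
    (T : ℝ) (hT : 0 < T) (N : ℕ) (hN : 3 ≤ N)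
    (dt : ℝ) (hdt : dt = T / ((N : ℝ) - 1))
    (u w : ℕ → X) (γ : ℕ → ℝ)
    (hw1 : w 1 = u 1) (hw2 : w 2 = fdiff dt u 1)
    (hwj : ∀ j ∈ Finset.Icc 2 (N - 1), w (j + 1) = ddq dt u j)
    (hγ1 : γ 1 = 1) (hγ2 : γ 2 = 1) (hγj : ∀ j ∈ Finset.Icc 3 N, γ j = dt)
    (s : ℕ) (lam : ℕ → ℝ) (φ : ℕ → X) (f : ℕ → ℕ → ℝ)
    (hlam : ∀ k ∈ Finset.Icc 1 s, 0 < lam k)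
    (hφ : ∀ k ∈ Finset.Icc 1 s, ∀ l ∈ Finset.Icc 1 s,
      ⟪φ k, φ l⟫ = if k = l then 1 else 0)
    (hf : ∀ k ∈ Finset.Icc 1 s, ∀ l ∈ Finset.Icc 1 s,
      (∑ j ∈ Finset.Icc 1 N, γ j * f k j * f l j) = if k = l then 1 else 0)
    (hsvd : ∀ j ∈ Finset.Icc 1 N,
      w j = ∑ k ∈ Finset.Icc 1 s, (Real.sqrt (lam k) * f k j) • φ k)
    (r : ℕ) (hr1 : 1 ≤ r) (hrs : r ≤ s)
    (Pr : X → X)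
    (hPrmem : ∀ x, Pr x ∈ Submodule.span ℝ (φ '' Set.Icc 1 r))
    (hProrth : ∀ x, ∀ v ∈ Submodule.span ℝ (φ '' Set.Icc 1 r),
      ⟪x - Pr x, v⟫ = 0)
    (ipY : X →ₗ[ℝ] X →ₗ[ℝ] ℝ)
    (hYsymm : ∀ x y, ipY x y = ipY y x)
    (hYpos : ∀ x : X, x ≠ 0 → 0 < ipY x x)
    (π : X →ₗ[ℝ] X)
    (hππ : ∀ x, π (π x) = π x)
    (hπrange : LinearMap.range π = Submodule.span ℝ (φ '' Set.Icc 1 r)) :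
    (∑ j ∈ Finset.Icc 1 N, dt * ‖u j - Pr (u j)‖ ^ 2
      ≤ 6 * max (T ^ 4) T * ∑ k ∈ Finset.Icc (r + 1) s, lam k)
    ∧ (∑ j ∈ Finset.Icc 1 N, dt * ipY (u j - Pr (u j)) (u j - Pr (u j))
      ≤ 6 * max (T ^ 4) T * ∑ k ∈ Finset.Icc (r + 1) s, lam k * ipY (φ k) (φ k))
    ∧ (∑ j ∈ Finset.Icc 1 N, dt * ipY (u j - π (u j)) (u j - π (u j))
      ≤ 6 * max (T ^ 4) T *
        ∑ k ∈ Finset.Icc (r + 1) s, lam k * ipY (φ k - π (φ k)) (φ k - π (φ k))) := by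
  -- basic numeric facts
  have hN1 : (3:ℝ) ≤ (N:ℝ) := by exact_mod_cast hN
  have hNpos : (0:ℝ) < (N:ℝ) - 1 := by linarith
  have hdtpos : 0 < dt := by rw [hdt]; positivity
  have hdtne : dt ≠ 0 := ne_of_gt hdtpos
  have hdtN : dt * ((N:ℝ) - 1) = T := by rw [hdt]; field_simp
  -- coefficients
  set c : ℕ → ℕ → ℝ := fun j i => if i = 1 then 1 else if i = 2 then ((j:ℝ)-1)*dt
    else (((j+1-i : ℕ)):ℝ)*dt^2 with hc
  -- Step A : formula for fdiff
  have hD : ∀ j, 1 ≤ j → j ≤ N - 1 →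
      fdiff dt u j = w 2 + ∑ m ∈ Finset.Icc 3 (j+1), dt • w m := by
    intro j h1
    induction j, h1 using Nat.le_induction with
    | base =>
      intro _
      rw [← hw2]
      have : Finset.Icc 3 2 = (∅ : Finset ℕ) := by decide
      rw [this, Finset.sum_empty, add_zero]
    | succ n hn ih =>
      intro hle
      have hih := ih (by omega)
      have hw : w (n+1+1) = ddq dt u (n+1) :=
        hwj (n+1) (Finset.mem_Icc.mpr ⟨by omega, by omega⟩)
      rw [Finset.sum_Icc_succ_top (by omega : 3 ≤ n+1+1), ← add_assoc, ← hih, hw]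
      simp only [fdiff, ddq, Nat.add_sub_cancel]
      match_scalars <;> field_simp <;> ring
  -- Step B : formula for u
  have huF : ∀ j, 1 ≤ j → j ≤ N → u j = w 1 + (((j:ℝ)-1)*dt) • w 2
      + ∑ m ∈ Finset.Icc 3 j, ((((j+1-m : ℕ)):ℝ)*dt^2) • w m := by
    intro j h1
    induction j, h1 using Nat.le_induction with
    | base =>
      intro _
      have : Finset.Icc 3 1 = (∅ : Finset ℕ) := by decide
      rw [this, Finset.sum_empty, add_zero, hw1]
      norm_num
    | succ n hn ih =>
      intro hle
      have hih := ih (by omega)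
      have hstep : u (n+1) = u n + dt • fdiff dt u n := by
        simp only [fdiff, smul_smul]
        rw [mul_inv_cancel₀ hdtne, one_smul]
        abel
      rw [hstep, hih, hD n hn (by omega)]
      have hext : ∑ m ∈ Finset.Icc 3 n, ((((n+1-m : ℕ)):ℝ)*dt^2) • w m
          = ∑ m ∈ Finset.Icc 3 (n+1), ((((n+1-m : ℕ)):ℝ)*dt^2) • w m := by
        refine Finset.sum_subset (Finset.Icc_subset_Icc_right (by omega)) ?_
        intro x hx hnx
        have hx1 : x = n+1 := by
          simp only [Finset.mem_Icc] at hx hnx; omega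
        rw [hx1, Nat.sub_self, Nat.cast_zero, zero_mul, zero_smul]
      rw [hext]
      have hS3 : ∑ m ∈ Finset.Icc 3 (n+1), ((((n+1+1-m : ℕ)):ℝ)*dt^2) • w m
          = (∑ m ∈ Finset.Icc 3 (n+1), ((((n+1-m : ℕ)):ℝ)*dt^2) • w m)
            + ∑ m ∈ Finset.Icc 3 (n+1), dt • (dt • w m) := by
        rw [← Finset.sum_add_distrib]
        refine Finset.sum_congr rfl fun m hm => ?_
        have h2 : (n+1+1-m : ℕ) = (n+1-m : ℕ) + 1 := by
          simp only [Finset.mem_Icc] at hm; omega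
        rw [h2, smul_smul]
        push_cast
        match_scalars
        ring
      rw [hS3, smul_add, Finset.smul_sum]
      push_cast
      match_scalars <;> ring
  have hIccN : Finset.Icc 1 N = insert 1 (insert 2 (Finset.Icc 3 N)) := by
    ext x; simp only [Finset.mem_Icc, Finset.mem_insert]; omega
  have h1ni : (1:ℕ) ∉ insert 2 (Finset.Icc 3 N) := by
    simp only [Finset.mem_insert, Finset.mem_Icc]; omega
  have h2ni : (2:ℕ) ∉ Finset.Icc 3 N := by
    simp only [Finset.mem_Icc]; omega
  have hu : ∀ j ∈ Finset.Icc 1 N, u j = ∑ i ∈ Finset.Icc 1 N, c j i • w i := by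
    intro j hj
    simp only [Finset.mem_Icc] at hj
    rw [huF j hj.1 hj.2, hIccN, Finset.sum_insert h1ni, Finset.sum_insert h2ni]
    have hc1 : c j 1 = 1 := by simp [hc]
    have hc2 : c j 2 = ((j:ℝ)-1)*dt := by simp [hc]
    rw [hc1, hc2, one_smul]
    have hS : ∑ m ∈ Finset.Icc 3 j, ((((j+1-m : ℕ)):ℝ)*dt^2) • w m
        = ∑ i ∈ Finset.Icc 3 N, c j i • w i := by
      have e1 : ∑ m ∈ Finset.Icc 3 j, ((((j+1-m : ℕ)):ℝ)*dt^2) • w m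
          = ∑ m ∈ Finset.Icc 3 j, c j m • w m := by
        refine Finset.sum_congr rfl fun m hm => ?_
        simp only [Finset.mem_Icc] at hm
        simp only [hc]
        rw [if_neg (by omega), if_neg (by omega)]
      rw [e1]
      refine Finset.sum_subset (Finset.Icc_subset_Icc_right hj.2) ?_
      intro x hx hnx
      simp only [Finset.mem_Icc] at hx hnx
      simp only [hc]
      rw [if_neg (by omega), if_neg (by omega), (by omega : j + 1 - x = 0),
        Nat.cast_zero, zero_mul, zero_smul]
    rw [hS, add_assoc]
  set G : ℕ → ℕ → ℝ := fun k j => ∑ i ∈ Finset.Icc 1 N, c j i * f k i with hG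
  set K := Finset.Icc (r+1) s with hK
  have hKsub : K ⊆ Finset.Icc 1 s := by
    intro k hk; simp only [hK, Finset.mem_Icc] at hk ⊢; omega
  have hγpos : ∀ i ∈ Finset.Icc 1 N, 0 < γ i := by
    intro i hi
    simp only [Finset.mem_Icc] at hi
    rcases (show i = 1 ∨ i = 2 ∨ 3 ≤ i by omega) with h|h|h
    · rw [h, hγ1]; norm_num
    · rw [h, hγ2]; norm_num
    · rw [hγj i (Finset.mem_Icc.mpr ⟨h, hi.2⟩)]; exact hdtpos
  -- bound on weighted coefficients
  have hB : ∀ j ∈ Finset.Icc 1 N,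
      (∑ i ∈ Finset.Icc 1 N, (γ i)⁻¹ * (c j i)^2) ≤ 1 + T^2 + T^3 := by
    intro j hj
    simp only [Finset.mem_Icc] at hj
    rw [hIccN, Finset.sum_insert h1ni, Finset.sum_insert h2ni]
    have t1 : (γ 1)⁻¹ * (c j 1)^2 = 1 := by
      simp [hc, hγ1]
    have t2 : (γ 2)⁻¹ * (c j 2)^2 ≤ T^2 := by
      have hc2 : c j 2 = ((j:ℝ)-1)*dt := by simp [hc]
      rw [hγ2, hc2, inv_one, one_mul]
      have h0 : (0:ℝ) ≤ (j:ℝ)-1 := by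
        have : (1:ℝ) ≤ (j:ℝ) := by exact_mod_cast hj.1
        linarith
      have h1 : ((j:ℝ)-1)*dt ≤ T := by
        have : (j:ℝ) ≤ (N:ℝ) := by exact_mod_cast hj.2
        nlinarith
      have h2 : (0:ℝ) ≤ ((j:ℝ)-1)*dt := by positivity
      nlinarith
    have t3 : ∑ i ∈ Finset.Icc 3 N, (γ i)⁻¹ * (c j i)^2 ≤ T^3 := by
      have hterm : ∀ i ∈ Finset.Icc 3 N,
          (γ i)⁻¹ * (c j i)^2 ≤ ((N:ℝ)-1)^2 * dt^3 := by
        intro i hi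
        have hi' := Finset.mem_Icc.mp hi
        rw [hγj i hi]
        have hci : c j i = (((j+1-i : ℕ)):ℝ)*dt^2 := by
          simp only [hc]
          rw [if_neg (by omega), if_neg (by omega)]
        rw [hci]
        have hm0 : (0:ℝ) ≤ (((j+1-i : ℕ)):ℝ) := Nat.cast_nonneg _
        have hm1 : (((j+1-i : ℕ)):ℝ) ≤ (N:ℝ)-1 := by
          have h3 : (j+1-i : ℕ) ≤ N - 1 := by omega
          have h4 : (((N-1 : ℕ)):ℝ) = (N:ℝ)-1 := by
            have : (1:ℕ) ≤ N := by omega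
            push_cast [this]
            ring
          rw [← h4]
          exact_mod_cast h3
        have heq : dt⁻¹ * ((((j+1-i : ℕ)):ℝ)*dt^2)^2 = (((j+1-i : ℕ)):ℝ)^2 * dt^3 := by
          field_simp
        rw [heq]
        have : (((j+1-i : ℕ)):ℝ)^2 ≤ ((N:ℝ)-1)^2 := by nlinarith
        have hdt3 : (0:ℝ) ≤ dt^3 := by positivity
        nlinarith
      calc ∑ i ∈ Finset.Icc 3 N, (γ i)⁻¹ * (c j i)^2
          ≤ ∑ _i ∈ Finset.Icc 3 N, ((N:ℝ)-1)^2 * dt^3 := Finset.sum_le_sum hterm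
        _ = ((N - 2 : ℕ):ℝ) * (((N:ℝ)-1)^2 * dt^3) := by
            rw [Finset.sum_const, Nat.card_Icc, nsmul_eq_mul]
            norm_num
            congr 1
            omega
        _ ≤ ((N:ℝ)-1) * (((N:ℝ)-1)^2 * dt^3) := by
            have : ((N - 2 : ℕ):ℝ) ≤ (N:ℝ)-1 := by
              have h5 : ((N - 2 : ℕ)) ≤ N - 1 := by omega
              have h4 : (((N-1 : ℕ)):ℝ) = (N:ℝ)-1 := by
                have : (1:ℕ) ≤ N := by omega
                push_cast [this]; ring
              rw [← h4]; exact_mod_cast h5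
            have hp : (0:ℝ) ≤ ((N:ℝ)-1)^2 * dt^3 := by positivity
            nlinarith
        _ = T^3 := by rw [← hdtN]; ring
    rw [t1]
    linarith
  -- the key estimate
  have key : ∀ (Q : X →ₗ[ℝ] X →ₗ[ℝ] ℝ), (∀ x y, Q x y = Q y x) → (∀ x, 0 ≤ Q x x) →
      ∀ (ψ : ℕ → X),
      ∑ j ∈ Finset.Icc 1 N, dt * Q (∑ k ∈ K, (Real.sqrt (lam k) * G k j) • ψ k)
          (∑ k ∈ K, (Real.sqrt (lam k) * G k j) • ψ k)
        ≤ 6 * max (T^4) T * ∑ k ∈ K, lam k * Q (ψ k) (ψ k) := by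
    intro Q hQs hQp ψ
    set η : ℕ → X := fun i => ∑ k ∈ K, (Real.sqrt (lam k) * f k i) • ψ k with hη
    have hswap : ∀ j, (∑ k ∈ K, (Real.sqrt (lam k) * G k j) • ψ k)
        = ∑ i ∈ Finset.Icc 1 N, c j i • η i := by
      intro j
      calc ∑ k ∈ K, (Real.sqrt (lam k) * G k j) • ψ k
          = ∑ k ∈ K, ∑ i ∈ Finset.Icc 1 N, (c j i * (Real.sqrt (lam k) * f k i)) • ψ k := by
            refine Finset.sum_congr rfl fun k _ => ?_
            simp only [hG]
            rw [Finset.mul_sum, Finset.sum_smul]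
            exact Finset.sum_congr rfl fun i _ => by rw [mul_left_comm]
        _ = ∑ i ∈ Finset.Icc 1 N, ∑ k ∈ K, (c j i * (Real.sqrt (lam k) * f k i)) • ψ k :=
            Finset.sum_comm
        _ = ∑ i ∈ Finset.Icc 1 N, c j i • η i := by
            refine Finset.sum_congr rfl fun i _ => ?_
            simp only [hη, Finset.smul_sum, smul_smul]
    -- the exact identity for the weighted sum over the snapshots
    have hid : ∑ i ∈ Finset.Icc 1 N, γ i * Q (η i) (η i)
        = ∑ k ∈ K, lam k * Q (ψ k) (ψ k) := by
      calc ∑ i ∈ Finset.Icc 1 N, γ i * Q (η i) (η i)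
          = ∑ i ∈ Finset.Icc 1 N, ∑ k ∈ K, ∑ l ∈ K,
              (Real.sqrt (lam k) * Real.sqrt (lam l) * Q (ψ k) (ψ l))
                * (γ i * f k i * f l i) := by
            refine Finset.sum_congr rfl fun i _ => ?_
            simp only [hη, map_sum, LinearMap.sum_apply, map_smul, LinearMap.smul_apply,
              smul_eq_mul, Finset.mul_sum]
            refine Finset.sum_congr rfl fun k _ => Finset.sum_congr rfl fun l _ => by
              rw [hQs (ψ l) (ψ k)]; ring
        _ = ∑ k ∈ K, ∑ l ∈ K,
              (Real.sqrt (lam k) * Real.sqrt (lam l) * Q (ψ k) (ψ l))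
                * (∑ i ∈ Finset.Icc 1 N, γ i * f k i * f l i) := by
            rw [Finset.sum_comm]
            refine Finset.sum_congr rfl fun k _ => ?_
            rw [Finset.sum_comm]
            refine Finset.sum_congr rfl fun l _ => ?_
            rw [Finset.mul_sum]
        _ = ∑ k ∈ K, lam k * Q (ψ k) (ψ k) := by
            refine Finset.sum_congr rfl fun k hk => ?_
            have h1 : ∀ l ∈ K, (Real.sqrt (lam k) * Real.sqrt (lam l) * Q (ψ k) (ψ l))
                * (∑ i ∈ Finset.Icc 1 N, γ i * f k i * f l i)
                = if k = l then Real.sqrt (lam k) * Real.sqrt (lam l) * Q (ψ k) (ψ l) else 0 := by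
              intro l hl
              rw [hf k (hKsub hk) l (hKsub hl)]
              split <;> ring
            rw [Finset.sum_congr rfl h1, Finset.sum_ite_eq, if_pos hk,
              Real.mul_self_sqrt (hlam k (hKsub hk)).le]
    have hS0 : 0 ≤ ∑ k ∈ K, lam k * Q (ψ k) (ψ k) := by
      refine Finset.sum_nonneg fun k hk => ?_
      exact mul_nonneg (hlam k (hKsub hk)).le (hQp (ψ k))
    have hstep : ∀ j ∈ Finset.Icc 1 N,
        dt * Q (∑ k ∈ K, (Real.sqrt (lam k) * G k j) • ψ k)
            (∑ k ∈ K, (Real.sqrt (lam k) * G k j) • ψ k)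
          ≤ dt * ((1 + T^2 + T^3) * ∑ k ∈ K, lam k * Q (ψ k) (ψ k)) := by
      intro j hj
      refine mul_le_mul_of_nonneg_left ?_ hdtpos.le
      rw [hswap j]
      refine (aux_comb Q hQs hQp _ (c j) γ hγpos η).trans ?_
      rw [hid]
      exact mul_le_mul_of_nonneg_right (hB j hj) hS0
    refine (Finset.sum_le_sum hstep).trans ?_
    rw [Finset.sum_const, Nat.card_Icc, nsmul_eq_mul]
    have hcard : ((N + 1 - 1 : ℕ):ℝ) = (N:ℝ) := by norm_num
    rw [hcard]
    have hNdt : (N:ℝ) * dt ≤ 3/2 * T := by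
      have h2 : dt ≤ T / 2 := by
        rw [hdt]
        rw [div_le_div_iff₀ hNpos (by norm_num)]
        nlinarith
      nlinarith [hdtN]
    have hTM : T ≤ max (T^4) T := le_max_right _ _
    have hT4M : T^4 ≤ max (T^4) T := le_max_left _ _
    have hT2M : T^2 ≤ max (T^4) T := by
      rcases le_total T 1 with h|h
      · refine le_trans ?_ hTM; nlinarith
      · exact le_trans (pow_le_pow_right₀ h (by norm_num)) hT4M
    have hT3M : T^3 ≤ max (T^4) T := by
      rcases le_total T 1 with h|h
      · refine le_trans ?_ hTM; nlinarith
      · exact le_trans (pow_le_pow_right₀ h (by norm_num)) hT4M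
    have hcoef : (N:ℝ) * (dt * (1 + T^2 + T^3)) ≤ 6 * max (T^4) T := by
      have hpos1 : (0:ℝ) < 1 + T^2 + T^3 := by positivity
      have e1 : (N:ℝ) * (dt * (1 + T^2 + T^3)) ≤ 3/2 * T * (1 + T^2 + T^3) := by
        have := mul_le_mul_of_nonneg_right hNdt hpos1.le
        nlinarith [this]
      refine e1.trans ?_
      nlinarith [hTM, hT2M, hT3M, hT4M, hT]
    calc (N:ℝ) * (dt * ((1 + T^2 + T^3) * ∑ k ∈ K, lam k * Q (ψ k) (ψ k)))
        = ((N:ℝ) * (dt * (1 + T^2 + T^3))) * ∑ k ∈ K, lam k * Q (ψ k) (ψ k) := by ring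
      _ ≤ 6 * max (T^4) T * ∑ k ∈ K, lam k * Q (ψ k) (ψ k) :=
          mul_le_mul_of_nonneg_right hcoef hS0
  -- span facts
  have hφmem : ∀ k, 1 ≤ k → k ≤ r → φ k ∈ Submodule.span ℝ (φ '' Set.Icc 1 r) :=
    fun k h1 h2 => Submodule.subset_span ⟨k, ⟨h1, h2⟩, rfl⟩
  have hymem : ∀ j, (∑ k ∈ Finset.Icc 1 r, (Real.sqrt (lam k) * G k j) • φ k)
      ∈ Submodule.span ℝ (φ '' Set.Icc 1 r) := by
    intro j
    refine Submodule.sum_mem _ fun k hk => Submodule.smul_mem _ _ ?_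
    simp only [Finset.mem_Icc] at hk
    exact hφmem k hk.1 hk.2
  have hsplit : ∀ j ∈ Finset.Icc 1 N,
      u j = (∑ k ∈ Finset.Icc 1 r, (Real.sqrt (lam k) * G k j) • φ k)
        + ∑ k ∈ K, (Real.sqrt (lam k) * G k j) • φ k := by
    intro j hj
    have hIoc : ∀ x : ℕ, Finset.Icc 1 x = Finset.Ioc 0 x := by
      intro x; ext y; simp only [Finset.mem_Icc, Finset.mem_Ioc]; omega
    calc u j = ∑ i ∈ Finset.Icc 1 N, c j i • w i := hu j hj
      _ = ∑ i ∈ Finset.Icc 1 N, ∑ k ∈ Finset.Icc 1 s,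
            (c j i * (Real.sqrt (lam k) * f k i)) • φ k := by
          refine Finset.sum_congr rfl fun i hi => ?_
          rw [hsvd i hi, Finset.smul_sum]
          simp only [smul_smul]
      _ = ∑ k ∈ Finset.Icc 1 s, (Real.sqrt (lam k) * G k j) • φ k := by
          rw [Finset.sum_comm]
          refine Finset.sum_congr rfl fun k _ => ?_
          simp only [hG]
          rw [Finset.mul_sum, Finset.sum_smul]
          exact Finset.sum_congr rfl fun i _ => by rw [mul_left_comm]
      _ = (∑ k ∈ Finset.Icc 1 r, (Real.sqrt (lam k) * G k j) • φ k)
          + ∑ k ∈ K, (Real.sqrt (lam k) * G k j) • φ k := by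
          have hIoc2 : Finset.Icc (r+1) s = Finset.Ioc r s := by
            ext y; simp only [Finset.mem_Icc, Finset.mem_Ioc]; omega
          rw [hIoc s, hIoc r, hK, hIoc2]
          exact (Finset.sum_Ioc_consecutive _ (Nat.zero_le r) hrs).symm

  have hzspan : ∀ j, ∀ v ∈ Submodule.span ℝ (φ '' Set.Icc 1 r),
      ⟪(∑ k ∈ K, (Real.sqrt (lam k) * G k j) • φ k), v⟫ = 0 := by
    intro j v hv
    have hzφ : ∀ l, 1 ≤ l → l ≤ r →
        ⟪(∑ k ∈ K, (Real.sqrt (lam k) * G k j) • φ k), φ l⟫ = 0 := by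
      intro l h1 h2
      rw [sum_inner]
      refine Finset.sum_eq_zero fun k hk => ?_
      have hk' := Finset.mem_Icc.mp (by rw [← hK]; exact hk : k ∈ Finset.Icc (r+1) s)
      rw [real_inner_smul_left, hφ k (hKsub hk) l (Finset.mem_Icc.mpr ⟨h1, le_trans h2 hrs⟩),
        if_neg (by omega), mul_zero]
    induction hv using Submodule.span_induction with
    | mem x hx =>
      obtain ⟨k, hk, rfl⟩ := hx
      exact hzφ k hk.1 hk.2
    | zero => exact inner_zero_right _
    | add x y hx hy ihx ihy => rw [inner_add_right, ihx, ihy, add_zero]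
    | smul a x hx ihx => rw [real_inner_smul_right, ihx, mul_zero]
  have hePr : ∀ j ∈ Finset.Icc 1 N,
      u j - Pr (u j) = ∑ k ∈ K, (Real.sqrt (lam k) * G k j) • φ k := by
    intro j hj
    have hd : Pr (u j) - (∑ k ∈ Finset.Icc 1 r, (Real.sqrt (lam k) * G k j) • φ k)
        ∈ Submodule.span ℝ (φ '' Set.Icc 1 r) :=
      Submodule.sub_mem _ (hPrmem (u j)) (hymem j)
    have h1 := hProrth (u j) _ hd
    have h2 := hzspan j _ hd
    have h3 : u j - Pr (u j) = (∑ k ∈ K, (Real.sqrt (lam k) * G k j) • φ k)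
        - (Pr (u j) - (∑ k ∈ Finset.Icc 1 r, (Real.sqrt (lam k) * G k j) • φ k)) := by
      rw [hsplit j hj]
      abel
    have h4 : ⟪Pr (u j) - (∑ k ∈ Finset.Icc 1 r, (Real.sqrt (lam k) * G k j) • φ k),
        Pr (u j) - (∑ k ∈ Finset.Icc 1 r, (Real.sqrt (lam k) * G k j) • φ k)⟫ = (0:ℝ) := by
      rw [h3, inner_sub_left, h2] at h1
      linarith [h1]
    have h5 := inner_self_eq_zero.mp h4
    rw [h3, h5, sub_zero]
  have hπfix : ∀ x ∈ Submodule.span ℝ (φ '' Set.Icc 1 r), π x = x := by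
    intro x hx
    rw [← hπrange] at hx
    obtain ⟨y, hy⟩ := hx
    rw [← hy, hππ]
  have heπ : ∀ j ∈ Finset.Icc 1 N,
      u j - π (u j) = ∑ k ∈ K, (Real.sqrt (lam k) * G k j) • (φ k - π (φ k)) := by
    intro j hj
    have hy := hπfix _ (hymem j)
    calc u j - π (u j)
        = ((∑ k ∈ Finset.Icc 1 r, (Real.sqrt (lam k) * G k j) • φ k)
            + ∑ k ∈ K, (Real.sqrt (lam k) * G k j) • φ k)
          - π ((∑ k ∈ Finset.Icc 1 r, (Real.sqrt (lam k) * G k j) • φ k)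
            + ∑ k ∈ K, (Real.sqrt (lam k) * G k j) • φ k) := by rw [← hsplit j hj]
      _ = (∑ k ∈ K, (Real.sqrt (lam k) * G k j) • φ k)
          - ∑ k ∈ K, (Real.sqrt (lam k) * G k j) • π (φ k) := by
          rw [map_add, hy, map_sum]
          simp only [map_smul]
          abel
      _ = ∑ k ∈ K, (Real.sqrt (lam k) * G k j) • (φ k - π (φ k)) := by
          rw [← Finset.sum_sub_distrib]
          exact Finset.sum_congr rfl fun k _ => (smul_sub _ _ _).symm
  -- the bilinear form of the inner product
  have hQi : ∀ x y : X, (innerₗ (F := X)) x y = ⟪x, y⟫ := fun x y => rfl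
  have hYpos' : ∀ x : X, 0 ≤ ipY x x := by
    intro x
    rcases eq_or_ne x 0 with h|h
    · simp [h]
    · exact (hYpos x h).le
  refine ⟨?_, ?_, ?_⟩
  · have h1 : ∑ j ∈ Finset.Icc 1 N, dt * ‖u j - Pr (u j)‖ ^ 2
        = ∑ j ∈ Finset.Icc 1 N, dt * (innerₗ (F := X))
            (∑ k ∈ K, (Real.sqrt (lam k) * G k j) • φ k)
            (∑ k ∈ K, (Real.sqrt (lam k) * G k j) • φ k) := by
      refine Finset.sum_congr rfl fun j hj => ?_
      rw [hQi, ← hePr j hj, real_inner_self_eq_norm_sq]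
    rw [h1]
    refine (key _ (fun x y => real_inner_comm y x) (fun x => real_inner_self_nonneg) φ).trans ?_
    apply le_of_eq
    congr 1
    refine Finset.sum_congr rfl fun k hk => ?_
    rw [hQi, hφ k (hKsub hk) k (hKsub hk), if_pos rfl, mul_one]
  · have h1 : ∑ j ∈ Finset.Icc 1 N, dt * ipY (u j - Pr (u j)) (u j - Pr (u j))
        = ∑ j ∈ Finset.Icc 1 N, dt * ipY
            (∑ k ∈ K, (Real.sqrt (lam k) * G k j) • φ k)
            (∑ k ∈ K, (Real.sqrt (lam k) * G k j) • φ k) := by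
      refine Finset.sum_congr rfl fun j hj => ?_
      rw [← hePr j hj]
    rw [h1]
    exact key ipY hYsymm hYpos' φ
  · have h1 : ∑ j ∈ Finset.Icc 1 N, dt * ipY (u j - π (u j)) (u j - π (u j))
        = ∑ j ∈ Finset.Icc 1 N, dt * ipY
            (∑ k ∈ K, (Real.sqrt (lam k) * G k j) • (φ k - π (φ k)))
            (∑ k ∈ K, (Real.sqrt (lam k) * G k j) • (φ k - π (φ k))) := by
      refine Finset.sum_congr rfl fun j hj => ?_
      rw [← heπ j hj]
    rw [h1]
    exact key ipY hYsymm hYpos' (fun k => φ k - π (φ k))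
end

section
/- (Discrete energy dissipation identity for the damped wave scheme.) Let V be a real inner product space with inner product (·,·) and norm ‖·‖, let B : V × V → ℝ be a symmetric bilinear form, let c > 0, D ≥ 0, G ≥ 0, Δt > 0, N ≥ 3, and let u^1,…,u^N ∈ V satisfy the scheme: for all n = 2,…,N−1 and all v ∈ V, (∂∂u^n, v) + c² B(û^n, v) + D (∂ū^n, v) + G B(∂ū^n, v) = 0. Define the discrete energy E(u^n) = (1/2)‖∂⁻u^n‖² + (1/2)c² B(ū^n, ū^n) for n = 2,…,N. Then for every n = 2,…,N−1, ∂E(u^n) := (E(u^{n+1}) − E(u^n))/Δt = −D ‖∂ū^n‖² − G B(∂ū^n, ∂ū^n). -/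
open Finset RealInnerProductSpace

private lemma inner_diff_avg {V : Type*} [NormedAddCommGroup V] [InnerProductSpace ℝ V]
    (dt : ℝ) (a b : V) :
    ⟪dt⁻¹ • (a - b), (2:ℝ)⁻¹ • (a + b)⟫ = dt⁻¹ * 2⁻¹ * (‖a‖ ^ 2 - ‖b‖ ^ 2) := by
  simp only [real_inner_smul_left, real_inner_smul_right, inner_sub_left, inner_add_right,
    real_inner_self_eq_norm_sq, real_inner_comm b a]
  ring

private lemma B_avg_diff {V : Type*} [NormedAddCommGroup V] [InnerProductSpace ℝ V]
    (B : V →ₗ[ℝ] V →ₗ[ℝ] ℝ) (hBsymm : ∀ x y, B x y = B y x) (dt : ℝ) (p q : V) :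
    B ((2:ℝ)⁻¹ • (p + q)) (dt⁻¹ • (p - q)) = 2⁻¹ * dt⁻¹ * (B p p - B q q) := by
  simp only [map_add, map_sub, map_smul, LinearMap.add_apply, LinearMap.sub_apply,
    LinearMap.smul_apply, smul_eq_mul, hBsymm q p]
  ring

theorem stmt_18
    {V : Type*} [NormedAddCommGroup V] [InnerProductSpace ℝ V]
    (B : V →ₗ[ℝ] V →ₗ[ℝ] ℝ) (hBsymm : ∀ x y, B x y = B y x)
    (c D G dt : ℝ) (hc : 0 < c) (hD : 0 ≤ D) (hG : 0 ≤ G) (hdt : 0 < dt)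
    (N : ℕ) (hN : 3 ≤ N) (u : ℕ → V)
    (hscheme : ∀ n ∈ Finset.Icc 2 (N - 1), ∀ v : V,
      ⟪ddq dt u n, v⟫ + c ^ 2 * B (cavg u n) v + D * ⟪cdiff dt u n, v⟫
        + G * B (cdiff dt u n) v = 0)
    (E : ℕ → ℝ)
    (hE : ∀ n ∈ Finset.Icc 2 N,
      E n = (1 / 2) * ‖bdiff dt u n‖ ^ 2
        + (1 / 2) * c ^ 2 * B (bavg u n) (bavg u n)) :
    ∀ n ∈ Finset.Icc 2 (N - 1),
      (E (n + 1) - E n) / dt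
        = -D * ‖cdiff dt u n‖ ^ 2 - G * B (cdiff dt u n) (cdiff dt u n) := by
  intro n hn
  rw [Finset.mem_Icc] at hn
  obtain ⟨hn2, hnN⟩ := hn
  have hnN' : n ≤ N := le_trans hnN (Nat.sub_le _ _)
  have hn1N : n + 1 ≤ N := by omega
  have h1 : ddq dt u n = dt⁻¹ • (bdiff dt u (n + 1) - bdiff dt u n) := by
    simp only [ddq, bdiff, Nat.add_sub_cancel]
    match_scalars <;> field_simp <;> ring
  have h2 : cdiff dt u n = (2:ℝ)⁻¹ • (bdiff dt u (n + 1) + bdiff dt u n) := by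
    simp only [cdiff, bdiff, Nat.add_sub_cancel]
    match_scalars <;> field_simp <;> ring
  have h3 : cavg u n = (2:ℝ)⁻¹ • (bavg u (n + 1) + bavg u n) := by
    simp only [cavg, bavg, Nat.add_sub_cancel]
    match_scalars <;> norm_num
  have h4 : cdiff dt u n = dt⁻¹ • (bavg u (n + 1) - bavg u n) := by
    simp only [cdiff, bavg, Nat.add_sub_cancel]
    match_scalars <;> field_simp <;> ring
  have k1 : ⟪ddq dt u n, cdiff dt u n⟫
      = dt⁻¹ * 2⁻¹ * (‖bdiff dt u (n + 1)‖ ^ 2 - ‖bdiff dt u n‖ ^ 2) := by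
    rw [h1, h2, inner_diff_avg]
  have k2 : B (cavg u n) (cdiff dt u n)
      = 2⁻¹ * dt⁻¹ * (B (bavg u (n + 1)) (bavg u (n + 1)) - B (bavg u n) (bavg u n)) := by
    rw [h3, h4, B_avg_diff B hBsymm]
  have h := hscheme n (Finset.mem_Icc.mpr ⟨hn2, hnN⟩) (cdiff dt u n)
  rw [k1, k2, real_inner_self_eq_norm_sq] at h
  rw [hE (n + 1) (Finset.mem_Icc.mpr ⟨by omega, hn1N⟩),
    hE n (Finset.mem_Icc.mpr ⟨hn2, hnN'⟩)]
  have hdt' : dt ≠ 0 := ne_of_gt hdt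
  linear_combination h
end
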